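/- arXiv:2404.06379 — 3 statements merged into one kernel-verified Lean document; each statement's English description precedes it below -/
import Mathlib

section
/- Let n ≥ 2 and let w be an element of the affine signed permutation group 𝑆̃^C_n. Then dis(w)/2 = ℓ(w) if and only if w globally avoids the pattern 321, i.e., there are no unfrozen integers i < j < k with w(i) > w(j) > w(k). -/
namespace Stmt9

/-- `w` is an element of the affine signed permutation group `𝑆̃^C_n`:
a bijection of `ℤ` with `w(-i) = -w(i)` and `w(2(n+1) - i) = 2(n+1) - w(i)`
for all `i ∈ ℤ`. -/
def IsAffineSignedPerm (n : ℕ) (w : Equiv.Perm ℤ) : Prop :=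
  (∀ i : ℤ, w (-i) = -(w i)) ∧
    ∀ i : ℤ, w (2 * ((n : ℤ) + 1) - i) = 2 * ((n : ℤ) + 1) - w i

/-- `σ` is the Coxeter generator `sᵢ` of `𝑆̃^C_n`: the unique element of the
group determined on the window `{1, …, n}` by: for `1 ≤ i ≤ n-1`, `sᵢ`
interchanges `i` and `i+1` and fixes every other element of the window;
`s₀` sends `1` to `-1` and fixes `{2, …, n}`; `s_n` sends `n` to `n+2` and
fixes `{1, …, n-1}`. -/
def IsGenC (n : ℕ) (i : ℕ) (σ : Equiv.Perm ℤ) : Prop :=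
  IsAffineSignedPerm n σ ∧
    if i = 0 then
      σ 1 = -1 ∧ ∀ j : ℤ, 2 ≤ j → j ≤ (n : ℤ) → σ j = j
    else if i = n then
      σ (n : ℤ) = (n : ℤ) + 2 ∧ ∀ j : ℤ, 1 ≤ j → j ≤ (n : ℤ) - 1 → σ j = j
    else
      i < n ∧ σ (i : ℤ) = (i : ℤ) + 1 ∧ σ ((i : ℤ) + 1) = (i : ℤ) ∧
        ∀ j : ℤ, 1 ≤ j → j ≤ (n : ℤ) → j ≠ (i : ℤ) → j ≠ (i : ℤ) + 1 → σ j = j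

/-- `l` is a word for `w` in the letters `{0, …, n}`:
`w = s_{i₁} ⋯ s_{i_ℓ}` where `l = [i₁, …, i_ℓ]`. -/
def IsWordC (n : ℕ) (w : Equiv.Perm ℤ) (l : List ℕ) : Prop :=
  (∀ i ∈ l, i ≤ n) ∧
    ∃ σs : List (Equiv.Perm ℤ), List.Forall₂ (IsGenC n) l σs ∧ σs.prod = w

/-- The Coxeter length of `w`: the minimal length of a word for `w`. -/
noncomputable def lenC (n : ℕ) (w : Equiv.Perm ℤ) : ℕ :=
  sInf {m | ∃ l : List ℕ, IsWordC n w l ∧ l.length = m}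

/-- The disarray `dis(w) = ∑_{i=1}^n |w(i) - i|`. -/
noncomputable def disC (n : ℕ) (w : Equiv.Perm ℤ) : ℤ :=
  ∑ i ∈ Finset.Icc (1 : ℤ) (n : ℤ), |w i - i|

/-- The unfrozen integers for `𝑆̃^C_n` are those that are not multiples of `n + 1`. -/
def UnfrozenC (n : ℕ) (i : ℤ) : Prop := ¬ ((n : ℤ) + 1 ∣ i)

/-- `w` globally contains the pattern `321`: there are unfrozen integers
`i < j < k` with `w(i) > w(j) > w(k)`. -/
def GloballyContains321C (n : ℕ) (w : Equiv.Perm ℤ) : Prop :=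
  ∃ i j k : ℤ, UnfrozenC n i ∧ UnfrozenC n j ∧ UnfrozenC n k ∧
    i < j ∧ j < k ∧ w i > w j ∧ w j > w k

section Basic
variable {n : ℕ} {w v : Equiv.Perm ℤ}

lemma asp_neg (hw : IsAffineSignedPerm n w) (i : ℤ) : w (-i) = -(w i) := hw.1 i

lemma asp_zero (hw : IsAffineSignedPerm n w) : w 0 = 0 := by
  have := hw.1 0; simp at this; omega

lemma asp_refl (hw : IsAffineSignedPerm n w) (i : ℤ) :
    w (2 * ((n : ℤ) + 1) - i) = 2 * ((n : ℤ) + 1) - w i := hw.2 i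

lemma asp_N (hw : IsAffineSignedPerm n w) : w ((n : ℤ) + 1) = (n : ℤ) + 1 := by
  have := hw.2 ((n : ℤ) + 1)
  have h2 : 2 * ((n : ℤ) + 1) - ((n : ℤ) + 1) = (n : ℤ) + 1 := by ring
  rw [h2] at this; omega

lemma asp_period (hw : IsAffineSignedPerm n w) (i : ℤ) :
    w (i + 2 * ((n : ℤ) + 1)) = w i + 2 * ((n : ℤ) + 1) := by
  have h1 := hw.2 (-i)
  have h2 := hw.1 i
  have h3 : 2 * ((n : ℤ) + 1) - -i = i + 2 * ((n : ℤ) + 1) := by ring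
  rw [h3, h2] at h1; omega

lemma asp_period_mul (hw : IsAffineSignedPerm n w) (m i : ℤ) :
    w (i + m * (2 * ((n : ℤ) + 1))) = w i + m * (2 * ((n : ℤ) + 1)) := by
  induction m using Int.induction_on with
  | zero => simp
  | succ k ih =>
      have := asp_period hw (i + k * (2 * ((n : ℤ) + 1)))
      have he : i + (k + 1 : ℤ) * (2 * ((n : ℤ) + 1)) =
          i + k * (2 * ((n : ℤ) + 1)) + 2 * ((n : ℤ) + 1) := by ring
      rw [he, this, ih]; ring
  | pred k ih =>
      have := asp_period hw (i + (-(k:ℤ) - 1) * (2 * ((n : ℤ) + 1)))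
      have he : i + (-(k:ℤ) - 1) * (2 * ((n : ℤ) + 1)) + 2 * ((n : ℤ) + 1) =
          i + (-(k:ℤ)) * (2 * ((n : ℤ) + 1)) := by ring
      rw [he] at this
      rw [ih] at this
      omega

lemma asp_frozen (hw : IsAffineSignedPerm n w) {i : ℤ} (h : ((n : ℤ) + 1) ∣ i) :
    w i = i := by
  obtain ⟨k, rfl⟩ := h
  rcases Int.even_or_odd k with ⟨m, rfl⟩ | ⟨m, rfl⟩
  · have := asp_period_mul hw m 0
    rw [asp_zero hw] at this
    have he : ((n : ℤ) + 1) * (m + m) = 0 + m * (2 * ((n : ℤ) + 1)) := by ring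
    rw [he, this]
  · have := asp_period_mul hw m ((n : ℤ) + 1)
    rw [asp_N hw] at this
    have he : ((n : ℤ) + 1) * (2 * m + 1) = ((n : ℤ) + 1) + m * (2 * ((n : ℤ) + 1)) := by ring
    rw [he, this]

lemma asp_unfrozen (hw : IsAffineSignedPerm n w) {i : ℤ} (h : ¬ ((n : ℤ) + 1) ∣ i) :
    ¬ ((n : ℤ) + 1) ∣ w i := by
  intro hy
  have h1 : w (w i) = w i := asp_frozen hw hy
  have := w.injective h1
  rw [this] at hy; exact h hy

lemma asp_mul (hw : IsAffineSignedPerm n w) (hv : IsAffineSignedPerm n v) :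
    IsAffineSignedPerm n (w * v) := by
  constructor
  · intro i; simp only [Equiv.Perm.mul_apply, hv.1 i, hw.1 (v i)]
  · intro i; simp only [Equiv.Perm.mul_apply, hv.2 i, hw.2 (v i)]

lemma asp_one : IsAffineSignedPerm n 1 := by
  constructor <;> intro i <;> simp

lemma asp_bound (hw : IsAffineSignedPerm n w) :
    ∃ D : ℤ, 0 ≤ D ∧ ∀ i : ℤ, |w i - i| ≤ D := by
  have hne : (Finset.Icc (0:ℤ) (2 * ((n : ℤ) + 1) - 1)).Nonempty := by
    rw [Finset.nonempty_Icc]; omega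
  refine ⟨(Finset.Icc (0:ℤ) (2 * ((n : ℤ) + 1) - 1)).sup' hne (fun r => |w r - r|), ?_, ?_⟩
  · have hmem : (0:ℤ) ∈ Finset.Icc (0:ℤ) (2 * ((n : ℤ) + 1) - 1) := by
      rw [Finset.mem_Icc]; omega
    exact le_trans (abs_nonneg _) (Finset.le_sup' (fun r => |w r - r|) hmem)
  · intro i
    have hPpos : (0:ℤ) < 2 * ((n : ℤ) + 1) := by positivity
    have hmod : w i - i = w (i % (2 * ((n : ℤ) + 1))) - (i % (2 * ((n : ℤ) + 1))) := by
      have h1 := asp_period_mul hw (i / (2 * ((n : ℤ) + 1))) (i % (2 * ((n : ℤ) + 1)))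
      have he : i % (2 * ((n : ℤ) + 1)) + i / (2 * ((n : ℤ) + 1)) * (2 * ((n : ℤ) + 1)) = i := by
        rw [add_comm, mul_comm]; exact Int.mul_ediv_add_emod i _
      rw [he] at h1
      omega
    rw [hmod]
    have hmem : i % (2 * ((n : ℤ) + 1)) ∈ Finset.Icc (0:ℤ) (2 * ((n : ℤ) + 1) - 1) := by
      rw [Finset.mem_Icc]
      have h1 := Int.emod_nonneg i (show (2 * ((n : ℤ) + 1)) ≠ 0 by omega)
      have h2 := Int.emod_lt_of_pos i hPpos
      omega
    exact Finset.le_sup' (fun r => |w r - r|) hmem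

lemma asp_ext_window (hw : IsAffineSignedPerm n w) (hv : IsAffineSignedPerm n v)
    (h : ∀ i : ℤ, 1 ≤ i → i ≤ (n : ℤ) → w i = v i) : w = v := by
  have h1 : ∀ x : ℤ, 0 ≤ x → x ≤ (n : ℤ) + 1 → w x = v x := by
    intro x hx0 hxN
    rcases eq_or_lt_of_le hx0 with h0 | h0
    · rw [← h0, asp_zero hw, asp_zero hv]
    rcases eq_or_lt_of_le hxN with hN | hN
    · rw [hN, asp_N hw, asp_N hv]
    exact h x h0 (by omega)
  have h2 : ∀ x : ℤ, 0 ≤ x → x < 2 * ((n : ℤ) + 1) → w x = v x := by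
    intro x hx0 hxP
    rcases le_or_gt x ((n : ℤ) + 1) with hle | hgt
    · exact h1 x hx0 hle
    · have e1 := hw.2 (2 * ((n : ℤ) + 1) - x)
      have e2 := hv.2 (2 * ((n : ℤ) + 1) - x)
      have he : 2 * ((n : ℤ) + 1) - (2 * ((n : ℤ) + 1) - x) = x := by ring
      rw [he] at e1 e2
      have := h1 (2 * ((n : ℤ) + 1) - x) (by omega) (by omega)
      omega
  ext x
  have hPpos : (0:ℤ) < 2 * ((n : ℤ) + 1) := by positivity
  have e1 := asp_period_mul hw (x / (2 * ((n : ℤ) + 1))) (x % (2 * ((n : ℤ) + 1)))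
  have e2 := asp_period_mul hv (x / (2 * ((n : ℤ) + 1))) (x % (2 * ((n : ℤ) + 1)))
  have he : x % (2 * ((n : ℤ) + 1)) + x / (2 * ((n : ℤ) + 1)) * (2 * ((n : ℤ) + 1)) = x := by
    rw [add_comm, mul_comm]; exact Int.mul_ediv_add_emod x _
  rw [he] at e1 e2
  have := h2 (x % (2 * ((n : ℤ) + 1))) (Int.emod_nonneg x (by omega)) (Int.emod_lt_of_pos x hPpos)
  omega

end Basic

section Balance
variable {n : ℕ} {w : Equiv.Perm ℤ} {D : ℤ}

noncomputable def setA (w : Equiv.Perm ℤ) (D y c : ℤ) : Finset ℤ :=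
  (Finset.Icc (c - D) y).filter (fun z => c < w z)

noncomputable def setB (w : Equiv.Perm ℤ) (D y c : ℤ) : Finset ℤ :=
  (Finset.Ioc y (c + D)).filter (fun z => w z ≤ c)

lemma mem_setA (hbd : ∀ i : ℤ, |w i - i| ≤ D) {y c z : ℤ} :
    z ∈ setA w D y c ↔ z ≤ y ∧ c < w z := by
  unfold setA
  rw [Finset.mem_filter, Finset.mem_Icc]
  constructor
  · rintro ⟨⟨_, h2⟩, h3⟩; exact ⟨h2, h3⟩
  · rintro ⟨h1, h2⟩
    have := hbd z
    have := abs_le.mp (hbd z)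
    exact ⟨⟨by omega, h1⟩, h2⟩

lemma mem_setB (hbd : ∀ i : ℤ, |w i - i| ≤ D) {y c z : ℤ} :
    z ∈ setB w D y c ↔ y < z ∧ w z ≤ c := by
  unfold setB
  rw [Finset.mem_filter, Finset.mem_Ioc]
  constructor
  · rintro ⟨⟨h1, _⟩, h3⟩; exact ⟨h1, h3⟩
  · rintro ⟨h1, h2⟩
    have := abs_le.mp (hbd z)
    exact ⟨⟨h1, by omega⟩, h2⟩

lemma cardA_succ (hbd : ∀ i : ℤ, |w i - i| ≤ D) (y c : ℤ) :
    ((setA w D (y+1) c).card : ℤ) =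
      (setA w D y c).card + (if c < w (y+1) then 1 else 0) := by
  by_cases h : c < w (y+1)
  · rw [if_pos h]
    have he : setA w D (y+1) c = insert (y+1) (setA w D y c) := by
      ext z
      rw [Finset.mem_insert, mem_setA hbd, mem_setA hbd]
      constructor
      · rintro ⟨h1, h2⟩
        rcases eq_or_lt_of_le h1 with h3 | h3
        · exact Or.inl h3
        · exact Or.inr ⟨by omega, h2⟩
      · rintro (rfl | ⟨h1, h2⟩)
        · exact ⟨le_refl _, h⟩
        · exact ⟨by omega, h2⟩
    rw [he, Finset.card_insert_of_notMem (by rw [mem_setA hbd]; omega)]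
    push_cast; ring
  · rw [if_neg h]
    have he : setA w D (y+1) c = setA w D y c := by
      ext z
      rw [mem_setA hbd, mem_setA hbd]
      constructor
      · rintro ⟨h1, h2⟩
        refine ⟨?_, h2⟩
        rcases eq_or_lt_of_le h1 with h3 | h3
        · exact absurd (h3 ▸ h2) h
        · omega
      · rintro ⟨h1, h2⟩; exact ⟨by omega, h2⟩
    rw [he]; ring

lemma cardB_succ (hbd : ∀ i : ℤ, |w i - i| ≤ D) (y c : ℤ) :
    ((setB w D y c).card : ℤ) =
      (setB w D (y+1) c).card + (if w (y+1) ≤ c then 1 else 0) := by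
  by_cases h : w (y+1) ≤ c
  · rw [if_pos h]
    have he : setB w D y c = insert (y+1) (setB w D (y+1) c) := by
      ext z
      rw [Finset.mem_insert, mem_setB hbd, mem_setB hbd]
      constructor
      · rintro ⟨h1, h2⟩
        rcases eq_or_lt_of_le (show y + 1 ≤ z by omega) with h3 | h3
        · exact Or.inl h3.symm
        · exact Or.inr ⟨h3, h2⟩
      · rintro (rfl | ⟨h1, h2⟩)
        · exact ⟨by omega, h⟩
        · exact ⟨by omega, h2⟩
    rw [he, Finset.card_insert_of_notMem (by rw [mem_setB hbd]; omega)]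
    push_cast; ring
  · rw [if_neg h]
    have he : setB w D y c = setB w D (y+1) c := by
      ext z
      rw [mem_setB hbd, mem_setB hbd]
      constructor
      · rintro ⟨h1, h2⟩
        refine ⟨?_, h2⟩
        rcases eq_or_lt_of_le (show y + 1 ≤ z by omega) with h3 | h3
        · exact absurd (h3 ▸ h2 : w (y+1) ≤ c) h
        · omega
      · rintro ⟨h1, h2⟩; exact ⟨by omega, h2⟩
    rw [he]; ring

lemma cardA_c (hbd : ∀ i : ℤ, |w i - i| ≤ D) (y c : ℤ) :
    ((setA w D y c).card : ℤ) =
      (setA w D y (c+1)).card + (if w.symm (c+1) ≤ y then 1 else 0) := by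
  have hkey : ∀ z : ℤ, w z = c + 1 ↔ z = w.symm (c+1) := by
    intro z
    constructor
    · intro h; rw [← h]; simp
    · intro h; rw [h]; simp
  by_cases h : w.symm (c+1) ≤ y
  · rw [if_pos h]
    have he : setA w D y c = insert (w.symm (c+1)) (setA w D y (c+1)) := by
      ext z
      rw [Finset.mem_insert, mem_setA hbd, mem_setA hbd]
      constructor
      · rintro ⟨h1, h2⟩
        rcases eq_or_lt_of_le (show c + 1 ≤ w z by omega) with h3 | h3
        · exact Or.inl ((hkey z).mp h3.symm)
        · exact Or.inr ⟨h1, h3⟩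
      · rintro (rfl | ⟨h1, h2⟩)
        · refine ⟨h, ?_⟩
          have : w (w.symm (c+1)) = c + 1 := by simp
          omega
        · exact ⟨h1, by omega⟩
    rw [he, Finset.card_insert_of_notMem]
    · push_cast; ring
    · rw [mem_setA hbd]
      have : w (w.symm (c+1)) = c + 1 := by simp
      omega
  · rw [if_neg h]
    have he : setA w D y c = setA w D y (c+1) := by
      ext z
      rw [mem_setA hbd, mem_setA hbd]
      constructor
      · rintro ⟨h1, h2⟩
        refine ⟨h1, ?_⟩
        rcases eq_or_lt_of_le (show c + 1 ≤ w z by omega) with h3 | h3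
        · rw [(hkey z).mp h3.symm] at h1; exact absurd h1 h
        · exact h3
      · rintro ⟨h1, h2⟩; exact ⟨h1, by omega⟩
    rw [he]; ring

lemma cardB_c (hbd : ∀ i : ℤ, |w i - i| ≤ D) (y c : ℤ) :
    ((setB w D y (c+1)).card : ℤ) =
      (setB w D y c).card + (if y < w.symm (c+1) then 1 else 0) := by
  have hval : w (w.symm (c+1)) = c + 1 := by simp
  have hkey : ∀ z : ℤ, w z = c + 1 ↔ z = w.symm (c+1) := by
    intro z
    constructor
    · intro h; rw [← h]; simp
    · intro h; rw [h]; simp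
  by_cases h : y < w.symm (c+1)
  · rw [if_pos h]
    have he : setB w D y (c+1) = insert (w.symm (c+1)) (setB w D y c) := by
      ext z
      rw [Finset.mem_insert, mem_setB hbd, mem_setB hbd]
      constructor
      · rintro ⟨h1, h2⟩
        rcases eq_or_lt_of_le h2 with h3 | h3
        · exact Or.inl ((hkey z).mp h3)
        · exact Or.inr ⟨h1, by omega⟩
      · rintro (rfl | ⟨h1, h2⟩)
        · exact ⟨h, by omega⟩
        · exact ⟨h1, by omega⟩
    rw [he, Finset.card_insert_of_notMem]
    · push_cast; ring
    · rw [mem_setB hbd]; omega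
  · rw [if_neg h]
    have he : setB w D y (c+1) = setB w D y c := by
      ext z
      rw [mem_setB hbd, mem_setB hbd]
      constructor
      · rintro ⟨h1, h2⟩
        refine ⟨h1, ?_⟩
        rcases eq_or_lt_of_le h2 with h3 | h3
        · rw [(hkey z).mp h3] at h1; omega
        · omega
      · rintro ⟨h1, h2⟩; exact ⟨h1, by omega⟩
    rw [he]; ring

lemma bal_base (hw : IsAffineSignedPerm n w) (hbd : ∀ i : ℤ, |w i - i| ≤ D) :
    (setA w D 0 0).card = (setB w D 0 0).card := by
  apply Finset.card_nbij' (i := fun z => -z) (j := fun z => -z)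
  · intro z hz
    simp only [Finset.mem_coe] at hz ⊢
    rw [mem_setA hbd] at hz
    rw [mem_setB hbd]
    have hz0 : z ≠ 0 := by
      intro h; rw [h, asp_zero hw] at hz; omega
    have := asp_neg hw z
    constructor
    · omega
    · rw [this]; omega
  · intro z hz
    simp only [Finset.mem_coe] at hz ⊢
    rw [mem_setB hbd] at hz
    rw [mem_setA hbd]
    have := asp_neg hw z
    have hz0 : z ≠ 0 := by omega
    have hwz0 : w z ≠ 0 := by
      intro h
      have : w z = w 0 := by rw [h, asp_zero hw]
      have := w.injective this; omega
    rw [this]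
    omega
  · intro z _; ring
  · intro z _; ring

lemma bal (hw : IsAffineSignedPerm n w) (hbd : ∀ i : ℤ, |w i - i| ≤ D) (y c : ℤ) :
    ((setA w D y c).card : ℤ) - (setB w D y c).card = y - c := by
  have hy0 : ∀ y : ℤ, ((setA w D y 0).card : ℤ) - (setB w D y 0).card = y := by
    intro y
    induction y using Int.induction_on with
    | zero => rw [bal_base hw hbd]; ring
    | succ k ih =>
        have h1 := cardA_succ hbd k 0
        have h2 := cardB_succ hbd k 0
        by_cases h : (0:ℤ) < w (k+1)
        · rw [if_pos h] at h1; rw [if_neg (by omega)] at h2; omega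
        · rw [if_neg h] at h1; rw [if_pos (by omega)] at h2; omega
    | pred k ih =>
        have h1 := cardA_succ hbd (-(k:ℤ)-1) 0
        have h2 := cardB_succ hbd (-(k:ℤ)-1) 0
        have he : (-(k:ℤ)-1) + 1 = -(k:ℤ) := by ring
        rw [he] at h1 h2
        by_cases h : (0:ℤ) < w (-(k:ℤ))
        · rw [if_pos h] at h1; rw [if_neg (by omega)] at h2; omega
        · rw [if_neg h] at h1; rw [if_pos (by omega)] at h2; omega
  induction c using Int.induction_on with
  | zero => rw [hy0 y]; ring
  | succ k ih =>
      have h1 := cardA_c hbd y k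
      have h2 := cardB_c hbd y k
      by_cases h : w.symm (k+1) ≤ y
      · rw [if_pos h] at h1; rw [if_neg (by omega)] at h2; omega
      · rw [if_neg h] at h1; rw [if_pos (by omega)] at h2; omega
  | pred k ih =>
      have h1 := cardA_c hbd y (-(k:ℤ)-1)
      have h2 := cardB_c hbd y (-(k:ℤ)-1)
      have he : (-(k:ℤ)-1) + 1 = -(k:ℤ) := by ring
      rw [he] at h1 h2
      by_cases h : w.symm (-(k:ℤ)) ≤ y
      · rw [if_pos h] at h1; rw [if_neg (by omega)] at h2; omega
      · rw [if_neg h] at h1; rw [if_pos (by omega)] at h2; omega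

end Balance

section CL
variable {n : ℕ} {w : Equiv.Perm ℤ}

lemma cl_high (hw : IsAffineSignedPerm n w) {x y : ℤ} (hxy : x < y)
    (hdesc : w y < w x) (hyy : y ≤ w y) :
    ∃ k : ℤ, ¬ ((n : ℤ) + 1 ∣ k) ∧ y < k ∧ w k < w y := by
  obtain ⟨D, hD0, hbd⟩ := asp_bound hw
  have hxA : x ∈ setA w D y (w y) := by
    rw [mem_setA hbd]; exact ⟨by omega, hdesc⟩
  have hA1 : 1 ≤ (setA w D y (w y)).card := Finset.card_pos.mpr ⟨x, hxA⟩
  have hbal := bal hw hbd y (w y)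
  have hfro : (setB w D y (w y)).filter (fun z => ((n : ℤ) + 1) ∣ z) ⊆
      Finset.Ioc y (w y) := by
    intro z hz
    rw [Finset.mem_filter, mem_setB hbd] at hz
    rw [Finset.mem_Ioc]
    have := asp_frozen hw hz.2
    omega
  have hfrocard : ((setB w D y (w y)).filter (fun z => ((n : ℤ) + 1) ∣ z)).card ≤
      (w y - y).toNat := by
    calc _ ≤ (Finset.Ioc y (w y)).card := Finset.card_le_card hfro
    _ = (w y - y).toNat := Int.card_Ioc y (w y)
  by_contra hc
  have hsub : setB w D y (w y) ⊆ Finset.Ioc y (w y) := by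
    intro z hz
    rw [mem_setB hbd] at hz
    by_cases hfz : ((n : ℤ) + 1) ∣ z
    · rw [Finset.mem_Ioc]
      have := asp_frozen hw hfz
      omega
    · exfalso
      apply hc
      refine ⟨z, hfz, hz.1, ?_⟩
      rcases eq_or_lt_of_le hz.2 with h3 | h3
      · exact absurd (w.injective h3) (by omega)
      · exact h3
  have hcard : (setB w D y (w y)).card ≤ (w y - y).toNat := by
    calc _ ≤ (Finset.Ioc y (w y)).card := Finset.card_le_card hsub
    _ = (w y - y).toNat := Int.card_Ioc y (w y)
  have h2 : ((w y - y).toNat : ℤ) = w y - y := by omega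
  omega

lemma cl_low (hw : IsAffineSignedPerm n w) {y z : ℤ} (hyz : y < z)
    (hdesc : w z < w y) (hyy : w y ≤ y) :
    ∃ x : ℤ, ¬ ((n : ℤ) + 1 ∣ x) ∧ x < y ∧ w y < w x := by
  have h1 : -z < -y := by omega
  have h2 : w (-y) < w (-z) := by
    rw [asp_neg hw, asp_neg hw]; omega
  have h3 : -y ≤ w (-y) := by rw [asp_neg hw]; omega
  obtain ⟨k, hk1, hk2, hk3⟩ := cl_high hw h1 h2 h3
  refine ⟨-k, by simpa using hk1, by omega, ?_⟩
  rw [asp_neg hw] at hk3 ⊢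
  omega

end CL

section Gen
variable {n : ℕ}

/-- The underlying function of the Coxeter generator `s_t`. -/
def genF (n t : ℕ) (x : ℤ) : ℤ :=
  if t = 0 then
    (if 2*((n:ℤ)+1) ∣ (x - 1) then x - 2
     else if 2*((n:ℤ)+1) ∣ (x + 1) then x + 2 else x)
  else if t = n then
    (if 2*((n:ℤ)+1) ∣ (x - (n:ℤ)) then x + 2
     else if 2*((n:ℤ)+1) ∣ (x - (n:ℤ) - 2) then x - 2 else x)
  else
    (if 2*((n:ℤ)+1) ∣ (x - (t:ℤ)) then x + 1
     else if 2*((n:ℤ)+1) ∣ (x - (t:ℤ) - 1) then x - 1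
     else if 2*((n:ℤ)+1) ∣ (x + (t:ℤ) + 1) then x + 1
     else if 2*((n:ℤ)+1) ∣ (x + (t:ℤ)) then x - 1 else x)

lemma pz_zero (hn : 2 ≤ n) {d : ℤ} (hd : 2*((n:ℤ)+1) ∣ d)
    (h1 : -(2*((n:ℤ)+1)) < d) (h2 : d < 2*((n:ℤ)+1)) : d = 0 :=
  Int.eq_zero_of_abs_lt_dvd hd (abs_lt.mpr ⟨h1, h2⟩)

lemma pz_dvd {x a : ℤ} (y : ℤ) (h : 2*((n:ℤ)+1) ∣ x + a) (he : y = x + a) :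
    2*((n:ℤ)+1) ∣ y := he ▸ h

lemma pz_not_dvd (hn : 2 ≤ n) {x a : ℤ} (b : ℤ) (y : ℤ) (h : 2*((n:ℤ)+1) ∣ x + a)
    (he : y = x + b) (hne : b - a ≠ 0)
    (hb1 : -(2*((n:ℤ)+1)) < b - a) (hb2 : b - a < 2*((n:ℤ)+1)) :
    ¬ 2*((n:ℤ)+1) ∣ y := by
  subst he
  intro h2
  have h3 := dvd_sub h2 h
  have he2 : x + b - (x + a) = b - a := by ring
  rw [he2] at h3
  exact hne (pz_zero hn h3 hb1 hb2)

lemma genF_zero_def (x : ℤ) :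
    genF n 0 x = if 2*((n:ℤ)+1) ∣ (x - 1) then x - 2
      else if 2*((n:ℤ)+1) ∣ (x + 1) then x + 2 else x := by
  unfold genF; rw [if_pos rfl]

lemma genF_top_def (h0 : n ≠ 0) (x : ℤ) :
    genF n n x = if 2*((n:ℤ)+1) ∣ (x - (n:ℤ)) then x + 2
      else if 2*((n:ℤ)+1) ∣ (x - (n:ℤ) - 2) then x - 2 else x := by
  unfold genF; rw [if_neg h0, if_pos rfl]

lemma genF_mid_def {t : ℕ} (h0 : t ≠ 0) (hN : t ≠ n) (x : ℤ) :
    genF n t x = if 2*((n:ℤ)+1) ∣ (x - (t:ℤ)) then x + 1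
     else if 2*((n:ℤ)+1) ∣ (x - (t:ℤ) - 1) then x - 1
     else if 2*((n:ℤ)+1) ∣ (x + (t:ℤ) + 1) then x + 1
     else if 2*((n:ℤ)+1) ∣ (x + (t:ℤ)) then x - 1 else x := by
  unfold genF; rw [if_neg h0, if_neg hN]

lemma genF_invol (hn : 2 ≤ n) {t : ℕ} (ht : t ≤ n) (x : ℤ) :
    genF n t (genF n t x) = x := by
  have hP : (4:ℤ) ≤ 2*((n:ℤ)+1) := by push_cast; omega
  by_cases h0 : t = 0
  · subst h0
    by_cases c1 : 2*((n:ℤ)+1) ∣ (x - 1)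
    · have c1' : 2*((n:ℤ)+1) ∣ x + (-1) := by
        have he : x + (-1:ℤ) = x - 1 := by ring
        rw [he]; exact c1
      have e1 : genF n 0 x = x - 2 := by rw [genF_zero_def, if_pos c1]
      have d1 : ¬ 2*((n:ℤ)+1) ∣ (x - 2 - 1) :=
        pz_not_dvd hn (-3) _ c1' (by ring) (by omega) (by omega) (by omega)
      have d2 : 2*((n:ℤ)+1) ∣ (x - 2 + 1) := pz_dvd _ c1' (by ring)
      rw [e1, genF_zero_def, if_neg d1, if_pos d2]; ring
    · by_cases c2 : 2*((n:ℤ)+1) ∣ (x + 1)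
      · have e1 : genF n 0 x = x + 2 := by rw [genF_zero_def, if_neg c1, if_pos c2]
        have d1 : 2*((n:ℤ)+1) ∣ (x + 2 - 1) := pz_dvd _ c2 (by ring)
        rw [e1, genF_zero_def, if_pos d1]; ring
      · have e1 : genF n 0 x = x := by rw [genF_zero_def, if_neg c1, if_neg c2]
        rw [e1, genF_zero_def, if_neg c1, if_neg c2]
  by_cases hN : t = n
  · rw [hN]
    have h0' : n ≠ 0 := by omega
    by_cases c1 : 2*((n:ℤ)+1) ∣ (x - (n:ℤ))
    · have c1' : 2*((n:ℤ)+1) ∣ x + (-(n:ℤ)) := by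
        have he : x + (-(n:ℤ)) = x - (n:ℤ) := by ring
        rw [he]; exact c1
      have e1 : genF n n x = x + 2 := by rw [genF_top_def h0', if_pos c1]
      have d1 : ¬ 2*((n:ℤ)+1) ∣ (x + 2 - (n:ℤ)) :=
        pz_not_dvd hn (2 - (n:ℤ)) _ c1' (by ring) (by omega) (by push_cast; omega)
          (by push_cast; omega)
      have d2 : 2*((n:ℤ)+1) ∣ (x + 2 - (n:ℤ) - 2) := pz_dvd _ c1' (by ring)
      rw [e1, genF_top_def h0', if_neg d1, if_pos d2]; ring
    · by_cases c2 : 2*((n:ℤ)+1) ∣ (x - (n:ℤ) - 2)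
      · have c2' : 2*((n:ℤ)+1) ∣ x + (-(n:ℤ) - 2) := by
          have he : x + (-(n:ℤ) - 2) = x - (n:ℤ) - 2 := by ring
          rw [he]; exact c2
        have e1 : genF n n x = x - 2 := by rw [genF_top_def h0', if_neg c1, if_pos c2]
        have d1 : 2*((n:ℤ)+1) ∣ (x - 2 - (n:ℤ)) := pz_dvd _ c2' (by ring)
        rw [e1, genF_top_def h0', if_pos d1]; ring
      · have e1 : genF n n x = x := by rw [genF_top_def h0', if_neg c1, if_neg c2]
        rw [e1, genF_top_def h0', if_neg c1, if_neg c2]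
  · have ht1 : 1 ≤ t := by omega
    have htb1 : (1:ℤ) ≤ (t:ℤ) := by exact_mod_cast ht1
    have htb2 : (t:ℤ) ≤ (n:ℤ) - 1 := by
      have h2 : t + 1 ≤ n := by omega
      have : ((t:ℤ) + 1) ≤ (n:ℤ) := by exact_mod_cast h2
      omega
    by_cases c1 : 2*((n:ℤ)+1) ∣ (x - (t:ℤ))
    · have c1' : 2*((n:ℤ)+1) ∣ x + (-(t:ℤ)) := by
        have he : x + (-(t:ℤ)) = x - (t:ℤ) := by ring
        rw [he]; exact c1
      have e1 : genF n t x = x + 1 := by rw [genF_mid_def h0 hN, if_pos c1]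
      have d1 : ¬ 2*((n:ℤ)+1) ∣ (x + 1 - (t:ℤ)) :=
        pz_not_dvd hn (1 - (t:ℤ)) _ c1' (by ring) (by omega) (by omega) (by omega)
      have d2 : 2*((n:ℤ)+1) ∣ (x + 1 - (t:ℤ) - 1) := pz_dvd _ c1' (by ring)
      rw [e1, genF_mid_def h0 hN, if_neg d1, if_pos d2]; ring
    · by_cases c2 : 2*((n:ℤ)+1) ∣ (x - (t:ℤ) - 1)
      · have c2' : 2*((n:ℤ)+1) ∣ x + (-(t:ℤ) - 1) := by
          have he : x + (-(t:ℤ) - 1) = x - (t:ℤ) - 1 := by ring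
          rw [he]; exact c2
        have e1 : genF n t x = x - 1 := by rw [genF_mid_def h0 hN, if_neg c1, if_pos c2]
        have d1 : 2*((n:ℤ)+1) ∣ (x - 1 - (t:ℤ)) := pz_dvd _ c2' (by ring)
        rw [e1, genF_mid_def h0 hN, if_pos d1]; ring
      · by_cases c3 : 2*((n:ℤ)+1) ∣ (x + (t:ℤ) + 1)
        · have c3' : 2*((n:ℤ)+1) ∣ x + ((t:ℤ) + 1) := by
            have he : x + ((t:ℤ) + 1) = x + (t:ℤ) + 1 := by ring
            rw [he]; exact c3
          have e1 : genF n t x = x + 1 := by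
            rw [genF_mid_def h0 hN, if_neg c1, if_neg c2, if_pos c3]
          have d1 : ¬ 2*((n:ℤ)+1) ∣ (x + 1 - (t:ℤ)) :=
            pz_not_dvd hn (1 - (t:ℤ)) _ c3' (by ring) (by omega) (by omega) (by omega)
          have d2 : ¬ 2*((n:ℤ)+1) ∣ (x + 1 - (t:ℤ) - 1) :=
            pz_not_dvd hn (-(t:ℤ)) _ c3' (by ring) (by omega) (by omega) (by omega)
          have d3 : ¬ 2*((n:ℤ)+1) ∣ (x + 1 + (t:ℤ) + 1) :=
            pz_not_dvd hn ((t:ℤ) + 2) _ c3' (by ring) (by omega) (by omega) (by omega)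
          have d4 : 2*((n:ℤ)+1) ∣ (x + 1 + (t:ℤ)) := pz_dvd _ c3' (by ring)
          rw [e1, genF_mid_def h0 hN, if_neg d1, if_neg d2, if_neg d3, if_pos d4]; ring
        · by_cases c4 : 2*((n:ℤ)+1) ∣ (x + (t:ℤ))
          · have e1 : genF n t x = x - 1 := by
              rw [genF_mid_def h0 hN, if_neg c1, if_neg c2, if_neg c3, if_pos c4]
            have d1 : ¬ 2*((n:ℤ)+1) ∣ (x - 1 - (t:ℤ)) :=
              pz_not_dvd hn (-1 - (t:ℤ)) _ c4 (by ring) (by omega) (by omega) (by omega)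
            have d2 : ¬ 2*((n:ℤ)+1) ∣ (x - 1 - (t:ℤ) - 1) :=
              pz_not_dvd hn (-2 - (t:ℤ)) _ c4 (by ring) (by omega) (by push_cast; omega)
                (by push_cast; omega)
            have d3 : 2*((n:ℤ)+1) ∣ (x - 1 + (t:ℤ) + 1) := pz_dvd _ c4 (by ring)
            rw [e1, genF_mid_def h0 hN, if_neg d1, if_neg d2, if_pos d3]; ring
          · have e1 : genF n t x = x := by
              rw [genF_mid_def h0 hN, if_neg c1, if_neg c2, if_neg c3, if_neg c4]
            rw [e1, genF_mid_def h0 hN, if_neg c1, if_neg c2, if_neg c3, if_neg c4]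

end Gen

section Gen2
variable {n : ℕ}

lemma pz_per {y : ℤ} : (2*((n:ℤ)+1) ∣ y + 2*((n:ℤ)+1)) ↔ 2*((n:ℤ)+1) ∣ y := by
  constructor
  · intro h
    have h2 := dvd_sub h (dvd_refl (2*((n:ℤ)+1)))
    have he : y + 2*((n:ℤ)+1) - 2*((n:ℤ)+1) = y := by ring
    rwa [he] at h2
  · intro h
    exact dvd_add h (dvd_refl _)

lemma pz_neg {y : ℤ} : (2*((n:ℤ)+1) ∣ -y) ↔ 2*((n:ℤ)+1) ∣ y := dvd_neg

lemma genF_period (hn : 2 ≤ n) {t : ℕ} (ht : t ≤ n) (x : ℤ) :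
    genF n t (x + 2*((n:ℤ)+1)) = genF n t x + 2*((n:ℤ)+1) := by
  by_cases h0 : t = 0
  · subst h0
    rw [genF_zero_def, genF_zero_def]
    simp only [show x + 2*((n:ℤ)+1) - 1 = (x - 1) + 2*((n:ℤ)+1) from by ring,
      show x + 2*((n:ℤ)+1) + 1 = (x + 1) + 2*((n:ℤ)+1) from by ring, pz_per]
    by_cases c1 : 2*((n:ℤ)+1) ∣ (x - 1)
    · rw [if_pos c1, if_pos c1]; ring
    · rw [if_neg c1, if_neg c1]
      by_cases c2 : 2*((n:ℤ)+1) ∣ (x + 1)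
      · rw [if_pos c2, if_pos c2]; ring
      · rw [if_neg c2, if_neg c2]
  by_cases hN : t = n
  · rw [hN]
    have h0' : n ≠ 0 := by omega
    rw [genF_top_def h0', genF_top_def h0']
    simp only [show x + 2*((n:ℤ)+1) - (n:ℤ) = (x - (n:ℤ)) + 2*((n:ℤ)+1) from by ring,
      show x + 2*((n:ℤ)+1) - (n:ℤ) - 2 = (x - (n:ℤ) - 2) + 2*((n:ℤ)+1) from by ring,
      show (x - (n:ℤ)) + 2*((n:ℤ)+1) - 2 = (x - (n:ℤ) - 2) + 2*((n:ℤ)+1) from by ring, pz_per]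
    by_cases c1 : 2*((n:ℤ)+1) ∣ (x - (n:ℤ))
    · rw [if_pos c1, if_pos c1]; ring
    · rw [if_neg c1, if_neg c1]
      by_cases c2 : 2*((n:ℤ)+1) ∣ (x - (n:ℤ) - 2)
      · rw [if_pos c2, if_pos c2]; ring
      · rw [if_neg c2, if_neg c2]
  · rw [genF_mid_def h0 hN, genF_mid_def h0 hN]
    simp only [show x + 2*((n:ℤ)+1) - (t:ℤ) = (x - (t:ℤ)) + 2*((n:ℤ)+1) from by ring,
      show x + 2*((n:ℤ)+1) - (t:ℤ) - 1 = (x - (t:ℤ) - 1) + 2*((n:ℤ)+1) from by ring,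
      show x + 2*((n:ℤ)+1) + (t:ℤ) + 1 = (x + (t:ℤ) + 1) + 2*((n:ℤ)+1) from by ring,
      show x + 2*((n:ℤ)+1) + (t:ℤ) = (x + (t:ℤ)) + 2*((n:ℤ)+1) from by ring,
      show (x - (t:ℤ)) + 2*((n:ℤ)+1) - 1 = (x - (t:ℤ) - 1) + 2*((n:ℤ)+1) from by ring,
      show (x + (t:ℤ)) + 2*((n:ℤ)+1) + 1 = (x + (t:ℤ) + 1) + 2*((n:ℤ)+1) from by ring, pz_per]
    by_cases c1 : 2*((n:ℤ)+1) ∣ (x - (t:ℤ))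
    · rw [if_pos c1, if_pos c1]; ring
    · rw [if_neg c1, if_neg c1]
      by_cases c2 : 2*((n:ℤ)+1) ∣ (x - (t:ℤ) - 1)
      · rw [if_pos c2, if_pos c2]; ring
      · rw [if_neg c2, if_neg c2]
        by_cases c3 : 2*((n:ℤ)+1) ∣ (x + (t:ℤ) + 1)
        · rw [if_pos c3, if_pos c3]; ring
        · rw [if_neg c3, if_neg c3]
          by_cases c4 : 2*((n:ℤ)+1) ∣ (x + (t:ℤ))
          · rw [if_pos c4, if_pos c4]; ring
          · rw [if_neg c4, if_neg c4]

lemma genF_neg (hn : 2 ≤ n) {t : ℕ} (ht : t ≤ n) (x : ℤ) :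
    genF n t (-x) = - genF n t x := by
  have hP : (4:ℤ) ≤ 2*((n:ℤ)+1) := by push_cast; omega
  by_cases h0 : t = 0
  · subst h0
    rw [genF_zero_def, genF_zero_def]
    simp only [show -x - 1 = -(x + 1) from by ring,
      show -x + 1 = -(x - 1) from by ring, pz_neg]
    by_cases c1 : 2*((n:ℤ)+1) ∣ (x - 1)
    · have c1' : 2*((n:ℤ)+1) ∣ x + (-1) := by
        have he : x + (-1:ℤ) = x - 1 := by ring
        rw [he]; exact c1
      rw [if_neg (pz_not_dvd hn 1 _ c1' (by ring) (by omega) (by omega) (by omega)),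
        if_pos c1, if_pos c1]
      ring
    · rw [if_neg c1]
      by_cases c2 : 2*((n:ℤ)+1) ∣ (x + 1)
      · rw [if_pos c2, if_neg c1, if_pos c2]; ring
      · rw [if_neg c2, if_neg c1, if_neg c2]
  by_cases hN : t = n
  · rw [hN]
    have h0' : n ≠ 0 := by omega
    rw [genF_top_def h0', genF_top_def h0']
    simp only [show -x - (n:ℤ) = -(x - (n:ℤ) - 2) + (-(2*((n:ℤ)+1))) from by ring,
      show -x - (n:ℤ) - 2 = -(x - (n:ℤ)) + (-(2*((n:ℤ)+1))) from by ring,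
      show -(x - (n:ℤ) - 2) + (-(2*((n:ℤ)+1))) - 2 = -(x - (n:ℤ)) + (-(2*((n:ℤ)+1))) from by ring]
    have hkey : ∀ y : ℤ, (2*((n:ℤ)+1) ∣ -y + (-(2*((n:ℤ)+1)))) ↔ 2*((n:ℤ)+1) ∣ y := by
      intro y
      constructor
      · intro h
        have h2 := dvd_add h (dvd_refl (2*((n:ℤ)+1)))
        have he : -y + (-(2*((n:ℤ)+1))) + 2*((n:ℤ)+1) = -y := by ring
        rw [he] at h2
        exact dvd_neg.mp h2
      · intro h
        have h2 : 2*((n:ℤ)+1) ∣ -y := dvd_neg.mpr h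
        have := dvd_sub h2 (dvd_refl (2*((n:ℤ)+1)))
        have he : -y - 2*((n:ℤ)+1) = -y + (-(2*((n:ℤ)+1))) := by ring
        rwa [he] at this
    simp only [hkey]
    by_cases c1 : 2*((n:ℤ)+1) ∣ (x - (n:ℤ))
    · have c1' : 2*((n:ℤ)+1) ∣ x + (-(n:ℤ)) := by
        have he : x + (-(n:ℤ)) = x - (n:ℤ) := by ring
        rw [he]; exact c1
      rw [if_pos c1,
        if_neg (pz_not_dvd hn (-(n:ℤ) - 2) _ c1' (by ring) (by omega) (by push_cast; omega)
          (by omega)),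
        if_pos c1]
      ring
    · rw [if_neg c1, if_neg c1]
      by_cases c2 : 2*((n:ℤ)+1) ∣ (x - (n:ℤ) - 2)
      · rw [if_pos c2, if_pos c2]; ring
      · rw [if_neg c2, if_neg c2]
  · have ht1 : 1 ≤ t := by omega
    have htb1 : (1:ℤ) ≤ (t:ℤ) := by exact_mod_cast ht1
    have htb2 : (t:ℤ) ≤ (n:ℤ) - 1 := by
      have h2 : t + 1 ≤ n := by omega
      have : ((t:ℤ) + 1) ≤ (n:ℤ) := by exact_mod_cast h2
      omega
    rw [genF_mid_def h0 hN, genF_mid_def h0 hN]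
    simp only [show -x - (t:ℤ) = -(x + (t:ℤ)) from by ring,
      show -x - (t:ℤ) - 1 = -(x + (t:ℤ) + 1) from by ring,
      show -x + (t:ℤ) + 1 = -(x - (t:ℤ) - 1) from by ring,
      show -x + (t:ℤ) = -(x - (t:ℤ)) from by ring,
      show -(x + (t:ℤ)) - 1 = -(x + (t:ℤ) + 1) from by ring,
      show -(x - (t:ℤ)) + 1 = -(x - (t:ℤ) - 1) from by ring, pz_neg]
    by_cases c1 : 2*((n:ℤ)+1) ∣ (x - (t:ℤ))
    · have c1' : 2*((n:ℤ)+1) ∣ x + (-(t:ℤ)) := by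
        have he : x + (-(t:ℤ)) = x - (t:ℤ) := by ring
        rw [he]; exact c1
      rw [if_pos c1,
        if_neg (pz_not_dvd hn ((t:ℤ)) _ c1' (by ring) (by omega) (by omega) (by omega)),
        if_neg (pz_not_dvd hn ((t:ℤ) + 1) _ c1' (by ring) (by omega) (by omega) (by omega)),
        if_neg (pz_not_dvd hn (-(t:ℤ) - 1) _ c1' (by ring) (by omega) (by push_cast; omega)
          (by omega)),
        if_pos c1]
      ring
    · rw [if_neg c1, if_neg c1]
      by_cases c2 : 2*((n:ℤ)+1) ∣ (x - (t:ℤ) - 1)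
      · have c2' : 2*((n:ℤ)+1) ∣ x + (-(t:ℤ) - 1) := by
          have he : x + (-(t:ℤ) - 1) = x - (t:ℤ) - 1 := by ring
          rw [he]; exact c2
        rw [if_pos c2,
          if_neg (pz_not_dvd hn ((t:ℤ)) _ c2' (by ring) (by omega) (by omega)
            (by push_cast; omega)),
          if_neg (pz_not_dvd hn ((t:ℤ) + 1) _ c2' (by ring) (by omega) (by omega)
            (by push_cast; omega)),
          if_pos c2]
        ring
      · rw [if_neg c2]
        by_cases c3 : 2*((n:ℤ)+1) ∣ (x + (t:ℤ) + 1)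
        · have c3' : 2*((n:ℤ)+1) ∣ x + ((t:ℤ) + 1) := by
            have he : x + ((t:ℤ) + 1) = x + (t:ℤ) + 1 := by ring
            rw [he]; exact c3
          rw [if_pos c3,
            if_neg (pz_not_dvd hn ((t:ℤ)) _ c3' (by ring) (by omega) (by omega) (by omega)),
            if_pos c3, if_neg c2]
          ring
        · rw [if_neg c3, if_neg c3, if_neg c2]
          by_cases c4 : 2*((n:ℤ)+1) ∣ (x + (t:ℤ))
          · rw [if_pos c4, if_pos c4]; ring
          · rw [if_neg c4, if_neg c4]

end Gen2

section Gen3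
variable {n : ℕ}

lemma pz_not_small (hn : 2 ≤ n) {d : ℤ} (h1 : d ≠ 0)
    (h2 : -(2*((n:ℤ)+1)) < d) (h3 : d < 2*((n:ℤ)+1)) : ¬ 2*((n:ℤ)+1) ∣ d :=
  fun h => h1 (pz_zero hn h h2 h3)

lemma nbig (hn : 2 ≤ n) : (2:ℤ) ≤ (n:ℤ) := by exact_mod_cast hn

lemma genF_zero_one (hn : 2 ≤ n) : genF n 0 1 = -1 := by
  have : (2*((n:ℤ)+1)) ∣ ((1:ℤ) - 1) := by norm_num
  rw [genF_zero_def, if_pos this]; norm_num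

lemma genF_zero_fix (hn : 2 ≤ n) {i : ℤ} (h1 : 2 ≤ i) (h2 : i ≤ (n:ℤ)) :
    genF n 0 i = i := by
  have hb := nbig hn
  rw [genF_zero_def,
    if_neg (pz_not_small hn (by omega) (by omega) (by omega)),
    if_neg (pz_not_small hn (by omega) (by omega) (by omega))]

lemma genF_top_n (hn : 2 ≤ n) : genF n n (n:ℤ) = (n:ℤ) + 2 := by
  have : (2*((n:ℤ)+1)) ∣ ((n:ℤ) - (n:ℤ)) := by simp
  rw [genF_top_def (by omega), if_pos this]

lemma genF_top_fix (hn : 2 ≤ n) {i : ℤ} (h1 : 1 ≤ i) (h2 : i ≤ (n:ℤ) - 1) :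
    genF n n i = i := by
  have hb := nbig hn
  rw [genF_top_def (by omega),
    if_neg (pz_not_small hn (by omega) (by omega) (by omega)),
    if_neg (pz_not_small hn (by omega) (by omega) (by omega))]

lemma genF_mid_t (hn : 2 ≤ n) {t : ℕ} (h0 : t ≠ 0) (hN : t ≠ n) (ht : t ≤ n) :
    genF n t (t:ℤ) = (t:ℤ) + 1 := by
  have : (2*((n:ℤ)+1)) ∣ ((t:ℤ) - (t:ℤ)) := by simp
  rw [genF_mid_def h0 hN, if_pos this]

lemma genF_mid_t1 (hn : 2 ≤ n) {t : ℕ} (h0 : t ≠ 0) (hN : t ≠ n) (ht : t ≤ n) :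
    genF n t ((t:ℤ) + 1) = (t:ℤ) := by
  have hb := nbig hn
  have htb1 : (1:ℤ) ≤ (t:ℤ) := by exact_mod_cast Nat.one_le_iff_ne_zero.mpr h0
  have htb2 : (t:ℤ) ≤ (n:ℤ) - 1 := by
    have h2 : t + 1 ≤ n := by omega
    have : ((t:ℤ) + 1) ≤ (n:ℤ) := by exact_mod_cast h2
    omega
  have hd : (2*((n:ℤ)+1)) ∣ ((t:ℤ) + 1 - (t:ℤ) - 1) := by
    have he : (t:ℤ) + 1 - (t:ℤ) - 1 = 0 := by ring
    rw [he]
    exact dvd_zero _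
  rw [genF_mid_def h0 hN,
    if_neg (pz_not_small hn (by omega) (by omega) (by omega)),
    if_pos hd]
  ring

lemma genF_mid_fix (hn : 2 ≤ n) {t : ℕ} (h0 : t ≠ 0) (hN : t ≠ n) (ht : t ≤ n)
    {i : ℤ} (h1 : 1 ≤ i) (h2 : i ≤ (n:ℤ)) (h3 : i ≠ (t:ℤ)) (h4 : i ≠ (t:ℤ) + 1) :
    genF n t i = i := by
  have hb := nbig hn
  have htb1 : (1:ℤ) ≤ (t:ℤ) := by exact_mod_cast Nat.one_le_iff_ne_zero.mpr h0
  have htb2 : (t:ℤ) ≤ (n:ℤ) - 1 := by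
    have h2 : t + 1 ≤ n := by omega
    have : ((t:ℤ) + 1) ≤ (n:ℤ) := by exact_mod_cast h2
    omega
  rw [genF_mid_def h0 hN,
    if_neg (pz_not_small hn (by omega) (by omega) (by omega)),
    if_neg (pz_not_small hn (by omega) (by omega) (by omega)),
    if_neg (pz_not_small hn (by omega) (by omega) (by omega)),
    if_neg (pz_not_small hn (by omega) (by omega) (by omega))]

/-- The Coxeter generator as a permutation. -/
def genP (n t : ℕ) (hn : 2 ≤ n) (ht : t ≤ n) : Equiv.Perm ℤ :=
  ⟨genF n t, genF n t, fun x => genF_invol hn ht x, fun x => genF_invol hn ht x⟩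

lemma genP_apply (hn : 2 ≤ n) {t : ℕ} (ht : t ≤ n) (x : ℤ) :
    (genP n t hn ht) x = genF n t x := rfl

lemma asp_genP (hn : 2 ≤ n) {t : ℕ} (ht : t ≤ n) :
    IsAffineSignedPerm n (genP n t hn ht) := by
  constructor
  · intro i; exact genF_neg hn ht i
  · intro i
    show genF n t (2 * ((n:ℤ) + 1) - i) = 2 * ((n:ℤ) + 1) - genF n t i
    rw [show 2*((n:ℤ)+1) - i = -i + 2*((n:ℤ)+1) from by ring, genF_period hn ht,
      genF_neg hn ht]
    ring

lemma genP_mul_self (hn : 2 ≤ n) {t : ℕ} (ht : t ≤ n) :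
    (genP n t hn ht) * (genP n t hn ht) = 1 := by
  ext x
  show genF n t (genF n t x) = x
  exact genF_invol hn ht x

lemma isGenC_genP (hn : 2 ≤ n) {t : ℕ} (ht : t ≤ n) :
    IsGenC n t (genP n t hn ht) := by
  refine ⟨asp_genP hn ht, ?_⟩
  by_cases h0 : t = 0
  · subst h0
    rw [if_pos rfl]
    exact ⟨genF_zero_one hn, fun j hj1 hj2 => genF_zero_fix hn hj1 hj2⟩
  · rw [if_neg h0]
    by_cases hN : t = n
    · subst hN
      rw [if_pos rfl]
      exact ⟨genF_top_n hn, fun j hj1 hj2 => genF_top_fix hn hj1 hj2⟩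
    · rw [if_neg hN]
      exact ⟨by omega, genF_mid_t hn h0 hN ht, genF_mid_t1 hn h0 hN ht,
        fun j hj1 hj2 hj3 hj4 => genF_mid_fix hn h0 hN ht hj1 hj2 hj3 hj4⟩

lemma genC_eq (hn : 2 ≤ n) {t : ℕ} (ht : t ≤ n) {σ : Equiv.Perm ℤ}
    (h : IsGenC n t σ) : σ = genP n t hn ht := by
  have hb := nbig hn
  apply asp_ext_window h.1 (asp_genP hn ht)
  intro i hi1 hi2
  have h2 := h.2
  rw [genP_apply]
  by_cases h0 : t = 0
  · subst h0
    rw [if_pos rfl] at h2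
    rcases eq_or_lt_of_le hi1 with h3 | h3
    · rw [← h3, h2.1, genF_zero_one hn]
    · rw [h2.2 i (by omega) hi2, genF_zero_fix hn (by omega) hi2]
  · rw [if_neg h0] at h2
    by_cases hN : t = n
    · subst hN
      rw [if_pos rfl] at h2
      rcases eq_or_lt_of_le hi2 with h3 | h3
      · rw [h3, h2.1, genF_top_n hn]
      · rw [h2.2 i hi1 (by omega), genF_top_fix hn hi1 (by omega)]
    · rw [if_neg hN] at h2
      obtain ⟨htn, he1, he2, he3⟩ := h2
      by_cases hc1 : i = (t:ℤ)
      · rw [hc1, he1, genF_mid_t hn h0 hN ht]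
      · by_cases hc2 : i = (t:ℤ) + 1
        · rw [hc2, he2, genF_mid_t1 hn h0 hN ht]
        · rw [he3 i hi1 hi2 hc1 hc2, genF_mid_fix hn h0 hN ht hi1 hi2 hc1 hc2]

end Gen3

section Dis
variable {n : ℕ} {w : Equiv.Perm ℤ}

lemma unfrozen_one (hn : 2 ≤ n) : ¬ ((n:ℤ) + 1) ∣ 1 := by
  intro h
  have := Int.le_of_dvd (by norm_num) h
  have := nbig hn
  omega

lemma not_dvd_small (hn : 2 ≤ n) {i : ℤ} (h1 : 1 ≤ i) (h2 : i ≤ (n:ℤ)) :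
    ¬ ((n:ℤ) + 1) ∣ i := by
  intro h
  have := Int.le_of_dvd (by omega) h
  omega

lemma disC_mul_eval (hn : 2 ≤ n) {t : ℕ} (ht : t ≤ n) :
    disC n (w * genP n t hn ht) = ∑ i ∈ Finset.Icc (1:ℤ) (n:ℤ), |w (genF n t i) - i| := by
  unfold disC
  apply Finset.sum_congr rfl
  intro i _
  rw [Equiv.Perm.mul_apply, genP_apply]

lemma disC_split (hn : 2 ≤ n) {t : ℕ} (ht : t ≤ n) (s : Finset ℤ)
    (hs : s ⊆ Finset.Icc (1:ℤ) (n:ℤ))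
    (hfix : ∀ x ∈ Finset.Icc (1:ℤ) (n:ℤ), x ∉ s → genF n t x = x) :
    disC n (w * genP n t hn ht) =
      disC n w + ∑ i ∈ s, (|w (genF n t i) - i| - |w i - i|) := by
  rw [disC_mul_eval hn ht]
  have h1 : ∑ i ∈ Finset.Icc (1:ℤ) (n:ℤ), |w (genF n t i) - i| =
      ∑ i ∈ Finset.Icc (1:ℤ) (n:ℤ), (|w i - i| + (|w (genF n t i) - i| - |w i - i|)) := by
    apply Finset.sum_congr rfl; intro i _; ring
  rw [h1, Finset.sum_add_distrib]
  unfold disC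
  congr 1
  rw [← Finset.sum_subset hs (fun x hx hnx => ?_)]
  rw [hfix x hx hnx, sub_self]

lemma disDrop_zero (hn : 2 ≤ n) (ht : 0 ≤ n) (hw : IsAffineSignedPerm n w) :
    disC n (w * genP n 0 hn ht) =
      disC n w + (if w 1 ≤ -1 then -2 else 2) := by
  have hb := nbig hn
  rw [disC_split hn ht {(1:ℤ)}
    (by intro x hx; rw [Finset.mem_singleton] at hx; rw [hx, Finset.mem_Icc]; omega)
    (by intro x hx hnx
        rw [Finset.mem_Icc] at hx
        rw [Finset.mem_singleton] at hnx
        exact genF_zero_fix hn (by omega) hx.2)]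
  rw [Finset.sum_singleton, genF_zero_one hn,
    show w (-1) = -(w 1) from asp_neg hw 1]
  have ha : w 1 ≠ 0 := by
    intro h
    exact asp_unfrozen hw (unfrozen_one hn) (h ▸ dvd_zero _)
  by_cases h : w 1 ≤ -1
  · rw [if_pos h]
    rcases abs_cases (-(w 1) - 1) with ⟨e1, _⟩ | ⟨e1, _⟩ <;>
      rcases abs_cases (w 1 - 1) with ⟨e2, _⟩ | ⟨e2, _⟩ <;> omega
  · rw [if_neg h]
    rcases abs_cases (-(w 1) - 1) with ⟨e1, _⟩ | ⟨e1, _⟩ <;>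
      rcases abs_cases (w 1 - 1) with ⟨e2, _⟩ | ⟨e2, _⟩ <;> omega

lemma asp_top_val (hn : 2 ≤ n) (hw : IsAffineSignedPerm n w) :
    w ((n:ℤ) + 2) = 2*((n:ℤ)+1) - w (n:ℤ) := by
  have := asp_refl hw (n:ℤ)
  have he : 2*((n:ℤ)+1) - (n:ℤ) = (n:ℤ) + 2 := by ring
  rw [he] at this
  exact this

lemma disDrop_top (hn : 2 ≤ n) (ht : n ≤ n) (hw : IsAffineSignedPerm n w) :
    disC n (w * genP n n hn ht) =
      disC n w + (if (n:ℤ) + 2 ≤ w (n:ℤ) then -2 else 2) := by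
  have hb := nbig hn
  rw [disC_split hn ht {(n:ℤ)}
    (by intro x hx; rw [Finset.mem_singleton] at hx; rw [hx, Finset.mem_Icc]; omega)
    (by intro x hx hnx
        rw [Finset.mem_Icc] at hx
        rw [Finset.mem_singleton] at hnx
        exact genF_top_fix hn hx.1 (by omega))]
  rw [Finset.sum_singleton, genF_top_n hn, asp_top_val hn hw]
  have ha : w (n:ℤ) ≠ (n:ℤ) + 1 := by
    intro h
    apply asp_unfrozen hw (not_dvd_small hn (by omega) (by omega) : ¬ ((n:ℤ)+1) ∣ (n:ℤ))
    rw [h]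
  by_cases h : (n:ℤ) + 2 ≤ w (n:ℤ)
  · rw [if_pos h]
    rcases abs_cases (2*((n:ℤ)+1) - w (n:ℤ) - (n:ℤ)) with ⟨e1, _⟩ | ⟨e1, _⟩ <;>
      rcases abs_cases (w (n:ℤ) - (n:ℤ)) with ⟨e2, _⟩ | ⟨e2, _⟩ <;> omega
  · rw [if_neg h]
    rcases abs_cases (2*((n:ℤ)+1) - w (n:ℤ) - (n:ℤ)) with ⟨e1, _⟩ | ⟨e1, _⟩ <;>
      rcases abs_cases (w (n:ℤ) - (n:ℤ)) with ⟨e2, _⟩ | ⟨e2, _⟩ <;> omega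

lemma disDrop_mid (hn : 2 ≤ n) {t : ℕ} (h0 : t ≠ 0) (hN : t ≠ n) (ht : t ≤ n)
    (hw : IsAffineSignedPerm n w) :
    disC n (w * genP n t hn ht) =
      disC n w + (if ((t:ℤ) + 1 ≤ w (t:ℤ) ∧ w ((t:ℤ)+1) ≤ (t:ℤ)) then -2
        else if (w (t:ℤ) ≤ (t:ℤ) ∧ (t:ℤ) + 1 ≤ w ((t:ℤ)+1)) then 2 else 0) := by
  have hb := nbig hn
  have htb1 : (1:ℤ) ≤ (t:ℤ) := by exact_mod_cast Nat.one_le_iff_ne_zero.mpr h0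
  have htb2 : (t:ℤ) ≤ (n:ℤ) - 1 := by
    have h2 : t + 1 ≤ n := by omega
    have : ((t:ℤ) + 1) ≤ (n:ℤ) := by exact_mod_cast h2
    omega
  rw [disC_split hn ht {(t:ℤ), (t:ℤ)+1}
    (by intro x hx
        rw [Finset.mem_insert, Finset.mem_singleton] at hx
        rw [Finset.mem_Icc]
        rcases hx with rfl | rfl <;> omega)
    (by intro x hx hnx
        rw [Finset.mem_Icc] at hx
        rw [Finset.mem_insert, Finset.mem_singleton] at hnx
        push_neg at hnx
        exact genF_mid_fix hn h0 hN ht hx.1 hx.2 hnx.1 hnx.2)]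
  rw [Finset.sum_pair (by omega), genF_mid_t hn h0 hN ht, genF_mid_t1 hn h0 hN ht]
  by_cases h1 : (t:ℤ) + 1 ≤ w (t:ℤ) <;> by_cases h2 : w ((t:ℤ)+1) ≤ (t:ℤ)
  · rw [if_pos ⟨h1, h2⟩]
    rcases abs_cases (w ((t:ℤ)+1) - (t:ℤ)) with ⟨e1, _⟩ | ⟨e1, _⟩ <;>
      rcases abs_cases (w (t:ℤ) - ((t:ℤ)+1)) with ⟨e2, _⟩ | ⟨e2, _⟩ <;>
      rcases abs_cases (w (t:ℤ) - (t:ℤ)) with ⟨e3, _⟩ | ⟨e3, _⟩ <;>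
      rcases abs_cases (w ((t:ℤ)+1) - ((t:ℤ)+1)) with ⟨e4, _⟩ | ⟨e4, _⟩ <;> omega
  all_goals {
    rw [if_neg (by rintro ⟨ha1, ha2⟩; omega)]
    first
    | (rw [if_pos (by constructor <;> omega)]
       rcases abs_cases (w ((t:ℤ)+1) - (t:ℤ)) with ⟨e1, _⟩ | ⟨e1, _⟩ <;>
         rcases abs_cases (w (t:ℤ) - ((t:ℤ)+1)) with ⟨e2, _⟩ | ⟨e2, _⟩ <;>
         rcases abs_cases (w (t:ℤ) - (t:ℤ)) with ⟨e3, _⟩ | ⟨e3, _⟩ <;>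
         rcases abs_cases (w ((t:ℤ)+1) - ((t:ℤ)+1)) with ⟨e4, _⟩ | ⟨e4, _⟩ <;> omega
      )
    | (rw [if_neg (by rintro ⟨ha1, ha2⟩; omega)]
       rcases abs_cases (w ((t:ℤ)+1) - (t:ℤ)) with ⟨e1, _⟩ | ⟨e1, _⟩ <;>
         rcases abs_cases (w (t:ℤ) - ((t:ℤ)+1)) with ⟨e2, _⟩ | ⟨e2, _⟩ <;>
         rcases abs_cases (w (t:ℤ) - (t:ℤ)) with ⟨e3, _⟩ | ⟨e3, _⟩ <;>
         rcases abs_cases (w ((t:ℤ)+1) - ((t:ℤ)+1)) with ⟨e4, _⟩ | ⟨e4, _⟩ <;> omega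
      ) }

end Dis

section OP
variable {n : ℕ}

lemma op (hn : 2 ≤ n) {t : ℕ} (ht : t ≤ n) {x y : ℤ}
    (hx : ¬ ((n:ℤ)+1) ∣ x) (hy : ¬ ((n:ℤ)+1) ∣ y) (hxy : x < y)
    (hpair : genF n t x ≠ y) : genF n t x < genF n t y := by
  have hb := nbig hn
  by_contra hcon
  push_neg at hcon
  by_cases h0 : t = 0
  · subst h0
    by_cases cx1 : 2*((n:ℤ)+1) ∣ (x-1)
    · have ex : genF n 0 x = x - 2 := by rw [genF_zero_def, if_pos cx1]
      by_cases cy1 : 2*((n:ℤ)+1) ∣ (y-1)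
      · have ey : genF n 0 y = y - 2 := by rw [genF_zero_def, if_pos cy1]
        rw [ex, ey] at hcon; omega
      · by_cases cy2 : 2*((n:ℤ)+1) ∣ (y+1)
        · have ey : genF n 0 y = y + 2 := by rw [genF_zero_def, if_neg cy1, if_pos cy2]
          rw [ex, ey] at hcon; omega
        · have ey : genF n 0 y = y := by rw [genF_zero_def, if_neg cy1, if_neg cy2]
          rw [ex, ey] at hcon; omega
    · by_cases cx2 : 2*((n:ℤ)+1) ∣ (x+1)
      · have ex : genF n 0 x = x + 2 := by rw [genF_zero_def, if_neg cx1, if_pos cx2]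
        by_cases cy1 : 2*((n:ℤ)+1) ∣ (y-1)
        · have ey : genF n 0 y = y - 2 := by rw [genF_zero_def, if_pos cy1]
          rw [ex, ey] at hcon
          have hd0 : y - x - 2 = 0 := by
            have hd := dvd_sub cy1 cx2
            have he : (y - 1) - (x + 1) = y - x - 2 := by ring
            rw [he] at hd
            exact pz_zero hn hd (by omega) (by omega)
          exact hpair (by rw [ex]; omega)
        · by_cases cy2 : 2*((n:ℤ)+1) ∣ (y+1)
          · have ey : genF n 0 y = y + 2 := by rw [genF_zero_def, if_neg cy1, if_pos cy2]
            rw [ex, ey] at hcon; omega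
          · have ey : genF n 0 y = y := by rw [genF_zero_def, if_neg cy1, if_neg cy2]
            rw [ex, ey] at hcon
            rcases (by omega : y = x + 1 ∨ y = x + 2) with h | h
            · obtain ⟨k, hk⟩ := cx2
              exact hy ⟨2*k, by rw [h, hk]; ring⟩
            · apply cy1
              have he : y - 1 = x + 1 := by omega
              rw [he]; exact cx2
      · have ex : genF n 0 x = x := by rw [genF_zero_def, if_neg cx1, if_neg cx2]
        by_cases cy1 : 2*((n:ℤ)+1) ∣ (y-1)
        · have ey : genF n 0 y = y - 2 := by rw [genF_zero_def, if_pos cy1]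
          rw [ex, ey] at hcon
          rcases (by omega : y = x + 1 ∨ y = x + 2) with h | h
          · obtain ⟨k, hk⟩ := cy1
            exact hx ⟨2*k, by rw [(by omega : x = y - 1), hk]; ring⟩
          · apply cx2
            have he : x + 1 = y - 1 := by omega
            rw [he]; exact cy1
        · by_cases cy2 : 2*((n:ℤ)+1) ∣ (y+1)
          · have ey : genF n 0 y = y + 2 := by rw [genF_zero_def, if_neg cy1, if_pos cy2]
            rw [ex, ey] at hcon; omega
          · have ey : genF n 0 y = y := by rw [genF_zero_def, if_neg cy1, if_neg cy2]
            rw [ex, ey] at hcon; omega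
  by_cases hN : t = n
  · rw [hN] at hpair hcon
    have h0' : n ≠ 0 := by omega
    by_cases cx1 : 2*((n:ℤ)+1) ∣ (x-(n:ℤ))
    · have ex : genF n n x = x + 2 := by rw [genF_top_def h0', if_pos cx1]
      by_cases cy1 : 2*((n:ℤ)+1) ∣ (y-(n:ℤ))
      · have ey : genF n n y = y + 2 := by rw [genF_top_def h0', if_pos cy1]
        rw [ex, ey] at hcon; omega
      · by_cases cy2 : 2*((n:ℤ)+1) ∣ (y-(n:ℤ)-2)
        · have ey : genF n n y = y - 2 := by rw [genF_top_def h0', if_neg cy1, if_pos cy2]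
          rw [ex, ey] at hcon
          have hd0 : y - x - 2 = 0 := by
            have hd := dvd_sub cy2 cx1
            have he : (y - (n:ℤ) - 2) - (x - (n:ℤ)) = y - x - 2 := by ring
            rw [he] at hd
            exact pz_zero hn hd (by omega) (by omega)
          exact hpair (by rw [ex]; omega)
        · have ey : genF n n y = y := by rw [genF_top_def h0', if_neg cy1, if_neg cy2]
          rw [ex, ey] at hcon
          rcases (by omega : y = x + 1 ∨ y = x + 2) with h | h
          · obtain ⟨k, hk⟩ := cx1
            exact hy ⟨1 + 2*k, by rw [h, (by omega : x = (n:ℤ) + 2*((n:ℤ)+1)*k)]; ring⟩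
          · apply cy2
            have he : y - (n:ℤ) - 2 = x - (n:ℤ) := by omega
            rw [he]; exact cx1
    · by_cases cx2 : 2*((n:ℤ)+1) ∣ (x-(n:ℤ)-2)
      · have ex : genF n n x = x - 2 := by rw [genF_top_def h0', if_neg cx1, if_pos cx2]
        by_cases cy1 : 2*((n:ℤ)+1) ∣ (y-(n:ℤ))
        · have ey : genF n n y = y + 2 := by rw [genF_top_def h0', if_pos cy1]
          rw [ex, ey] at hcon; omega
        · by_cases cy2 : 2*((n:ℤ)+1) ∣ (y-(n:ℤ)-2)
          · have ey : genF n n y = y - 2 := by rw [genF_top_def h0', if_neg cy1, if_pos cy2]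
            rw [ex, ey] at hcon; omega
          · have ey : genF n n y = y := by rw [genF_top_def h0', if_neg cy1, if_neg cy2]
            rw [ex, ey] at hcon; omega
      · have ex : genF n n x = x := by rw [genF_top_def h0', if_neg cx1, if_neg cx2]
        by_cases cy1 : 2*((n:ℤ)+1) ∣ (y-(n:ℤ))
        · have ey : genF n n y = y + 2 := by rw [genF_top_def h0', if_pos cy1]
          rw [ex, ey] at hcon; omega
        · by_cases cy2 : 2*((n:ℤ)+1) ∣ (y-(n:ℤ)-2)
          · have ey : genF n n y = y - 2 := by rw [genF_top_def h0', if_neg cy1, if_pos cy2]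
            rw [ex, ey] at hcon
            rcases (by omega : y = x + 1 ∨ y = x + 2) with h | h
            · obtain ⟨k, hk⟩ := cy2
              exact hx ⟨1 + 2*k, by rw [(by omega : x = (n:ℤ) + 1 + 2*((n:ℤ)+1)*k)]; ring⟩
            · apply cx1
              have he : x - (n:ℤ) = y - (n:ℤ) - 2 := by omega
              rw [he]; exact cy2
          · have ey : genF n n y = y := by rw [genF_top_def h0', if_neg cy1, if_neg cy2]
            rw [ex, ey] at hcon; omega
  · have ht1 : 1 ≤ t := by omega
    have htb1 : (1:ℤ) ≤ (t:ℤ) := by exact_mod_cast ht1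
    have htb2 : (t:ℤ) ≤ (n:ℤ) - 1 := by
      have h2 : t + 1 ≤ n := by omega
      have : ((t:ℤ) + 1) ≤ (n:ℤ) := by exact_mod_cast h2
      omega
    have hmv : ∀ z : ℤ, genF n t z = z + 1 ∨ genF n t z = z - 1 ∨ genF n t z = z := by
      intro z
      rw [genF_mid_def h0 hN]
      by_cases c1 : 2*((n:ℤ)+1) ∣ (z - (t:ℤ))
      · rw [if_pos c1]; tauto
      rw [if_neg c1]
      by_cases c2 : 2*((n:ℤ)+1) ∣ (z - (t:ℤ) - 1)
      · rw [if_pos c2]; tauto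
      rw [if_neg c2]
      by_cases c3 : 2*((n:ℤ)+1) ∣ (z + (t:ℤ) + 1)
      · rw [if_pos c3]; tauto
      rw [if_neg c3]
      by_cases c4 : 2*((n:ℤ)+1) ∣ (z + (t:ℤ))
      · rw [if_pos c4]; tauto
      rw [if_neg c4]; tauto
    -- x must move up and y must move down, with y ≤ x + 2
    rcases hmv x with ex | ex | ex <;> rcases hmv y with ey | ey | ey <;>
      rw [ex, ey] at hcon
    · omega
    · -- x up, y down : y = x + 1 or x + 2
      -- find out which congruence classes
      have hxup : 2*((n:ℤ)+1) ∣ (x - (t:ℤ)) ∨ 2*((n:ℤ)+1) ∣ (x + (t:ℤ) + 1) := by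
        by_contra hc
        push_neg at hc
        rw [genF_mid_def h0 hN, if_neg hc.1] at ex
        by_cases c2 : 2*((n:ℤ)+1) ∣ (x - (t:ℤ) - 1)
        · rw [if_pos c2] at ex; omega
        rw [if_neg c2, if_neg hc.2] at ex
        by_cases c4 : 2*((n:ℤ)+1) ∣ (x + (t:ℤ))
        · rw [if_pos c4] at ex; omega
        · rw [if_neg c4] at ex; omega
      have hydn : 2*((n:ℤ)+1) ∣ (y - (t:ℤ) - 1) ∨ 2*((n:ℤ)+1) ∣ (y + (t:ℤ)) := by
        by_contra hc
        push_neg at hc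
        rw [genF_mid_def h0 hN] at ey
        by_cases c1 : 2*((n:ℤ)+1) ∣ (y - (t:ℤ))
        · rw [if_pos c1] at ey; omega
        rw [if_neg c1, if_neg hc.1] at ey
        by_cases c3 : 2*((n:ℤ)+1) ∣ (y + (t:ℤ) + 1)
        · rw [if_pos c3] at ey; omega
        · rw [if_neg c3, if_neg hc.2] at ey; omega
      rcases hxup with cx | cx <;> rcases hydn with cy | cy
      · have hd0 : y - x - 1 = 0 := by
          have hd := dvd_sub cy cx
          have he : (y - (t:ℤ) - 1) - (x - (t:ℤ)) = y - x - 1 := by ring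
          rw [he] at hd
          exact pz_zero hn hd (by omega) (by omega)
        exact hpair (by rw [ex]; omega)
      · exfalso
        have hd := dvd_sub cy cx
        have he : (y + (t:ℤ)) - (x - (t:ℤ)) = y - x + 2*(t:ℤ) := by ring
        rw [he] at hd
        have := pz_zero hn hd (by omega) (by omega)
        omega
      · exfalso
        have hd := dvd_sub cy cx
        have he : (y - (t:ℤ) - 1) - (x + (t:ℤ) + 1) = y - x - 2*(t:ℤ) - 2 := by ring
        rw [he] at hd
        have := pz_zero hn hd (by omega) (by omega)
        omega
      · have hd0 : y - x - 1 = 0 := by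
          have hd := dvd_sub cy cx
          have he : (y + (t:ℤ)) - (x + (t:ℤ) + 1) = y - x - 1 := by ring
          rw [he] at hd
          exact pz_zero hn hd (by omega) (by omega)
        exact hpair (by rw [ex]; omega)
    · -- x up, y fixed : y = x + 1
      have hyx : y = x + 1 := by omega
      have hxup : 2*((n:ℤ)+1) ∣ (x - (t:ℤ)) ∨ 2*((n:ℤ)+1) ∣ (x + (t:ℤ) + 1) := by
        by_contra hc
        push_neg at hc
        rw [genF_mid_def h0 hN, if_neg hc.1] at ex
        by_cases c2 : 2*((n:ℤ)+1) ∣ (x - (t:ℤ) - 1)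
        · rw [if_pos c2] at ex; omega
        rw [if_neg c2, if_neg hc.2] at ex
        by_cases c4 : 2*((n:ℤ)+1) ∣ (x + (t:ℤ))
        · rw [if_pos c4] at ex; omega
        · rw [if_neg c4] at ex; omega
      -- then y would move down, contradiction with ey : genF y = y
      have : genF n t y = y - 1 := by
        rcases hxup with cx | cx
        · have cy : 2*((n:ℤ)+1) ∣ (y - (t:ℤ) - 1) := by
            have he : y - (t:ℤ) - 1 = x - (t:ℤ) := by omega
            rw [he]; exact cx
          rw [genF_mid_def h0 hN,
            if_neg (by
              intro hcc
              have hd := dvd_sub hcc cy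
              have he : (y - (t:ℤ)) - (y - (t:ℤ) - 1) = 1 := by ring
              rw [he] at hd
              have := pz_zero hn hd (by omega) (by omega)
              omega),
            if_pos cy]
        · have cy : 2*((n:ℤ)+1) ∣ (y + (t:ℤ)) := by
            have he : y + (t:ℤ) = x + (t:ℤ) + 1 := by omega
            rw [he]; exact cx
          rw [genF_mid_def h0 hN,
            if_neg (by
              intro hcc
              have hd := dvd_sub hcc cy
              have he : (y - (t:ℤ)) - (y + (t:ℤ)) = -(2*(t:ℤ)) := by ring
              rw [he] at hd
              have := pz_zero hn hd (by omega) (by omega)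
              omega),
            if_neg (by
              intro hcc
              have hd := dvd_sub hcc cy
              have he : (y - (t:ℤ) - 1) - (y + (t:ℤ)) = -(2*(t:ℤ)) - 1 := by ring
              rw [he] at hd
              have := pz_zero hn hd (by omega) (by omega)
              omega),
            if_neg (by
              intro hcc
              have hd := dvd_sub hcc cy
              have he : (y + (t:ℤ) + 1) - (y + (t:ℤ)) = 1 := by ring
              rw [he] at hd
              have := pz_zero hn hd (by omega) (by omega)
              omega),
            if_pos cy]
      rw [this] at ey; omega
    · omega
    · omega
    · omega
    · omega
    · -- x fixed, y down : y = x + 1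
      have hyx : y = x + 1 := by omega
      have hydn : 2*((n:ℤ)+1) ∣ (y - (t:ℤ) - 1) ∨ 2*((n:ℤ)+1) ∣ (y + (t:ℤ)) := by
        by_contra hc
        push_neg at hc
        rw [genF_mid_def h0 hN] at ey
        by_cases c1 : 2*((n:ℤ)+1) ∣ (y - (t:ℤ))
        · rw [if_pos c1] at ey; omega
        rw [if_neg c1, if_neg hc.1] at ey
        by_cases c3 : 2*((n:ℤ)+1) ∣ (y + (t:ℤ) + 1)
        · rw [if_pos c3] at ey; omega
        · rw [if_neg c3, if_neg hc.2] at ey; omega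
      have : genF n t x = x + 1 := by
        rcases hydn with cy | cy
        · have cx : 2*((n:ℤ)+1) ∣ (x - (t:ℤ)) := by
            have he : x - (t:ℤ) = y - (t:ℤ) - 1 := by omega
            rw [he]; exact cy
          rw [genF_mid_def h0 hN, if_pos cx]
        · have cx : 2*((n:ℤ)+1) ∣ (x + (t:ℤ) + 1) := by
            have he : x + (t:ℤ) + 1 = y + (t:ℤ) := by omega
            rw [he]; exact cy
          rw [genF_mid_def h0 hN,
            if_neg (by
              intro hcc
              have hd := dvd_sub hcc cx
              have he : (x - (t:ℤ)) - (x + (t:ℤ) + 1) = -(2*(t:ℤ)) - 1 := by ring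
              rw [he] at hd
              have := pz_zero hn hd (by omega) (by omega)
              omega),
            if_neg (by
              intro hcc
              have hd := dvd_sub hcc cx
              have he : (x - (t:ℤ) - 1) - (x + (t:ℤ) + 1) = -(2*(t:ℤ)) - 2 := by ring
              rw [he] at hd
              have := pz_zero hn hd (by omega) (by omega)
              omega),
            if_pos cx]
      rw [this] at ex; omega
    · omega
end OP

section Pairs
variable {n : ℕ} {w : Equiv.Perm ℤ}

lemma genP_eq_of (hn : 2 ≤ n) {t t' : ℕ} (h : t = t') (ht : t ≤ n) (ht' : t' ≤ n) :
    genP n t hn ht = genP n t' hn ht' := by subst h; rfl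

lemma pair0 (hn : 2 ≤ n) {x y : ℤ} (h : genF n 0 x = y) (hxy : x < y) :
    ∃ m : ℤ, x = -1 + m*(2*((n:ℤ)+1)) ∧ y = 1 + m*(2*((n:ℤ)+1)) := by
  by_cases cx1 : 2*((n:ℤ)+1) ∣ (x-1)
  · rw [genF_zero_def, if_pos cx1] at h; omega
  by_cases cx2 : 2*((n:ℤ)+1) ∣ (x+1)
  · rw [genF_zero_def, if_neg cx1, if_pos cx2] at h
    obtain ⟨k, hk⟩ := cx2
    exact ⟨k, by linear_combination hk, by linear_combination -h + hk⟩
  · rw [genF_zero_def, if_neg cx1, if_neg cx2] at h; omega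

lemma pairtop (hn : 2 ≤ n) {x y : ℤ} (h : genF n n x = y) (hxy : x < y) :
    ∃ m : ℤ, x = (n:ℤ) + m*(2*((n:ℤ)+1)) ∧ y = (n:ℤ)+2+m*(2*((n:ℤ)+1)) := by
  have h0' : n ≠ 0 := by omega
  by_cases cx1 : 2*((n:ℤ)+1) ∣ (x-(n:ℤ))
  · rw [genF_top_def h0', if_pos cx1] at h
    obtain ⟨k, hk⟩ := cx1
    exact ⟨k, by linear_combination hk, by linear_combination -h + hk⟩
  by_cases cx2 : 2*((n:ℤ)+1) ∣ (x-(n:ℤ)-2)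
  · rw [genF_top_def h0', if_neg cx1, if_pos cx2] at h; omega
  · rw [genF_top_def h0', if_neg cx1, if_neg cx2] at h; omega

lemma pairmid (hn : 2 ≤ n) {t : ℕ} (h0 : t ≠ 0) (hN : t ≠ n) {x y : ℤ}
    (h : genF n t x = y) (hxy : x < y) :
    ∃ m : ℤ, (x = (t:ℤ) + m*(2*((n:ℤ)+1)) ∧ y = (t:ℤ)+1+m*(2*((n:ℤ)+1))) ∨
      (x = -(t:ℤ)-1+m*(2*((n:ℤ)+1)) ∧ y = -(t:ℤ)+m*(2*((n:ℤ)+1))) := by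
  by_cases cx1 : 2*((n:ℤ)+1) ∣ (x-(t:ℤ))
  · rw [genF_mid_def h0 hN, if_pos cx1] at h
    obtain ⟨k, hk⟩ := cx1
    exact ⟨k, Or.inl ⟨by linear_combination hk, by linear_combination -h + hk⟩⟩
  by_cases cx2 : 2*((n:ℤ)+1) ∣ (x-(t:ℤ)-1)
  · rw [genF_mid_def h0 hN, if_neg cx1, if_pos cx2] at h; omega
  by_cases cx3 : 2*((n:ℤ)+1) ∣ (x+(t:ℤ)+1)
  · rw [genF_mid_def h0 hN, if_neg cx1, if_neg cx2, if_pos cx3] at h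
    obtain ⟨k, hk⟩ := cx3
    exact ⟨k, Or.inr ⟨by linear_combination hk, by linear_combination -h + hk⟩⟩
  by_cases cx4 : 2*((n:ℤ)+1) ∣ (x+(t:ℤ))
  · rw [genF_mid_def h0 hN, if_neg cx1, if_neg cx2, if_neg cx3, if_pos cx4] at h; omega
  · rw [genF_mid_def h0 hN, if_neg cx1, if_neg cx2, if_neg cx3, if_neg cx4] at h; omega

lemma drop_cond_zero (hn : 2 ≤ n) (ht : 0 ≤ n) (hw : IsAffineSignedPerm n w)
    (hdrop : disC n (w * genP n 0 hn ht) = disC n w - 2) : w 1 ≤ -1 := by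
  have h := disDrop_zero hn ht hw
  by_cases hc : w 1 ≤ -1
  · exact hc
  · rw [if_neg hc] at h; omega

lemma drop_cond_top (hn : 2 ≤ n) (ht : n ≤ n) (hw : IsAffineSignedPerm n w)
    (hdrop : disC n (w * genP n n hn ht) = disC n w - 2) : (n:ℤ) + 2 ≤ w (n:ℤ) := by
  have h := disDrop_top hn ht hw
  by_cases hc : (n:ℤ) + 2 ≤ w (n:ℤ)
  · exact hc
  · rw [if_neg hc] at h; omega

lemma drop_cond_mid (hn : 2 ≤ n) {t : ℕ} (h0 : t ≠ 0) (hN : t ≠ n) (ht : t ≤ n)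
    (hw : IsAffineSignedPerm n w)
    (hdrop : disC n (w * genP n t hn ht) = disC n w - 2) :
    (t:ℤ) + 1 ≤ w (t:ℤ) ∧ w ((t:ℤ)+1) ≤ (t:ℤ) := by
  have h := disDrop_mid hn h0 hN ht hw
  by_cases hc : (t:ℤ) + 1 ≤ w (t:ℤ) ∧ w ((t:ℤ)+1) ≤ (t:ℤ)
  · exact hc
  · rw [if_neg hc] at h
    by_cases hc2 : w (t:ℤ) ≤ (t:ℤ) ∧ (t:ℤ) + 1 ≤ w ((t:ℤ)+1)
    · rw [if_pos hc2] at h; omega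
    · rw [if_neg hc2] at h; omega

/-- If `dis` drops, then every swapped pair of the generator is a
"straddling descent" of `w`. -/
lemma pair_straddle (hn : 2 ≤ n) {t : ℕ} (ht : t ≤ n) (hw : IsAffineSignedPerm n w)
    (hdrop : disC n (w * genP n t hn ht) = disC n w - 2)
    {i j : ℤ} (hij : i < j) (hpair : genF n t i = j) :
    j ≤ w i ∧ w j ≤ i := by
  have hb := nbig hn
  by_cases h0 : t = 0
  · subst h0
    have hS := drop_cond_zero hn ht hw hdrop
    obtain ⟨m, hm1, hm2⟩ := pair0 hn hpair hij
    have e1 : w (-1 + m*(2*((n:ℤ)+1))) = w (-1) + m*(2*((n:ℤ)+1)) := asp_period_mul hw m (-1)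
    have e2 : w (1 + m*(2*((n:ℤ)+1))) = w 1 + m*(2*((n:ℤ)+1)) := asp_period_mul hw m 1
    have e3 : w (-1) = -(w 1) := asp_neg hw 1
    rw [hm1, hm2, e1, e2, e3]
    omega
  by_cases hN : t = n
  · have hdrop' : disC n (w * genP n n hn (le_refl n)) = disC n w - 2 := by
      rw [← genP_eq_of hn hN ht (le_refl n)]; exact hdrop
    have hS := drop_cond_top hn (le_refl n) hw hdrop'
    have hpair' : genF n n i = j := hN ▸ hpair
    obtain ⟨m, hm1, hm2⟩ := pairtop hn hpair' hij
    have e1 : w ((n:ℤ) + m*(2*((n:ℤ)+1))) = w (n:ℤ) + m*(2*((n:ℤ)+1)) :=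
      asp_period_mul hw m (n:ℤ)
    have e2 : w ((n:ℤ)+2 + m*(2*((n:ℤ)+1))) = w ((n:ℤ)+2) + m*(2*((n:ℤ)+1)) := by
      have := asp_period_mul hw m ((n:ℤ)+2)
      rw [show (n:ℤ)+2 + m*(2*((n:ℤ)+1)) = (n:ℤ)+2 + m*(2*((n:ℤ)+1)) from rfl]
      exact this
    have e3 : w ((n:ℤ) + 2) = 2*((n:ℤ)+1) - w (n:ℤ) := asp_top_val hn hw
    rw [hm1, hm2, e2, e1, e3]
    omega
  · have hS := drop_cond_mid hn h0 hN ht hw hdrop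
    obtain ⟨m, hm⟩ := pairmid hn h0 hN hpair hij
    rcases hm with ⟨hm1, hm2⟩ | ⟨hm1, hm2⟩
    · have e1 : w ((t:ℤ) + m*(2*((n:ℤ)+1))) = w (t:ℤ) + m*(2*((n:ℤ)+1)) :=
        asp_period_mul hw m (t:ℤ)
      have e2 : w ((t:ℤ)+1 + m*(2*((n:ℤ)+1))) = w ((t:ℤ)+1) + m*(2*((n:ℤ)+1)) :=
        asp_period_mul hw m ((t:ℤ)+1)
      rw [hm1, hm2, e1, e2]
      omega
    · have e1 : w (-(t:ℤ)-1 + m*(2*((n:ℤ)+1))) = w (-(t:ℤ)-1) + m*(2*((n:ℤ)+1)) := by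
        have := asp_period_mul hw m (-(t:ℤ)-1)
        exact this
      have e2 : w (-(t:ℤ) + m*(2*((n:ℤ)+1))) = w (-(t:ℤ)) + m*(2*((n:ℤ)+1)) :=
        asp_period_mul hw m (-(t:ℤ))
      have e3 : w (-(t:ℤ)-1) = -(w ((t:ℤ)+1)) := by
        have := asp_neg hw ((t:ℤ)+1)
        rw [show -(t:ℤ)-1 = -((t:ℤ)+1) from by ring]
        exact this
      have e4 : w (-(t:ℤ)) = -(w (t:ℤ)) := asp_neg hw (t:ℤ)
      rw [hm1, hm2, e1, e2, e3, e4]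
      omega

end Pairs

section KLemmas
variable {n : ℕ} {w : Equiv.Perm ℤ}

lemma unfrozen_genF (hn : 2 ≤ n) {t : ℕ} (ht : t ≤ n) {x : ℤ}
    (hx : ¬ ((n:ℤ)+1) ∣ x) : ¬ ((n:ℤ)+1) ∣ genF n t x :=
  asp_unfrozen (asp_genP hn ht) hx

lemma mul_genP_genF (hn : 2 ≤ n) {t : ℕ} (ht : t ≤ n) (u : Equiv.Perm ℤ) (z : ℤ) :
    (u * genP n t hn ht) (genF n t z) = u z := by
  rw [Equiv.Perm.mul_apply, genP_apply, genF_invol hn ht]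

lemma pat_transfer (hn : 2 ≤ n) {t : ℕ} (ht : t ≤ n) {u : Equiv.Perm ℤ} {i j k : ℤ}
    (hi : ¬ ((n:ℤ)+1) ∣ i) (hj : ¬ ((n:ℤ)+1) ∣ j) (hk : ¬ ((n:ℤ)+1) ∣ k)
    (hij : i < j) (hjk : j < k)
    (h1 : u j < u i) (h2 : u k < u j)
    (hpij : genF n t i ≠ j) (hpjk : genF n t j ≠ k) :
    GloballyContains321C n (u * genP n t hn ht) := by
  refine ⟨genF n t i, genF n t j, genF n t k,
    unfrozen_genF hn ht hi, unfrozen_genF hn ht hj, unfrozen_genF hn ht hk,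
    op hn ht hi hj hij hpij, op hn ht hj hk hjk hpjk, ?_, ?_⟩
  · rw [mul_genP_genF hn ht, mul_genP_genF hn ht]; exact h1
  · rw [mul_genP_genF hn ht, mul_genP_genF hn ht]; exact h2

lemma genF_invol_of (hn : 2 ≤ n) {t : ℕ} (ht : t ≤ n) {i j : ℤ}
    (h : genF n t i = j) : genF n t j = i := by
  have := genF_invol hn ht i
  rw [h] at this
  exact this

/-- K2': avoidance is preserved by a disarray-dropping generator. -/
lemma avoid_preserved (hn : 2 ≤ n) {t : ℕ} (ht : t ≤ n) (hw : IsAffineSignedPerm n w)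
    (hav : ¬ GloballyContains321C n w)
    (hdrop : disC n (w * genP n t hn ht) = disC n w - 2) :
    ¬ GloballyContains321C n (w * genP n t hn ht) := by
  intro hc
  obtain ⟨i, j, k, hi, hj, hk, hij, hjk, h1, h2⟩ := hc
  by_cases hpij : genF n t i = j
  · have hsp := pair_straddle hn ht hw hdrop hij hpij
    have hgj := genF_invol_of hn ht hpij
    have e1 : (w * genP n t hn ht) i = w j := by
      rw [Equiv.Perm.mul_apply, genP_apply, hpij]
    have e2 : (w * genP n t hn ht) j = w i := by
      rw [Equiv.Perm.mul_apply, genP_apply, hgj]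
    rw [e1, e2] at h1
    omega
  by_cases hpjk : genF n t j = k
  · have hsp := pair_straddle hn ht hw hdrop hjk hpjk
    have hgk := genF_invol_of hn ht hpjk
    have e1 : (w * genP n t hn ht) j = w k := by
      rw [Equiv.Perm.mul_apply, genP_apply, hpjk]
    have e2 : (w * genP n t hn ht) k = w j := by
      rw [Equiv.Perm.mul_apply, genP_apply, hgk]
    rw [e1, e2] at h2
    omega
  · apply hav
    have := pat_transfer hn ht (u := w * genP n t hn ht) hi hj hk hij hjk h1 h2 hpij hpjk
    rw [mul_assoc, genP_mul_self hn ht, mul_one] at this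
    exact this

/-- K1: a 321 pattern persists under a disarray-dropping generator. -/
lemma pattern_preserved (hn : 2 ≤ n) {t : ℕ} (ht : t ≤ n) (hw : IsAffineSignedPerm n w)
    (hcont : GloballyContains321C n w)
    (hdrop : disC n (w * genP n t hn ht) = disC n w - 2) :
    GloballyContains321C n (w * genP n t hn ht) := by
  obtain ⟨i, j, k, hi, hj, hk, hij, hjk, h1, h2⟩ := hcont
  have hA : IsAffineSignedPerm n (w * genP n t hn ht) := asp_mul hw (asp_genP hn ht)
  by_cases hpij : genF n t i = j
  · -- subcase A : the pattern's first two entries are a swapped pair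
    have hsp := pair_straddle hn ht hw hdrop hij hpij
    have hgj := genF_invol_of hn ht hpij
    have e1 : (w * genP n t hn ht) i = w j := by
      rw [Equiv.Perm.mul_apply, genP_apply, hpij]
    have ek : (w * genP n t hn ht) (genF n t k) = w k := mul_genP_genF hn ht w k
    have hik : i < genF n t k := by
      have := op hn ht hj hk hjk (show genF n t j ≠ k by rw [hgj]; omega)
      rwa [hgj] at this
    have h3 : (w * genP n t hn ht) (genF n t k) < (w * genP n t hn ht) i := by
      rw [ek, e1]; omega
    have h4 : (w * genP n t hn ht) i ≤ i := by rw [e1]; exact hsp.2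
    obtain ⟨x, hx1, hx2, hx3⟩ := cl_low hA hik h3 h4
    exact ⟨x, i, genF n t k, hx1, hi, unfrozen_genF hn ht hk, hx2, hik, hx3,
      by rw [ek, e1]; omega⟩
  by_cases hpjk : genF n t j = k
  · -- subcase B : the pattern's last two entries are a swapped pair
    have hsp := pair_straddle hn ht hw hdrop hjk hpjk
    have hgk := genF_invol_of hn ht hpjk
    have ek : (w * genP n t hn ht) k = w j := by
      rw [Equiv.Perm.mul_apply, genP_apply, hgk]
    have ei : (w * genP n t hn ht) (genF n t i) = w i := mul_genP_genF hn ht w i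
    have hik : genF n t i < k := by
      have := op hn ht hi hj hij hpij
      rwa [hpjk] at this
    have h3 : (w * genP n t hn ht) k < (w * genP n t hn ht) (genF n t i) := by
      rw [ek, ei]; omega
    have h4 : k ≤ (w * genP n t hn ht) k := by rw [ek]; exact hsp.1
    obtain ⟨k2, hk1, hk2, hk3⟩ := cl_high hA hik h3 h4
    exact ⟨genF n t i, k, k2, unfrozen_genF hn ht hi, hk, hk1, hik, hk2,
      by rw [ei, ek]; exact h1, hk3⟩
  · exact pat_transfer hn ht hi hj hk hij hjk h1 h2 hpij hpjk

end KLemmas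

section Exists
variable {n : ℕ} {w : Equiv.Perm ℤ}

/-- An increasing (on unfrozen points) element is the identity. -/
lemma inc_eq_one (hn : 2 ≤ n) (hw : IsAffineSignedPerm n w)
    (hinc : ∀ x y : ℤ, ¬ ((n:ℤ)+1) ∣ x → ¬ ((n:ℤ)+1) ∣ y → x < y → w x < w y) :
    w = 1 := by
  have hb := nbig hn
  have key : ∀ x : ℤ, ¬ ((n:ℤ)+1) ∣ x → ¬ (x < w x) := by
    intro x hx hlt
    obtain ⟨D, hD0, hbd⟩ := asp_bound hw
    have hbal := bal hw hbd x (w x - 1)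
    have hA : setA w D x (w x - 1) = {x} := by
      ext z
      rw [mem_setA hbd, Finset.mem_singleton]
      constructor
      · rintro ⟨h1, h2⟩
        by_contra hne
        have hzx : z < x := by omega
        by_cases hz : ((n:ℤ)+1) ∣ z
        · have := asp_frozen hw hz
          omega
        · have := hinc z x hz hx hzx
          omega
      · rintro rfl
        exact ⟨le_refl _, by omega⟩
    have hBsub : setB w D x (w x - 1) ⊆ Finset.Ioc x (w x - 1) := by
      intro z hz
      rw [mem_setB hbd] at hz
      rw [Finset.mem_Ioc]
      by_cases hzf : ((n:ℤ)+1) ∣ z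
      · have := asp_frozen hw hzf
        omega
      · have := hinc x z hx hzf hz.1
        omega
    have hBcard : (setB w D x (w x - 1)).card ≤ (w x - 1 - x).toNat := by
      calc _ ≤ (Finset.Ioc x (w x - 1)).card := Finset.card_le_card hBsub
      _ = (w x - 1 - x).toNat := Int.card_Ioc _ _
    rw [hA, Finset.card_singleton] at hbal
    have : ((w x - 1 - x).toNat : ℤ) = w x - 1 - x := by omega
    omega
  have key2 : ∀ x : ℤ, ¬ ((n:ℤ)+1) ∣ x → w x = x := by
    intro x hx
    have h1 := key x hx
    have h2 := key (-x) (by simpa using hx)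
    rw [asp_neg hw] at h2
    omega
  ext x
  by_cases hx : ((n:ℤ)+1) ∣ x
  · rw [asp_frozen hw hx]; rfl
  · rw [key2 x hx]; rfl

lemma exists_drop (hn : 2 ≤ n) (hw : IsAffineSignedPerm n w)
    (hav : ¬ GloballyContains321C n w) (hne : w ≠ 1) :
    ∃ (t : ℕ) (ht : t ≤ n), disC n (w * genP n t hn ht) = disC n w - 2 := by
  have hb := nbig hn
  by_contra hc
  push_neg at hc
  -- step 1 : boundary facts
  have hz : 1 ≤ w 1 := by
    have h := disDrop_zero hn (by omega) hw
    by_cases hcc : w 1 ≤ -1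
    · rw [if_pos hcc] at h
      exact absurd h (hc 0 (by omega))
    · push_neg at hcc
      have : w 1 ≠ 0 := fun h0 =>
        asp_unfrozen hw (unfrozen_one hn) (h0 ▸ dvd_zero _)
      omega
  have htp : w (n:ℤ) ≤ (n:ℤ) := by
    have h := disDrop_top hn (le_refl n) hw
    by_cases hcc : (n:ℤ) + 2 ≤ w (n:ℤ)
    · rw [if_pos hcc] at h
      exact absurd h (hc n (le_refl n))
    · push_neg at hcc
      have : w (n:ℤ) ≠ (n:ℤ) + 1 := by
        intro h0
        apply asp_unfrozen hw (not_dvd_small hn (by omega) (by omega) : ¬ ((n:ℤ)+1) ∣ (n:ℤ))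
        rw [h0]
      omega
  -- step 2 : middle ascents
  have hmid : ∀ r : ℤ, 1 ≤ r → r ≤ (n:ℤ) - 1 → w r < w (r + 1) := by
    intro r hr1 hr2
    set t : ℕ := r.toNat with htdef
    have htr : (t:ℤ) = r := by omega
    have h0 : t ≠ 0 := by omega
    have hN : t ≠ n := by omega
    have ht : t ≤ n := by omega
    by_contra hcc
    push_neg at hcc
    have hne' : w (r+1) ≠ w r := fun h => by
      have := w.injective h; omega
    have hdesc : w (r+1) < w r := by omega
    have hrun : ¬ ((n:ℤ)+1) ∣ r := not_dvd_small hn (by omega) (by omega)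
    have hr1un : ¬ ((n:ℤ)+1) ∣ (r+1) := not_dvd_small hn (by omega) (by omega)
    by_cases hhigh : r + 1 ≤ w (r+1)
    · -- high descent : pattern (r, r+1, k)
      obtain ⟨k, hk1, hk2, hk3⟩ := cl_high hw (show r < r+1 by omega) hdesc hhigh
      exact hav ⟨r, r+1, k, hrun, hr1un, hk1, by omega, hk2, hdesc, hk3⟩
    · push_neg at hhigh
      by_cases hlow : w r ≤ r
      · obtain ⟨x, hx1, hx2, hx3⟩ := cl_low hw (show r < r+1 by omega) hdesc hlow
        exact hav ⟨x, r, r+1, hx1, hrun, hr1un, hx2, by omega, hx3, hdesc⟩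
      · -- straddling descent : dis drops, contradiction
        push_neg at hlow
        apply hc t ht
        rw [disDrop_mid hn h0 hN ht hw, if_pos (by rw [htr]; exact ⟨by omega, by omega⟩)]
        ring
  -- step 3 : adjacent ascents everywhere
  have hadj : ∀ x : ℤ, ¬ ((n:ℤ)+1) ∣ x → ¬ ((n:ℤ)+1) ∣ (x+1) → w x < w (x+1) := by
    intro x hx hx1
    have hPpos : (0:ℤ) < 2*((n:ℤ)+1) := by positivity
    set r : ℤ := x % (2*((n:ℤ)+1)) with hrdef
    have hr0 : 0 ≤ r := Int.emod_nonneg x (by omega)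
    have hrP : r < 2*((n:ℤ)+1) := Int.emod_lt_of_pos x hPpos
    have hxr : x = r + (x / (2*((n:ℤ)+1))) * (2*((n:ℤ)+1)) := by
      rw [hrdef, add_comm, mul_comm]; exact (Int.mul_ediv_add_emod x _).symm
    have e1 : w x = w r + (x / (2*((n:ℤ)+1))) * (2*((n:ℤ)+1)) := by
      have h := asp_period_mul hw (x / (2*((n:ℤ)+1))) r
      rw [← hxr] at h
      exact h
    have e2 : w (x+1) = w (r+1) + (x / (2*((n:ℤ)+1))) * (2*((n:ℤ)+1)) := by
      rw [show x + 1 = (r+1) + (x / (2*((n:ℤ)+1))) * (2*((n:ℤ)+1)) from by omega]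
      exact asp_period_mul hw _ (r+1)
    -- x ≡ r, x+1 ≡ r+1 mod P ; unfrozen transfers
    have hrun : ¬ ((n:ℤ)+1) ∣ r := by
      intro hd
      exact hx (by
        rw [hxr]
        exact dvd_add hd ⟨(x / (2*((n:ℤ)+1))) * 2, by ring⟩)
    have hr1un : ¬ ((n:ℤ)+1) ∣ (r+1) := by
      intro hd
      exact hx1 (by
        rw [show x + 1 = (r+1) + (x / (2*((n:ℤ)+1))) * (2*((n:ℤ)+1)) from by omega]
        exact dvd_add hd ⟨(x / (2*((n:ℤ)+1))) * 2, by ring⟩)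
    rw [e1, e2]
    have hgoal : w r < w (r+1) := by
      have hne0 : r ≠ 0 := by
        intro h; rw [h] at hrun; exact hrun (dvd_zero _)
      have hneN : r ≠ (n:ℤ) + 1 := by
        intro h; rw [h] at hrun; exact hrun (dvd_refl _)
      have hnen : r ≠ (n:ℤ) := by
        intro h; rw [h] at hr1un; exact hr1un ⟨1, by ring⟩
      have hneP : r ≠ 2*((n:ℤ)+1) - 1 := by
        intro h
        apply hr1un
        rw [h, show 2*((n:ℤ)+1) - 1 + 1 = ((n:ℤ)+1) * 2 from by ring]
        exact ⟨2, rfl⟩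
      rcases (show (1 ≤ r ∧ r ≤ (n:ℤ) - 1) ∨ ((n:ℤ)+2 ≤ r ∧ r ≤ 2*((n:ℤ)+1) - 2) from by
        omega) with ⟨ha, hb'⟩ | ⟨ha, hb'⟩
      · exact hmid r ha hb'
      · -- mirror : use w r = -w (2N - r) + 2N etc.
        have m1 : w r = 2*((n:ℤ)+1) - w (2*((n:ℤ)+1) - r) := by
          have := asp_refl hw (2*((n:ℤ)+1) - r)
          rw [show 2*((n:ℤ)+1) - (2*((n:ℤ)+1) - r) = r from by ring] at this
          omega
        have m2 : w (r+1) = 2*((n:ℤ)+1) - w (2*((n:ℤ)+1) - r - 1) := by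
          have := asp_refl hw (2*((n:ℤ)+1) - r - 1)
          rw [show 2*((n:ℤ)+1) - (2*((n:ℤ)+1) - r - 1) = r + 1 from by ring] at this
          omega
        have hs : w (2*((n:ℤ)+1) - r - 1) < w (2*((n:ℤ)+1) - r - 1 + 1) := by
          apply hmid _ (by omega) (by omega)
        rw [show 2*((n:ℤ)+1) - r - 1 + 1 = 2*((n:ℤ)+1) - r from by ring] at hs
        omega
    omega
  -- step 3b : ascents across frozen points
  have hadj2 : ∀ x : ℤ, ¬ ((n:ℤ)+1) ∣ x → ((n:ℤ)+1) ∣ (x+1) → w x < w (x+2) := by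
    intro x hx hd
    obtain ⟨k, hk⟩ := hd
    rcases Int.even_or_odd k with ⟨m, hm⟩ | ⟨m, hm⟩
    · -- x ≡ -1 mod P : pair (-1, 1) translated
      have hx' : x = -1 + m * (2*((n:ℤ)+1)) := by
        rw [hm] at hk; linear_combination hk
      have e1 : w x = w (-1) + m * (2*((n:ℤ)+1)) := by
        rw [show x = -1 + m * (2*((n:ℤ)+1)) from hx']
        exact asp_period_mul hw m (-1)
      have e2 : w (x+2) = w 1 + m * (2*((n:ℤ)+1)) := by
        rw [show x + 2 = 1 + m * (2*((n:ℤ)+1)) from by omega]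
        exact asp_period_mul hw m 1
      have e3 : w (-1) = -(w 1) := asp_neg hw 1
      omega
    · -- x ≡ n mod P : pair (n, n+2) translated
      have hx' : x = (n:ℤ) + m * (2*((n:ℤ)+1)) := by
        rw [hm] at hk; linear_combination hk
      have e1 : w x = w (n:ℤ) + m * (2*((n:ℤ)+1)) := by
        rw [show x = (n:ℤ) + m * (2*((n:ℤ)+1)) from hx']
        exact asp_period_mul hw m (n:ℤ)
      have e2 : w (x+2) = w ((n:ℤ)+2) + m * (2*((n:ℤ)+1)) := by
        rw [show x + 2 = ((n:ℤ)+2) + m * (2*((n:ℤ)+1)) from by omega]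
        exact asp_period_mul hw m ((n:ℤ)+2)
      have e3 : w ((n:ℤ)+2) = 2*((n:ℤ)+1) - w (n:ℤ) := asp_top_val hn hw
      omega
  -- step 4 : increasing on unfrozen
  have hincd : ∀ d : ℕ, ∀ x y : ℤ, ¬ ((n:ℤ)+1) ∣ x → ¬ ((n:ℤ)+1) ∣ y → x < y →
      y - x ≤ (d:ℤ) → w x < w y := by
    intro d
    induction d with
    | zero => intro x y _ _ hxy hle; omega
    | succ d ih =>
        intro x y hx hy hxy hle
        by_cases hfx1 : ((n:ℤ)+1) ∣ (x+1)
        · rcases eq_or_lt_of_le (show x + 1 ≤ y from by omega) with hh | hh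
          · exact absurd (hh ▸ hfx1) hy
          · have h2 : w x < w (x+2) := hadj2 x hx hfx1
            have hx2un : ¬ ((n:ℤ)+1) ∣ (x+2) := by
              intro hdd
              have hsub := dvd_sub hdd hfx1
              rw [show x + 2 - (x+1) = 1 from by ring] at hsub
              have := Int.le_of_dvd (by norm_num) hsub
              omega
            rcases eq_or_lt_of_le (show x + 2 ≤ y from by omega) with hh2 | hh2
            · rw [← hh2]; exact h2
            · exact h2.trans (ih (x+2) y hx2un hy hh2 (by omega))
        · have h1 : w x < w (x+1) := hadj x hx hfx1
          rcases eq_or_lt_of_le (show x + 1 ≤ y from by omega) with hh | hh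
          · rw [← hh]; exact h1
          · exact h1.trans (ih (x+1) y hfx1 hy hh (by omega))
  have hinc : ∀ x y : ℤ, ¬ ((n:ℤ)+1) ∣ x → ¬ ((n:ℤ)+1) ∣ y → x < y → w x < w y := by
    intro x y hx hy hxy
    exact hincd (y - x).toNat x y hx hy hxy (by omega)
  have := inc_eq_one hn hw hinc
  exact hne this

end Exists

section Main
variable {n : ℕ}

lemma disC_one : disC n 1 = 0 := by
  unfold disC
  apply Finset.sum_eq_zero
  intro i _
  simp

lemma disC_nonneg (w : Equiv.Perm ℤ) : 0 ≤ disC n w :=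
  Finset.sum_nonneg (fun i _ => abs_nonneg _)

lemma disC_zero_imp (hn : 2 ≤ n) {w : Equiv.Perm ℤ} (hw : IsAffineSignedPerm n w)
    (h : disC n w = 0) : w = 1 := by
  have hall := (Finset.sum_eq_zero_iff_of_nonneg (fun i _ => abs_nonneg _)).mp h
  apply asp_ext_window hw asp_one
  intro i hi1 hi2
  have := hall i (by rw [Finset.mem_Icc]; exact ⟨hi1, hi2⟩)
  have : w i = i := by
    have h2 := abs_eq_zero.mp this
    omega
  rw [this]; rfl

lemma not_contains_one : ¬ GloballyContains321C n 1 := by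
  rintro ⟨i, j, k, _, _, _, hij, hjk, h1, h2⟩
  simp only [Equiv.Perm.one_apply] at h1 h2
  omega

lemma isGenC_le (hn : 2 ≤ n) {t : ℕ} {σ : Equiv.Perm ℤ} (h : IsGenC n t σ) : t ≤ n := by
  by_cases h0 : t = 0
  · omega
  by_cases hN : t = n
  · omega
  · have := h.2
    rw [if_neg h0, if_neg hN] at this
    exact le_of_lt this.1

lemma forall2_asp : ∀ {l : List ℕ} {σs : List (Equiv.Perm ℤ)},
    List.Forall₂ (IsGenC n) l σs → ∀ σ ∈ σs, IsAffineSignedPerm n σ := by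
  intro l σs h
  induction h with
  | nil => intro σ hσ; cases hσ
  | cons h1 h2 ih =>
      intro σ hσ
      rcases List.mem_cons.mp hσ with rfl | hσ
      · exact h1.1
      · exact ih σ hσ

lemma asp_prod : ∀ {σs : List (Equiv.Perm ℤ)},
    (∀ σ ∈ σs, IsAffineSignedPerm n σ) → IsAffineSignedPerm n σs.prod := by
  intro σs
  induction σs with
  | nil => intro _; rw [List.prod_nil]; exact asp_one
  | cons σ σs ih =>
      intro h
      rw [List.prod_cons]
      exact asp_mul (h σ List.mem_cons_self) (ih (fun τ hτ => h τ (List.mem_cons_of_mem σ hτ)))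

lemma forall2_concat {l : List ℕ} {a : ℕ} {s : List (Equiv.Perm ℤ)}
    (h : List.Forall₂ (IsGenC n) (l ++ [a]) s) :
    ∃ (s' : List (Equiv.Perm ℤ)) (σ : Equiv.Perm ℤ),
      s = s' ++ [σ] ∧ List.Forall₂ (IsGenC n) l s' ∧ IsGenC n a σ := by
  induction l generalizing s with
  | nil =>
      cases h with
      | cons h1 h2 =>
          cases h2
          exact ⟨[], _, rfl, List.Forall₂.nil, h1⟩
  | cons b l ih =>
      cases h with
      | cons h1 h2 =>
          obtain ⟨s', σ, rfl, hf, hr⟩ := ih h2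
          exact ⟨_ :: s', σ, rfl, List.Forall₂.cons h1 hf, hr⟩

lemma forall2_concat_intro {l : List ℕ} {a : ℕ} {s : List (Equiv.Perm ℤ)}
    {σ : Equiv.Perm ℤ} (h : List.Forall₂ (IsGenC n) l s) (ha : IsGenC n a σ) :
    List.Forall₂ (IsGenC n) (l ++ [a]) (s ++ [σ]) := by
  induction h with
  | nil => exact List.Forall₂.cons ha List.Forall₂.nil
  | cons h1 _ ih => exact List.Forall₂.cons h1 ih

lemma dis_change (hn : 2 ≤ n) {t : ℕ} (ht : t ≤ n) {w : Equiv.Perm ℤ}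
    (hw : IsAffineSignedPerm n w) :
    disC n (w * genP n t hn ht) = disC n w + 2 ∨
    disC n (w * genP n t hn ht) = disC n w - 2 ∨
    disC n (w * genP n t hn ht) = disC n w := by
  by_cases h0 : t = 0
  · subst h0
    have h := disDrop_zero hn ht hw
    by_cases hc : w 1 ≤ -1
    · rw [if_pos hc] at h; right; left; omega
    · rw [if_neg hc] at h; left; omega
  by_cases hN : t = n
  · have h := disDrop_top hn (le_refl n) hw
    rw [← genP_eq_of hn hN ht (le_refl n)] at h
    by_cases hc : (n:ℤ) + 2 ≤ w (n:ℤ)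
    · rw [if_pos hc] at h; right; left; omega
    · rw [if_neg hc] at h; left; omega
  · have h := disDrop_mid hn h0 hN ht hw
    by_cases hc : (t:ℤ) + 1 ≤ w (t:ℤ) ∧ w ((t:ℤ)+1) ≤ (t:ℤ)
    · rw [if_pos hc] at h; right; left; omega
    · rw [if_neg hc] at h
      by_cases hc2 : w (t:ℤ) ≤ (t:ℤ) ∧ (t:ℤ) + 1 ≤ w ((t:ℤ)+1)
      · rw [if_pos hc2] at h; left; omega
      · rw [if_neg hc2] at h; right; right; omega

lemma word_dis_aux (hn : 2 ≤ n) :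
    ∀ (l : List ℕ) (σs : List (Equiv.Perm ℤ)), List.Forall₂ (IsGenC n) l σs →
      disC n σs.prod ≤ 2 * (l.length : ℤ) := by
  intro l
  induction l using List.reverseRecOn with
  | nil =>
      intro σs h
      cases h
      rw [List.prod_nil, disC_one]
      simp
  | append_singleton l a ih =>
      intro σs h
      obtain ⟨s', σ, rfl, hf, hr⟩ := forall2_concat h
      have ha : a ≤ n := isGenC_le hn hr
      have hσ : σ = genP n a hn ha := genC_eq hn ha hr
      have hv : IsAffineSignedPerm n s'.prod := asp_prod (forall2_asp hf)
      rw [List.prod_append, List.prod_singleton, hσ]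
      have h3 := dis_change hn ha hv
      have h4 := ih s' hf
      rw [List.length_append, List.length_singleton]
      push_cast
      omega

lemma word_dis (hn : 2 ≤ n) {w : Equiv.Perm ℤ} {l : List ℕ} (h : IsWordC n w l) :
    disC n w ≤ 2 * (l.length : ℤ) := by
  obtain ⟨_, σs, hf, rfl⟩ := h
  exact word_dis_aux hn l σs hf

lemma word_strict_aux (hn : 2 ≤ n) :
    ∀ (l : List ℕ) (σs : List (Equiv.Perm ℤ)), List.Forall₂ (IsGenC n) l σs →
      GloballyContains321C n σs.prod →
      disC n σs.prod < 2 * (l.length : ℤ) := by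
  intro l
  induction l using List.reverseRecOn with
  | nil =>
      intro σs h hcont
      cases h
      rw [List.prod_nil] at hcont
      exact absurd hcont not_contains_one
  | append_singleton l a ih =>
      intro σs h hcont
      obtain ⟨s', σ, rfl, hf, hr⟩ := forall2_concat h
      have ha : a ≤ n := isGenC_le hn hr
      have hσ : σ = genP n a hn ha := genC_eq hn ha hr
      have hv : IsAffineSignedPerm n s'.prod := asp_prod (forall2_asp hf)
      rw [List.prod_append, List.prod_singleton, hσ] at hcont ⊢
      rw [List.length_append, List.length_singleton]
      set v : Equiv.Perm ℤ := s'.prod with hvdef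
      have hw : IsAffineSignedPerm n (v * genP n a hn ha) := asp_mul hv (asp_genP hn ha)
      have hback : (v * genP n a hn ha) * genP n a hn ha = v := by
        rw [mul_assoc, genP_mul_self hn ha, mul_one]
      rcases dis_change hn ha hv with hch | hch | hch
      · -- dis rose by 2 : so multiplying back drops
        have hdrop : disC n ((v * genP n a hn ha) * genP n a hn ha) =
            disC n (v * genP n a hn ha) - 2 := by rw [hback]; omega
        have hcv : GloballyContains321C n v := by
          have := pattern_preserved hn ha hw hcont hdrop
          rwa [hback] at this
        have hlt := ih s' hf hcv
        rw [← hvdef] at hlt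
        push_cast
        omega
      · have hle := word_dis_aux hn l s' hf
        rw [← hvdef] at hle
        push_cast
        omega
      · have hle := word_dis_aux hn l s' hf
        rw [← hvdef] at hle
        push_cast
        omega

lemma word_exists_aux (hn : 2 ≤ n) :
    ∀ (d : ℕ) (w : Equiv.Perm ℤ), IsAffineSignedPerm n w →
      ¬ GloballyContains321C n w → disC n w ≤ (d:ℤ) →
      ∃ l : List ℕ, IsWordC n w l ∧ 2 * (l.length : ℤ) = disC n w := by
  intro d
  induction d with
  | zero =>
      intro w hw hav hd
      have h0 : disC n w = 0 := le_antisymm (by exact_mod_cast hd) (disC_nonneg (n := n) w)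
      have := disC_zero_imp hn hw h0
      subst this
      exact ⟨[], ⟨by simp, [], List.Forall₂.nil, rfl⟩, by rw [h0]; simp⟩
  | succ d ih =>
      intro w hw hav hd
      by_cases hne : w = 1
      · subst hne
        exact ⟨[], ⟨by simp, [], List.Forall₂.nil, rfl⟩, by rw [disC_one]; simp⟩
      · obtain ⟨t, ht, hdrop⟩ := exists_drop hn hw hav hne
        set v : Equiv.Perm ℤ := w * genP n t hn ht with hvdef
        have hv : IsAffineSignedPerm n v := asp_mul hw (asp_genP hn ht)
        have havv : ¬ GloballyContains321C n v := avoid_preserved hn ht hw hav hdrop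
        have hdv : disC n v ≤ (d:ℤ) := by
          have := disC_nonneg (n := n) v
          push_cast
          omega
        obtain ⟨l', ⟨hlet, σs', hf, hprod⟩, hlen⟩ := ih v hv havv hdv
        refine ⟨l' ++ [t], ⟨?_, σs' ++ [genP n t hn ht], ?_, ?_⟩, ?_⟩
        · intro i hi
          rcases List.mem_append.mp hi with hi | hi
          · exact hlet i hi
          · rw [List.mem_singleton] at hi; omega
        · exact forall2_concat_intro hf (isGenC_genP hn ht)
        · rw [List.prod_append, List.prod_singleton, hprod, hvdef,
            mul_assoc, genP_mul_self hn ht, mul_one]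
        · rw [List.length_append, List.length_singleton]
          push_cast
          omega


theorem stmt_9 (n : ℕ) (hn : 2 ≤ n) (w : Equiv.Perm ℤ)
    (hw : IsAffineSignedPerm n w) :
    disC n w = 2 * (lenC n w : ℤ) ↔ ¬ GloballyContains321C n w := by
  constructor
  · intro heq hcont
    by_cases hS : {m | ∃ l : List ℕ, IsWordC n w l ∧ l.length = m}.Nonempty
    · have hmem := Nat.sInf_mem hS
      obtain ⟨l, hword, hlen⟩ := hmem
      have hstrict : disC n w < 2 * (l.length : ℤ) := by
        obtain ⟨_, σs, hf, hprod⟩ := hword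
        have := word_strict_aux hn l σs hf (by rw [hprod]; exact hcont)
        rw [hprod] at this
        exact this
      rw [heq] at hstrict
      unfold lenC at hstrict
      rw [hlen] at hstrict
      omega
    · have hempty : {m | ∃ l : List ℕ, IsWordC n w l ∧ l.length = m} = ∅ :=
        Set.not_nonempty_iff_eq_empty.mp hS
      have hlen0 : lenC n w = 0 := by unfold lenC; rw [hempty]; exact Nat.sInf_empty
      rw [hlen0] at heq
      simp at heq
      have := disC_zero_imp hn hw heq
      subst this
      exact not_contains_one hcont
  · intro hav
    obtain ⟨l, hword, hlen⟩ := word_exists_aux hn (disC n w).toNat w hw hav (by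
      have := disC_nonneg (n := n) w; omega)
    have hmem : l.length ∈ {m | ∃ l' : List ℕ, IsWordC n w l' ∧ l'.length = m} :=
      ⟨l, hword, rfl⟩
    have h1 : lenC n w ≤ l.length := Nat.sInf_le hmem
    have hS : {m | ∃ l' : List ℕ, IsWordC n w l' ∧ l'.length = m}.Nonempty := ⟨_, hmem⟩
    obtain ⟨l0, hword0, hlen0⟩ := Nat.sInf_mem hS
    have h2 : disC n w ≤ 2 * (l0.length : ℤ) := word_dis hn hword0
    have h3 : (l0.length : ℤ) = (lenC n w : ℤ) := by
      unfold lenC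
      rw [hlen0]
    omega

end Main

end Stmt9
end

section
/- Let n ≥ 2 and let w be an element of the affine signed permutation group 𝑆̃^C_n. Then no reduced word for w contains three consecutive letters i (i±1) i for some i ∈ {1,…,n−1} if and only if in every reduced word for w, for every i ∈ {1,…,n−1}, any two occurrences of the letter i are separated by at least one occurrence of the letter i−1 and at least one occurrence of the letter i+1. -/
namespace Stmt11

/-- `w` is an element of the affine signed permutation group `𝑆̃^C_n`:
a bijection of `ℤ` with `w(-i) = -w(i)` and `w(2(n+1) - i) = 2(n+1) - w(i)`
for all `i ∈ ℤ`. -/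
def IsAffineSignedPerm (n : ℕ) (w : Equiv.Perm ℤ) : Prop :=
  (∀ i : ℤ, w (-i) = -(w i)) ∧
    ∀ i : ℤ, w (2 * ((n : ℤ) + 1) - i) = 2 * ((n : ℤ) + 1) - w i

/-- `σ` is the Coxeter generator `sᵢ` of `𝑆̃^C_n`: the unique element of the
group determined on the window `{1, …, n}` by: for `1 ≤ i ≤ n-1`, `sᵢ`
interchanges `i` and `i+1` and fixes every other element of the window;
`s₀` sends `1` to `-1` and fixes `{2, …, n}`; `s_n` sends `n` to `n+2` and
fixes `{1, …, n-1}`. -/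
def IsGenC (n : ℕ) (i : ℕ) (σ : Equiv.Perm ℤ) : Prop :=
  IsAffineSignedPerm n σ ∧
    if i = 0 then
      σ 1 = -1 ∧ ∀ j : ℤ, 2 ≤ j → j ≤ (n : ℤ) → σ j = j
    else if i = n then
      σ (n : ℤ) = (n : ℤ) + 2 ∧ ∀ j : ℤ, 1 ≤ j → j ≤ (n : ℤ) - 1 → σ j = j
    else
      i < n ∧ σ (i : ℤ) = (i : ℤ) + 1 ∧ σ ((i : ℤ) + 1) = (i : ℤ) ∧
        ∀ j : ℤ, 1 ≤ j → j ≤ (n : ℤ) → j ≠ (i : ℤ) → j ≠ (i : ℤ) + 1 → σ j = j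

/-- `l` is a word for `w` in the letters `{0, …, n}`:
`w = s_{i₁} ⋯ s_{i_ℓ}` where `l = [i₁, …, i_ℓ]`. -/
def IsWordC (n : ℕ) (w : Equiv.Perm ℤ) (l : List ℕ) : Prop :=
  (∀ i ∈ l, i ≤ n) ∧
    ∃ σs : List (Equiv.Perm ℤ), List.Forall₂ (IsGenC n) l σs ∧ σs.prod = w

/-- The Coxeter length of `w`: the minimal length of a word for `w`. -/
noncomputable def lenC (n : ℕ) (w : Equiv.Perm ℤ) : ℕ :=
  sInf {m | ∃ l : List ℕ, IsWordC n w l ∧ l.length = m}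

/-- The disarray `dis(w) = ∑_{i=1}^n |w(i) - i|`. -/
noncomputable def disC (n : ℕ) (w : Equiv.Perm ℤ) : ℤ :=
  ∑ i ∈ Finset.Icc (1 : ℤ) (n : ℤ), |w i - i|

/-- The unfrozen integers for `𝑆̃^C_n` are those that are not multiples of `n + 1`. -/
def UnfrozenC (n : ℕ) (i : ℤ) : Prop := ¬ ((n : ℤ) + 1 ∣ i)

/-- `w` globally contains the pattern `321`: there are unfrozen integers
`i < j < k` with `w(i) > w(j) > w(k)`. -/
def GloballyContains321C (n : ℕ) (w : Equiv.Perm ℤ) : Prop :=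
  ∃ i j k : ℤ, UnfrozenC n i ∧ UnfrozenC n j ∧ UnfrozenC n k ∧
    i < j ∧ j < k ∧ w i > w j ∧ w j > w k

/-- `l` is a reduced word for `w`. -/
def IsReducedWordC (n : ℕ) (w : Equiv.Perm ℤ) (l : List ℕ) : Prop :=
  IsWordC n w l ∧ l.length = lenC n w

/-- `l` contains three consecutive letters of the form `i (i±1) i` for some
`i ∈ {1, …, n-1}`. -/
def HasBadFactorC (n : ℕ) (l : List ℕ) : Prop :=
  ∃ i j : ℕ, 1 ≤ i ∧ i + 1 ≤ n ∧ (j = i + 1 ∨ i = j + 1) ∧ [i, j, i] <:+: l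

/-- In `l`, for every `i ∈ {1, …, n-1}`, any two occurrences of the letter `i`
are separated by at least one occurrence of the letter `i-1` and at least one
occurrence of the letter `i+1`. -/
def SeparatedOccurrencesC (n : ℕ) (l : List ℕ) : Prop :=
  ∀ i : ℕ, 1 ≤ i → i + 1 ≤ n →
    ∀ p q : Fin l.length, p < q → l.get p = i → l.get q = i →
      (∃ r : Fin l.length, p < r ∧ r < q ∧ l.get r + 1 = i) ∧
      (∃ r : Fin l.length, p < r ∧ r < q ∧ l.get r = i + 1)

/-! ### Auxiliary lemmas on affine signed permutations -/

section Aux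

variable {n a b : ℕ} {σ τ w u v : Equiv.Perm ℤ} {A B M l : List ℕ}

lemma asp_one : IsAffineSignedPerm n 1 := ⟨fun _ => rfl, fun _ => rfl⟩

lemma asp_mul (hσ : IsAffineSignedPerm n σ) (hτ : IsAffineSignedPerm n τ) :
    IsAffineSignedPerm n (σ * τ) := by
  constructor
  · intro i
    simp only [Equiv.Perm.mul_apply, hτ.1 i, hσ.1 (τ i)]
  · intro i
    simp only [Equiv.Perm.mul_apply, hτ.2 i, hσ.2 (τ i)]

lemma asp_zero (hσ : IsAffineSignedPerm n σ) : σ 0 = 0 := by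
  have := hσ.1 0; simp at this; omega

lemma asp_mid (hσ : IsAffineSignedPerm n σ) : σ ((n : ℤ) + 1) = (n : ℤ) + 1 := by
  have := hσ.2 ((n : ℤ) + 1)
  have h : 2 * ((n : ℤ) + 1) - ((n:ℤ)+1) = (n:ℤ)+1 := by ring
  rw [h] at this; omega

lemma asp_period (hσ : IsAffineSignedPerm n σ) (i : ℤ) :
    σ (i + 2 * ((n : ℤ) + 1)) = σ i + 2 * ((n : ℤ) + 1) := by
  have h1 := hσ.1 i
  have h2 := hσ.2 (-i)
  have h : 2 * ((n : ℤ) + 1) - (-i) = i + 2 * ((n:ℤ)+1) := by ring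
  rw [h, h1] at h2; omega

lemma asp_periodk (hσ : IsAffineSignedPerm n σ) (k i : ℤ) :
    σ (i + 2 * ((n : ℤ) + 1) * k) = σ i + 2 * ((n : ℤ) + 1) * k := by
  induction k using Int.induction_on with
  | zero => simp
  | succ k ih =>
      have := asp_period hσ (i + 2 * ((n : ℤ) + 1) * k)
      have h : i + 2 * ((n:ℤ)+1) * k + 2*((n:ℤ)+1) = i + 2 * ((n:ℤ)+1) * (k+1) := by ring
      rw [h] at this; omega
  | pred k ih =>
      have := asp_period hσ (i + 2 * ((n : ℤ) + 1) * (-(k:ℤ)-1))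
      have h : i + 2 * ((n:ℤ)+1) * (-(k:ℤ)-1) + 2*((n:ℤ)+1) = i + 2 * ((n:ℤ)+1) * (-(k:ℤ)) := by ring
      rw [h] at this; omega

lemma asp_ext (hσ : IsAffineSignedPerm n σ) (hτ : IsAffineSignedPerm n τ)
    (h : ∀ j : ℤ, 1 ≤ j → j ≤ (n : ℤ) → σ j = τ j) : σ = τ := by
  have key : ∀ r : ℤ, 0 ≤ r → r < 2 * ((n:ℤ)+1) → σ r = τ r := by
    intro r hr0 hr1
    rcases lt_trichotomy r ((n:ℤ)+1) with hlt | heq | hgt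
    · rcases eq_or_lt_of_le hr0 with h0 | h0
      · rw [← h0, asp_zero hσ, asp_zero hτ]
      · exact h r h0 (by omega)
    · rw [heq, asp_mid hσ, asp_mid hτ]
    · have h2σ := hσ.2 (2 * ((n:ℤ)+1) - r)
      have h2τ := hτ.2 (2 * ((n:ℤ)+1) - r)
      have he : 2 * ((n:ℤ)+1) - (2 * ((n:ℤ)+1) - r) = r := by ring
      rw [he] at h2σ h2τ
      have := h (2 * ((n:ℤ)+1) - r) (by omega) (by omega)
      omega
  ext i
  have hm : (0:ℤ) < 2 * ((n:ℤ)+1) := by positivity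
  have hd := Int.emod_add_mul_ediv i (2 * ((n:ℤ)+1))
  have hσi := asp_periodk hσ (i / (2 * ((n:ℤ)+1))) (i % (2 * ((n:ℤ)+1)))
  have hτi := asp_periodk hτ (i / (2 * ((n:ℤ)+1))) (i % (2 * ((n:ℤ)+1)))
  rw [hd] at hσi hτi
  have := key (i % (2 * ((n:ℤ)+1))) (Int.emod_nonneg i (by omega)) (Int.emod_lt_of_pos i hm)
  omega

/-! ### Values of the generators -/

lemma gen0 (h : IsGenC n 0 σ) :
    σ 1 = -1 ∧ ∀ j : ℤ, 2 ≤ j → j ≤ (n : ℤ) → σ j = j := by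
  have := h.2; simpa using this

lemma genn (hn : 2 ≤ n) (h : IsGenC n n σ) :
    σ (n : ℤ) = (n : ℤ) + 2 ∧ ∀ j : ℤ, 1 ≤ j → j ≤ (n : ℤ) - 1 → σ j = j := by
  have := h.2
  rw [if_neg (by omega), if_pos rfl] at this; exact this

lemma genm (h : IsGenC n a σ) (ha : a ≠ 0) (han : a ≠ n) :
    a < n ∧ σ (a : ℤ) = (a : ℤ) + 1 ∧ σ ((a : ℤ) + 1) = (a : ℤ) ∧
      ∀ j : ℤ, 1 ≤ j → j ≤ (n : ℤ) → j ≠ (a : ℤ) → j ≠ (a : ℤ) + 1 → σ j = j := by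
  have := h.2
  rw [if_neg ha, if_neg han] at this; exact this

lemma sig_np2 (h : IsAffineSignedPerm n σ) :
    σ ((n : ℤ) + 2) = 2 * ((n : ℤ) + 1) - σ (n : ℤ) := by
  have := h.2 (n : ℤ)
  rw [show (2 * ((n:ℤ)+1) - (n:ℤ)) = (n:ℤ)+2 by ring] at this; exact this

set_option linter.unusedTactic false in
lemma gen_comm (hn : 2 ≤ n) (hab : a + 2 ≤ b) (hb : b ≤ n)
    (hσ : IsGenC n a σ) (hτ : IsGenC n b τ) : σ * τ = τ * σ := by
  have hb0 : b ≠ 0 := by omega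
  have han : a ≠ n := by omega
  apply asp_ext (asp_mul hσ.1 hτ.1) (asp_mul hτ.1 hσ.1)
  intro j hj1 hjn
  simp only [Equiv.Perm.mul_apply]
  by_cases ha : a = 0
  · subst ha
    obtain ⟨h01, h0f⟩ := gen0 hσ
    by_cases hbn : b = n
    · subst hbn
      obtain ⟨hn1, hnf⟩ := genn hn hτ
      rcases eq_or_lt_of_le hj1 with h1 | h1
      · -- j = 1
        rw [← h1]
        have e1 : τ (1:ℤ) = 1 := hnf 1 le_rfl (by omega)
        have e2 : τ (-1 : ℤ) = -1 := by
          rw [show (-1 : ℤ) = -(1:ℤ) from rfl, hτ.1.1 1, e1]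
        rw [e1, h01, e2]
      · rcases eq_or_lt_of_le hjn with h2 | h2
        · -- j = n
          subst h2
          have e1 : σ (b:ℤ) = (b:ℤ) := h0f _ (by omega) le_rfl
          have e2 : σ ((b:ℤ) + 2) = (b:ℤ) + 2 := by
            rw [sig_np2 hσ.1, e1]; ring
          rw [hn1, e2, e1, hn1]
        · have e1 : τ j = j := hnf j hj1 (by omega)
          have e2 : σ j = j := h0f j (by omega) (le_of_lt h2)
          rw [e1, e2, e1]
    · obtain ⟨hbltn, hb1, hb2, hbf⟩ := genm hτ hb0 hbn
      by_cases hjb : j = (b : ℤ)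
      · subst hjb
        have e1 : σ ((b:ℤ)+1) = (b:ℤ)+1 := h0f _ (by omega) (by push_cast; omega)
        have e2 : σ (b:ℤ) = (b:ℤ) := h0f _ (by omega) (by push_cast; omega)
        rw [hb1, e1, e2, hb1]
      · by_cases hjb1 : j = (b : ℤ) + 1
        · subst hjb1
          have e1 : σ ((b:ℤ)+1) = (b:ℤ)+1 := h0f _ (by omega) (by push_cast; omega)
          have e2 : σ (b:ℤ) = (b:ℤ) := h0f _ (by omega) (by push_cast; omega)
          rw [hb2, e2, e1, hb2]
        · have e1 : τ j = j := hbf j hj1 hjn hjb hjb1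
          rcases eq_or_lt_of_le hj1 with h1 | h1
          · have e2 : τ (-1 : ℤ) = -1 := by
              rw [show (-1 : ℤ) = -(1:ℤ) from rfl, hτ.1.1 1,
                hbf 1 le_rfl (by omega) (by push_cast; omega) (by push_cast; omega)]
            rw [e1, ← h1, h01, e2]
          · have e2 : σ j = j := h0f j (by omega) hjn
            rw [e1, e2, e1]
  · obtain ⟨haltn, ha1, ha2, haf⟩ := genm hσ ha han
    by_cases hbn : b = n
    · subst hbn
      obtain ⟨hn1, hnf⟩ := genn hn hτ
      by_cases hja : j = (a : ℤ)
      · subst hja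
        have e1 : τ (a:ℤ) = (a:ℤ) := hnf _ (by omega) (by push_cast; omega)
        have e2 : τ ((a:ℤ)+1) = (a:ℤ)+1 := hnf _ (by omega) (by push_cast; omega)
        rw [e1, ha1, e2]
      · by_cases hja1 : j = (a : ℤ) + 1
        · subst hja1
          have e1 : τ (a:ℤ) = (a:ℤ) := hnf _ (by omega) (by push_cast; omega)
          have e2 : τ ((a:ℤ)+1) = (a:ℤ)+1 := hnf _ (by omega) (by push_cast; omega)
          rw [e2, ha2, e1]
        · rcases eq_or_lt_of_le hjn with h2 | h2
          · subst h2
            have e1 : σ (b:ℤ) = (b:ℤ) := haf _ hj1 (le_refl _) hja hja1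
            have e2 : σ ((b:ℤ)+2) = (b:ℤ)+2 := by
              rw [sig_np2 hσ.1, e1]; ring
            rw [hn1, e2, e1, hn1]
          · have e1 : τ j = j := hnf j hj1 (by omega)
            have e2 : σ j = j := haf j hj1 hjn hja hja1
            rw [e1, e2, e1]
    · obtain ⟨hbltn, hb1, hb2, hbf⟩ := genm hτ hb0 hbn
      by_cases hja : j = (a : ℤ)
      · subst hja
        have e1 : τ (a:ℤ) = (a:ℤ) :=
          hbf _ (by omega) (by push_cast; omega) (by push_cast; omega) (by push_cast; omega)
        have e2 : τ ((a:ℤ)+1) = (a:ℤ)+1 :=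
          hbf _ (by omega) (by push_cast; omega) (by push_cast; omega) (by push_cast; omega)
        rw [e1, ha1, e2]
      · by_cases hja1 : j = (a : ℤ) + 1
        · subst hja1
          have e1 : τ (a:ℤ) = (a:ℤ) :=
            hbf _ (by omega) (by push_cast; omega) (by push_cast; omega) (by push_cast; omega)
          have e2 : τ ((a:ℤ)+1) = (a:ℤ)+1 :=
            hbf _ (by omega) (by push_cast; omega) (by push_cast; omega) (by push_cast; omega)
          rw [e2, ha2, e1]
        · by_cases hjb : j = (b : ℤ)
          · subst hjb
            have e1 : σ (b:ℤ) = (b:ℤ) :=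
              haf _ (by omega) (by push_cast; omega) (by push_cast; omega) (by push_cast; omega)
            have e2 : σ ((b:ℤ)+1) = (b:ℤ)+1 :=
              haf _ (by omega) (by push_cast; omega) (by push_cast; omega) (by push_cast; omega)
            rw [hb1, e2, e1, hb1]
          · by_cases hjb1 : j = (b : ℤ) + 1
            · subst hjb1
              have e1 : σ (b:ℤ) = (b:ℤ) :=
                haf _ (by omega) (by push_cast; omega) (by push_cast; omega) (by push_cast; omega)
              have e2 : σ ((b:ℤ)+1) = (b:ℤ)+1 :=
                haf _ (by omega) (by push_cast; omega) (by push_cast; omega) (by push_cast; omega)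
              rw [hb2, e1, e2, hb2]
            · have e1 : τ j = j := hbf j hj1 hjn hjb hjb1
              have e2 : σ j = j := haf j hj1 hjn hja hja1
              rw [e1, e2, e1]

lemma gen_cancel (hn : 2 ≤ n)
    (hσ : IsGenC n a σ) (hτ : IsGenC n a τ) : σ * τ = 1 := by
  apply asp_ext (asp_mul hσ.1 hτ.1) asp_one
  intro j hj1 hjn
  simp only [Equiv.Perm.mul_apply, Equiv.Perm.one_apply]
  by_cases h0 : a = 0
  · subst h0
    obtain ⟨hσ1, hσf⟩ := gen0 hσ
    obtain ⟨hτ1, hτf⟩ := gen0 hτ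
    rcases eq_or_lt_of_le hj1 with h1 | h1
    · rw [← h1, hτ1, show (-1 : ℤ) = -(1:ℤ) from rfl, hσ.1.1 1, hσ1]; ring
    · rw [hτf j (by omega) hjn, hσf j (by omega) hjn]
  · by_cases hn' : a = n
    · subst hn'
      obtain ⟨hσ1, hσf⟩ := genn hn hσ
      obtain ⟨hτ1, hτf⟩ := genn hn hτ
      rcases eq_or_lt_of_le hjn with h2 | h2
      · rw [h2, hτ1, sig_np2 hσ.1, hσ1]; ring
      · rw [hτf j hj1 (by omega), hσf j hj1 (by omega)]
    · obtain ⟨_, hσ1, hσ2, hσf⟩ := genm hσ h0 hn'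
      obtain ⟨_, hτ1, hτ2, hτf⟩ := genm hτ h0 hn'
      by_cases hja : j = (a : ℤ)
      · subst hja; rw [hτ1, hσ2]
      · by_cases hja1 : j = (a : ℤ) + 1
        · subst hja1; rw [hτ2, hσ1]
        · rw [hτf j hj1 hjn hja hja1, hσf j hj1 hjn hja hja1]

/-! ### Word lemmas -/

lemma word_nil : IsWordC n w [] ↔ w = 1 := by
  constructor
  · rintro ⟨-, σs, h1, h2⟩
    rw [List.forall₂_nil_left_iff.1 h1] at h2
    simpa using h2.symm
  · rintro rfl
    exact ⟨by simp, [], List.Forall₂.nil, rfl⟩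

lemma word_cons (h : IsWordC n w (a :: B)) :
    ∃ σ v, IsGenC n a σ ∧ a ≤ n ∧ IsWordC n v B ∧ σ * v = w := by
  obtain ⟨hle, σs, h1, h2⟩ := h
  rw [List.forall₂_cons_left_iff] at h1
  obtain ⟨σ, σs', hg, hf, rfl⟩ := h1
  exact ⟨σ, σs'.prod, hg, hle a (by simp),
    ⟨fun i hi => hle i (by simp [hi]), σs', hf, rfl⟩, by simpa using h2⟩

lemma word_cons_of (hg : IsGenC n a σ) (ha : a ≤ n) (h : IsWordC n v B) :
    IsWordC n (σ * v) (a :: B) := by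
  obtain ⟨hle, σs, h1, h2⟩ := h
  exact ⟨by simp only [List.mem_cons]; rintro i (rfl | hi); exacts [ha, hle i hi],
    σ :: σs, List.Forall₂.cons hg h1, by simp [h2]⟩

lemma word_split (h : IsWordC n w (A ++ B)) :
    ∃ u v, IsWordC n u A ∧ IsWordC n v B ∧ u * v = w := by
  induction A generalizing w with
  | nil => exact ⟨1, w, word_nil.2 rfl, by simpa using h, one_mul w⟩
  | cons a A ih =>
      obtain ⟨σ, v, hg, ha, hv, rfl⟩ := word_cons h
      obtain ⟨u1, u2, h1, h2, rfl⟩ := ih hv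
      exact ⟨σ * u1, u2, word_cons_of hg ha h1, h2, (mul_assoc _ _ _)⟩

lemma word_glue (hA : IsWordC n u A) (hB : IsWordC n v B) :
    IsWordC n (u * v) (A ++ B) := by
  induction A generalizing u with
  | nil => rw [word_nil] at hA; subst hA; simpa using hB
  | cons a A ih =>
      obtain ⟨σ, u', hg, ha, hu', rfl⟩ := word_cons hA
      rw [mul_assoc]
      exact word_cons_of hg ha (ih hu')

/-- `a` and `b` are commuting letters. -/
def Comm (a b : ℕ) : Prop := a + 2 ≤ b ∨ b + 2 ≤ a

lemma word_swap (hn : 2 ≤ n) (hab : Comm a b)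
    (h : IsWordC n w (A ++ a :: b :: B)) :
    IsWordC n w (A ++ b :: a :: B) := by
  obtain ⟨u, v, hA, hv, rfl⟩ := word_split h
  obtain ⟨σ, v1, hσ, ha, hv1, rfl⟩ := word_cons hv
  obtain ⟨τ, v2, hτ, hb, hv2, rfl⟩ := word_cons hv1
  have hc : σ * τ = τ * σ := by
    rcases hab with h' | h'
    · exact gen_comm hn h' hb hσ hτ
    · exact (gen_comm hn h' ha hτ hσ).symm
  have := word_glue hA (word_cons_of hτ hb (word_cons_of hσ ha hv2))
  have he : u * (τ * (σ * v2)) = u * (σ * (τ * v2)) := by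
    rw [← mul_assoc τ, ← hc, mul_assoc]
  rwa [he] at this

lemma word_cancel (hn : 2 ≤ n)
    (h : IsWordC n w (A ++ a :: a :: B)) :
    IsWordC n w (A ++ B) := by
  obtain ⟨u, v, hA, hv, rfl⟩ := word_split h
  obtain ⟨σ, v1, hσ, ha, hv1, rfl⟩ := word_cons hv
  obtain ⟨τ, v2, hτ, hb, hv2, rfl⟩ := word_cons hv1
  have := word_glue hA hv2
  have he : u * v2 = u * (σ * (τ * v2)) := by
    rw [← mul_assoc σ, gen_cancel hn hσ hτ, one_mul]
  rwa [he] at this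

lemma word_move_left (hn : 2 ≤ n) (hM : ∀ c ∈ M, Comm c a) :
    IsWordC n w (A ++ (M ++ a :: B)) → IsWordC n w (A ++ a :: (M ++ B)) := by
  induction M generalizing A with
  | nil => exact fun h => h
  | cons c M' ih =>
      intro h
      have h1 := ih (fun x hx => hM x (by simp [hx])) (A := A ++ [c])
        (by simpa [List.append_assoc] using h)
      have h2 : IsWordC n w (A ++ c :: a :: (M' ++ B)) := by
        simpa [List.append_assoc] using h1
      have h3 := word_swap hn (hM c (by simp)) h2
      simpa using h3

lemma word_move_right (hn : 2 ≤ n) (hM : ∀ c ∈ M, Comm c a) :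
    IsWordC n w (A ++ a :: (M ++ B)) → IsWordC n w (A ++ (M ++ a :: B)) := by
  induction M generalizing A with
  | nil => exact fun h => h
  | cons c M' ih =>
      intro h
      have h2 : IsWordC n w (A ++ c :: a :: (M' ++ B)) := by
        have hca : Comm a c := by
          rcases hM c (by simp) with h' | h'
          · exact Or.inr h'
          · exact Or.inl h'
        simpa using word_swap hn hca h
      have h3 := ih (fun x hx => hM x (by simp [hx])) (A := A ++ [c])
        (by simpa [List.append_assoc] using h2)
      simpa [List.append_assoc] using h3

lemma len_le (h : IsWordC n w l) : lenC n w ≤ l.length :=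
  Nat.sInf_le ⟨l, h, rfl⟩

lemma first_occ (h : a ∈ l) : ∃ M1 M2, l = M1 ++ a :: M2 ∧ a ∉ M1 := by
  induction l with
  | nil => simp at h
  | cons c l' ih =>
      by_cases hca : c = a
      · exact ⟨[], l', by simp [hca], by simp⟩
      · have h' : a ∈ l' := by
          rcases List.mem_cons.1 h with h'' | h''
          · exact absurd h''.symm hca
          · exact h''
        obtain ⟨M1, M2, rfl, hM1⟩ := ih h'
        refine ⟨c :: M1, M2, rfl, ?_⟩
        intro hmem
        rcases List.mem_cons.1 hmem with h'' | h''
        · exact hca h''.symm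
        · exact hM1 h''

end Aux

/-! ### The main combinatorial lemmas -/

/-- Climbing up: two occurrences of `j` with nothing equal to `j` or `j - 1`
in between yield a reduced word with a bad factor. -/
theorem up (n : ℕ) (hn : 2 ≤ n) (w : Equiv.Perm ℤ) (j : ℕ) (A M B : List ℕ)
    (hj1 : 1 ≤ j) (hM : ∀ c ∈ M, c ≠ j ∧ c + 1 ≠ j)
    (hred : IsReducedWordC n w (A ++ j :: (M ++ j :: B))) :
    ∃ l', IsReducedWordC n w l' ∧ HasBadFactorC n l' := by
  obtain ⟨hword, hlen⟩ := hred
  by_cases hmem : (j+1) ∈ M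
  · have hj1n : j + 1 ≤ n := hword.1 (j+1) (by simp [hmem])
    obtain ⟨M1, M2, rfl, hM1⟩ := first_occ hmem
    by_cases hmem2 : (j+1) ∈ M2
    · obtain ⟨M2a, M2b, rfl, hM2a⟩ := first_occ hmem2
      have hred' : IsReducedWordC n w
          ((A ++ j :: M1) ++ (j+1) :: (M2a ++ (j+1) :: (M2b ++ j :: B))) := by
        constructor
        · have he : (A ++ j :: M1) ++ (j+1) :: (M2a ++ (j+1) :: (M2b ++ j :: B)) =
              A ++ j :: ((M1 ++ (j+1) :: (M2a ++ (j+1) :: M2b)) ++ j :: B) := by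
            simp [List.append_assoc]
          rw [he]; exact hword
        · have he : ((A ++ j :: M1) ++ (j+1) :: (M2a ++ (j+1) :: (M2b ++ j :: B))).length =
              (A ++ j :: ((M1 ++ (j+1) :: (M2a ++ (j+1) :: M2b)) ++ j :: B)).length := by
            simp
          rw [he]; exact hlen
      exact up n hn w (j+1) (A ++ j :: M1) M2a (M2b ++ j :: B) (by omega)
        (fun c hc => ⟨fun h => hM2a (h ▸ hc),
          fun h => (hM c (by simp [hc])).1 (by omega)⟩) hred'
    · -- exactly one occurrence of j + 1 between the two j's
      have hcM1 : ∀ c ∈ M1, Comm c j := by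
        intro c hc
        have h1 := hM c (by simp [hc])
        have h2 : c ≠ j + 1 := fun h => hM1 (h ▸ hc)
        unfold Comm; omega
      have hcM2 : ∀ c ∈ M2, Comm c j := by
        intro c hc
        have h1 := hM c (by simp [hc])
        have h2 : c ≠ j + 1 := fun h => hmem2 (h ▸ hc)
        unfold Comm; omega
      -- move the second j left through M2
      have s1 : IsWordC n w ((A ++ j :: M1 ++ [j+1]) ++ j :: (M2 ++ B)) := by
        apply word_move_left hn hcM2
        have he : (A ++ j :: M1 ++ [j+1]) ++ (M2 ++ j :: B) =
            A ++ j :: ((M1 ++ (j+1) :: M2) ++ j :: B) := by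
          simp [List.append_assoc]
        rw [he]; exact hword
      -- move the first j right through M1
      have s2 : IsWordC n w (A ++ (M1 ++ j :: ((j+1) :: j :: (M2 ++ B)))) := by
        apply word_move_right hn hcM1
        have he : A ++ j :: (M1 ++ ((j+1) :: j :: (M2 ++ B))) =
            (A ++ j :: M1 ++ [j+1]) ++ j :: (M2 ++ B) := by
          simp [List.append_assoc]
        rw [he]; exact s1
      refine ⟨A ++ (M1 ++ j :: ((j+1) :: j :: (M2 ++ B))), ⟨s2, ?_⟩,
        j, j+1, hj1, hj1n, Or.inl rfl, A ++ M1, M2 ++ B, by simp⟩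
      · rw [← hlen]; simp; omega
  · -- no j+1 in M : contradiction with reducedness
    exfalso
    have hcM : ∀ c ∈ M, Comm c j := by
      intro c hc
      have h1 := hM c hc
      have h2 : c ≠ j + 1 := fun h => hmem (h ▸ hc)
      unfold Comm; omega
    have s1 : IsWordC n w ((A ++ [j]) ++ j :: (M ++ B)) := by
      apply word_move_left hn hcM
      have he : (A ++ [j]) ++ (M ++ j :: B) = A ++ j :: (M ++ j :: B) := by
        simp [List.append_assoc]
      rw [he]; exact hword
    have s2 : IsWordC n w (A ++ (M ++ B)) := by
      apply word_cancel hn (a := j)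
      have he : A ++ j :: j :: (M ++ B) = (A ++ [j]) ++ j :: (M ++ B) := by
        simp
      rw [he]; exact s1
    have := len_le s2
    simp at hlen this
    omega
termination_by n - j
decreasing_by omega

/-- Climbing down: two occurrences of `j` with nothing equal to `j` or `j + 1`
in between yield a reduced word with a bad factor. -/
theorem down (n : ℕ) (hn : 2 ≤ n) (w : Equiv.Perm ℤ) (j : ℕ) (A M B : List ℕ)
    (hjn : j + 1 ≤ n) (hM : ∀ c ∈ M, c ≠ j ∧ c ≠ j + 1)
    (hred : IsReducedWordC n w (A ++ j :: (M ++ j :: B))) :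
    ∃ l', IsReducedWordC n w l' ∧ HasBadFactorC n l' := by
  obtain ⟨hword, hlen⟩ := hred
  by_cases hmem : ∃ c ∈ M, c + 1 = j
  · obtain ⟨c0, hc0M, hc0⟩ := hmem
    obtain ⟨M1, M2, rfl, hM1⟩ := first_occ hc0M
    by_cases hmem2 : c0 ∈ M2
    · obtain ⟨M2a, M2b, rfl, hM2a⟩ := first_occ hmem2
      have hred' : IsReducedWordC n w
          ((A ++ j :: M1) ++ c0 :: (M2a ++ c0 :: (M2b ++ j :: B))) := by
        constructor
        · have he : (A ++ j :: M1) ++ c0 :: (M2a ++ c0 :: (M2b ++ j :: B)) =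
              A ++ j :: ((M1 ++ c0 :: (M2a ++ c0 :: M2b)) ++ j :: B) := by
            simp [List.append_assoc]
          rw [he]; exact hword
        · have he : ((A ++ j :: M1) ++ c0 :: (M2a ++ c0 :: (M2b ++ j :: B))).length =
              (A ++ j :: ((M1 ++ c0 :: (M2a ++ c0 :: M2b)) ++ j :: B)).length := by
            simp
          rw [he]; exact hlen
      exact down n hn w c0 (A ++ j :: M1) M2a (M2b ++ j :: B) (by omega)
        (fun c hc => ⟨fun h => hM2a (h ▸ hc),
          fun h => (hM c (by simp [hc])).1 (by omega)⟩) hred'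
    · -- exactly one occurrence of j - 1 between the two j's
      have hcM1 : ∀ c ∈ M1, Comm c j := by
        intro c hc
        have h1 := hM c (by simp [hc])
        have h2 : c ≠ c0 := fun h => hM1 (h ▸ hc)
        unfold Comm; omega
      have hcM2 : ∀ c ∈ M2, Comm c j := by
        intro c hc
        have h1 := hM c (by simp [hc])
        have h2 : c ≠ c0 := fun h => hmem2 (h ▸ hc)
        unfold Comm; omega
      have s1 : IsWordC n w ((A ++ j :: M1 ++ [c0]) ++ j :: (M2 ++ B)) := by
        apply word_move_left hn hcM2
        have he : (A ++ j :: M1 ++ [c0]) ++ (M2 ++ j :: B) =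
            A ++ j :: ((M1 ++ c0 :: M2) ++ j :: B) := by
          simp [List.append_assoc]
        rw [he]; exact hword
      have s2 : IsWordC n w (A ++ (M1 ++ j :: (c0 :: j :: (M2 ++ B)))) := by
        apply word_move_right hn hcM1
        have he : A ++ j :: (M1 ++ (c0 :: j :: (M2 ++ B))) =
            (A ++ j :: M1 ++ [c0]) ++ j :: (M2 ++ B) := by
          simp [List.append_assoc]
        rw [he]; exact s1
      refine ⟨A ++ (M1 ++ j :: (c0 :: j :: (M2 ++ B))), ⟨s2, ?_⟩,
        j, c0, by omega, hjn, Or.inr (by omega), A ++ M1, M2 ++ B, by simp⟩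
      · rw [← hlen]; simp; omega
  · exfalso
    push_neg at hmem
    have hcM : ∀ c ∈ M, Comm c j := by
      intro c hc
      have h1 := hM c hc
      have h2 : c + 1 ≠ j := hmem c hc
      unfold Comm; omega
    have s1 : IsWordC n w ((A ++ [j]) ++ j :: (M ++ B)) := by
      apply word_move_left hn hcM
      have he : (A ++ [j]) ++ (M ++ j :: B) = A ++ j :: (M ++ j :: B) := by
        simp [List.append_assoc]
      rw [he]; exact hword
    have s2 : IsWordC n w (A ++ (M ++ B)) := by
      apply word_cancel hn (a := j)
      have he : A ++ j :: j :: (M ++ B) = (A ++ [j]) ++ j :: (M ++ B) := by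
        simp
      rw [he]; exact s1
    have := len_le s2
    simp at hlen this
    omega
termination_by j
decreasing_by omega

/-- Splitting a list at two positions carrying the same letter. -/
lemma pos_split {α : Type*} {l : List α} {p q : ℕ} {i : α} (hpq : p < q)
    (hq : q < l.length) (hp' : l[p]'(by omega) = i) (hq' : l[q] = i) :
    ∃ A M B, l = A ++ i :: (M ++ i :: B) ∧
      ∀ c ∈ M, ∃ r : ℕ, p < r ∧ r < q ∧ ∃ hr : r < l.length, l[r] = c := by
  refine ⟨l.take p, (l.take q).drop (p+1), l.drop (q+1), ?_, ?_⟩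
  · have key : l.take q = l.take p ++ i :: (l.take q).drop (p+1) := by
      conv_lhs => rw [← List.take_append_drop (p+1) (l.take q)]
      rw [List.take_take, min_eq_left (by omega),
        ← List.take_concat_get' l p (by omega), hp']
      simp
    calc l = l.take q ++ l.drop q := (List.take_append_drop q l).symm
      _ = l.take q ++ (i :: l.drop (q+1)) := by
          rw [List.drop_eq_getElem_cons hq, hq']
      _ = (l.take p ++ i :: (l.take q).drop (p+1)) ++ i :: l.drop (q+1) := by
          rw [← key]
      _ = _ := by simp
  · intro c hc
    rw [List.mem_iff_getElem] at hc
    obtain ⟨k, hk, hck⟩ := hc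
    have hkq : p + 1 + k < q := by
      simp [List.length_drop, List.length_take] at hk
      omega
    refine ⟨p + 1 + k, by omega, hkq, by omega, ?_⟩
    rw [← hck, List.getElem_drop, List.getElem_take]

theorem stmt_11 (n : ℕ) (hn : 2 ≤ n) (w : Equiv.Perm ℤ)
    (hw : IsAffineSignedPerm n w) :
    (∀ l : List ℕ, IsReducedWordC n w l → ¬ HasBadFactorC n l) ↔
      ∀ l : List ℕ, IsReducedWordC n w l → SeparatedOccurrencesC n l := by
  constructor
  · -- no bad factor → separated occurrences
    intro hnobad l hl
    intro i hi1 hin p q hpq hp hq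
    by_contra hC
    rw [not_and_or] at hC
    have hget_p : l[(p:ℕ)]'(p.2) = i := by simpa [List.get_eq_getElem] using hp
    have hget_q : l[(q:ℕ)]'(q.2) = i := by simpa [List.get_eq_getElem] using hq
    obtain ⟨A, M, B, hdecomp, hmemM⟩ := pos_split (Fin.lt_def.1 hpq) q.2 hget_p hget_q
    -- from hC, derive properties of M
    rcases hC with hC1 | hC2
    · -- no occurrence of i - 1 strictly between p and q
      have hM' : ∀ c ∈ M, c + 1 ≠ i := by
        intro c hc hci
        obtain ⟨r, hr1, hr2, hr3, hr4⟩ := hmemM c hc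
        exact hC1 ⟨⟨r, hr3⟩, hr1, hr2, by simp [List.get_eq_getElem, hr4, hci]⟩
      have hbad : ∃ l', IsReducedWordC n w l' ∧ HasBadFactorC n l' := by
        by_cases hiM : i ∈ M
        · obtain ⟨M1, M2, rfl, hM1⟩ := first_occ hiM
          apply up n hn w i A M1 (M2 ++ i :: B) hi1
          · exact fun c hc => ⟨fun h => hM1 (h ▸ hc), hM' c (by simp [hc])⟩
          · have he : A ++ i :: (M1 ++ i :: (M2 ++ i :: B)) =
                A ++ i :: ((M1 ++ i :: M2) ++ i :: B) := by simp
            rw [he, ← hdecomp]; exact hl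
        · apply up n hn w i A M B hi1
          · exact fun c hc => ⟨fun h => hiM (h ▸ hc), hM' c hc⟩
          · rw [← hdecomp]; exact hl
      obtain ⟨l', hl', hbad'⟩ := hbad
      exact hnobad l' hl' hbad'
    · -- no occurrence of i + 1 strictly between p and q
      have hM' : ∀ c ∈ M, c ≠ i + 1 := by
        intro c hc hci
        obtain ⟨r, hr1, hr2, hr3, hr4⟩ := hmemM c hc
        exact hC2 ⟨⟨r, hr3⟩, hr1, hr2, by simp [List.get_eq_getElem, hr4, hci]⟩
      have hbad : ∃ l', IsReducedWordC n w l' ∧ HasBadFactorC n l' := by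
        by_cases hiM : i ∈ M
        · obtain ⟨M1, M2, rfl, hM1⟩ := first_occ hiM
          apply down n hn w i A M1 (M2 ++ i :: B) hin
          · exact fun c hc => ⟨fun h => hM1 (h ▸ hc), hM' c (by simp [hc])⟩
          · have he : A ++ i :: (M1 ++ i :: (M2 ++ i :: B)) =
                A ++ i :: ((M1 ++ i :: M2) ++ i :: B) := by simp
            rw [he, ← hdecomp]; exact hl
        · apply down n hn w i A M B hin
          · exact fun c hc => ⟨fun h => hiM (h ▸ hc), hM' c hc⟩
          · rw [← hdecomp]; exact hl
      obtain ⟨l', hl', hbad'⟩ := hbad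
      exact hnobad l' hl' hbad'
  · -- separated occurrences → no bad factor
    intro hsep l hl hbad
    obtain ⟨i, j, hi1, hin, hij, S, T, hST⟩ := hbad
    subst hST
    set l := S ++ [i, j, i] ++ T with hl'
    have hlen : l.length = S.length + 3 + T.length := by simp [hl']; omega
    have hpl : S.length < l.length := by omega
    have hql : S.length + 2 < l.length := by omega
    have hrl : S.length + 1 < l.length := by omega
    have h0 : l = S ++ ([i, j, i] ++ T) := by simp [hl']
    have hgp : l.get ⟨S.length, hpl⟩ = i := by
      rw [List.get_eq_getElem, List.getElem_of_eq h0,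
        List.getElem_append_right (le_refl S.length)]
      simp
    have hgq : l.get ⟨S.length + 2, hql⟩ = i := by
      rw [List.get_eq_getElem, List.getElem_of_eq h0,
        List.getElem_append_right (show S.length ≤ S.length + 2 by omega)]
      have h2 : S.length + 2 - S.length = 2 := by omega
      simp only [h2]
      rfl
    have hgr : l.get ⟨S.length + 1, hrl⟩ = j := by
      rw [List.get_eq_getElem, List.getElem_of_eq h0,
        List.getElem_append_right (show S.length ≤ S.length + 1 by omega)]
      have h2 : S.length + 1 - S.length = 1 := by omega
      simp only [h2]
      rfl
    obtain ⟨⟨r1, hr11, hr12, hr13⟩, ⟨r2, hr21, hr22, hr23⟩⟩ :=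
      hsep l hl i hi1 hin ⟨S.length, hpl⟩ ⟨S.length + 2, hql⟩
        (by simp [Fin.lt_def]) hgp hgq
    rcases hij with hij | hij
    · -- j = i + 1, but there must be an occurrence of i - 1 at position S.length+1
      have : r1 = ⟨S.length + 1, hrl⟩ := by
        rw [Fin.lt_def] at hr11 hr12
        apply Fin.ext
        simp at hr11 hr12 ⊢
        omega
      rw [this, hgr] at hr13
      omega
    · -- i = j + 1, but there must be an occurrence of i + 1 at position S.length+1
      have : r2 = ⟨S.length + 1, hrl⟩ := by
        rw [Fin.lt_def] at hr21 hr22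
        apply Fin.ext
        simp at hr21 hr22 ⊢
        omega
      rw [this, hgr] at hr23
      omega

end Stmt11
end

section
/- Let n ≥ 1 and let w ∈ S^B_n be a signed permutation. If w globally avoids the pattern 321, then dis(w)/2 = ℓ(w). -/
namespace Stmt13

/-- The Coxeter generator `sᵢ` of the hyperoctahedral group, acting on `ℤ`:
`s₀` swaps `-1` and `1`; for `i ≥ 1`, `sᵢ` swaps `i` with `i+1` and `-i` with `-(i+1)`. -/
def sB (i : ℕ) : Equiv.Perm ℤ :=
  if i = 0 then Equiv.swap (-1 : ℤ) 1
  else Equiv.swap (i : ℤ) ((i : ℤ) + 1) * Equiv.swap (-(i : ℤ)) (-((i : ℤ) + 1))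

/-- `w` is a signed permutation in `S^B_n`: a bijection of `ℤ` with
`w(-i) = -w(i)` for all `i` and `w(i) = i` whenever `|i| > n`. -/
def IsSignedPerm (n : ℕ) (w : Equiv.Perm ℤ) : Prop :=
  (∀ i : ℤ, w (-i) = -(w i)) ∧ ∀ i : ℤ, (n : ℤ) < |i| → w i = i

/-- `l` is a word for `w` in the letters `{0, …, n-1}`. -/
def IsWordB (n : ℕ) (w : Equiv.Perm ℤ) (l : List ℕ) : Prop :=
  (∀ i ∈ l, i + 1 ≤ n) ∧ (l.map sB).prod = w

/-- The Coxeter length of `w`: the minimal length of a word for `w`. -/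
noncomputable def lenB (n : ℕ) (w : Equiv.Perm ℤ) : ℕ :=
  sInf {m | ∃ l : List ℕ, IsWordB n w l ∧ l.length = m}

/-- The disarray `dis(w) = ∑_{i=1}^n |w(i) - i|`. -/
noncomputable def disB (n : ℕ) (w : Equiv.Perm ℤ) : ℤ :=
  ∑ i ∈ Finset.Icc (1 : ℤ) (n : ℤ), |w i - i|

/-- The unfrozen integers for `S^B_n` are `{-n, …, -1, 1, …, n}`. -/
def Unfrozen (n : ℕ) (i : ℤ) : Prop := i ≠ 0 ∧ |i| ≤ (n : ℤ)

/-- `w` globally contains the pattern `321`: there are unfrozen integers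
`i < j < k` with `w(i) > w(j) > w(k)`. -/
def GloballyContains321 (n : ℕ) (w : Equiv.Perm ℤ) : Prop :=
  ∃ i j k : ℤ, Unfrozen n i ∧ Unfrozen n j ∧ Unfrozen n k ∧
    i < j ∧ j < k ∧ w i > w j ∧ w j > w k

lemma sB_apply (i : ℕ) (x : ℤ) : sB i x =
    if i = 0 then (if x = -1 then 1 else if x = 1 then -1 else x)
    else (if x = (i:ℤ) then (i:ℤ)+1 else if x = (i:ℤ)+1 then (i:ℤ)
      else if x = -(i:ℤ) then -(i:ℤ)-1 else if x = -(i:ℤ)-1 then -(i:ℤ) else x) := by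
  by_cases h : i = 0
  · simp only [sB, h, if_true, reduceIte, Equiv.swap_apply_def]
  · simp only [sB, h, if_false, reduceIte, Equiv.Perm.mul_apply, Equiv.swap_apply_def]
    split_ifs <;> omega

lemma sB_invol (i : ℕ) (x : ℤ) : sB i (sB i x) = x := by
  simp only [sB_apply]
  split_ifs <;> first | exact False.elim (by assumption) | omega

lemma sB_odd (i : ℕ) (x : ℤ) : sB i (-x) = -(sB i x) := by
  simp only [sB_apply]
  split_ifs <;> first | exact False.elim (by assumption) | omega

lemma sB_fix (i : ℕ) {n : ℕ} (hi : i + 1 ≤ n) {x : ℤ} (hx : (n:ℤ) < |x|) : sB i x = x := by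
  have hx' : (n:ℤ) < x ∨ (n:ℤ) < -x := lt_abs.mp hx
  simp only [sB_apply]; split_ifs <;> omega

lemma sB_mul_self (i : ℕ) : sB i * sB i = 1 := by
  ext x; simp [Equiv.Perm.mul_apply, sB_invol]

lemma unfrozen_iff (n : ℕ) (x : ℤ) : Unfrozen n x ↔ x ≠ 0 ∧ -(n:ℤ) ≤ x ∧ x ≤ n := by
  unfold Unfrozen; rw [abs_le]

lemma sB_unfrozen (i : ℕ) {n : ℕ} (hi : i + 1 ≤ n) {x : ℤ} (hx : Unfrozen n x) :
    Unfrozen n (sB i x) := by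
  rw [unfrozen_iff] at hx ⊢
  have hi' : (i:ℤ) + 1 ≤ (n:ℤ) := by exact_mod_cast hi
  simp only [sB_apply]; split_ifs <;> omega

lemma sB_lt (i : ℕ) (hi : 1 ≤ i) {x y : ℤ} (hxy : x < y)
    (h1 : ¬(x = (i:ℤ) ∧ y = (i:ℤ)+1)) (h2 : ¬(x = -(i:ℤ)-1 ∧ y = -(i:ℤ))) :
    sB i x < sB i y := by
  have hi' : (1:ℤ) ≤ (i:ℤ) := by exact_mod_cast hi
  simp only [sB_apply]; split_ifs <;> omega

lemma sB0_lt {x y : ℤ} (hxy : x < y) (hx : x ≠ 0) (hy : y ≠ 0)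
    (h1 : ¬(x = -1 ∧ y = 1)) : sB 0 x < sB 0 y := by
  simp only [sB_apply]; split_ifs <;> omega

lemma sB0_move (x : ℤ) : |sB 0 x - x| ≤ 2 := by
  rw [abs_le]; simp only [sB_apply]; split_ifs <;> omega

lemma sBi_move (i : ℕ) (hi : 1 ≤ i) (x : ℤ) : |sB i x - x| ≤ 1 := by
  rw [abs_le]; simp only [sB_apply]; split_ifs <;> first | exact False.elim (by assumption) | omega

lemma sB_eq_self (i : ℕ) (hi : 1 ≤ i) {x : ℤ} (h1 : x ≠ (i:ℤ)) (h2 : x ≠ (i:ℤ)+1)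
    (hx : 1 ≤ x) : sB i x = x := by
  have hi' : (1:ℤ) ≤ (i:ℤ) := by exact_mod_cast hi
  simp only [sB_apply]; split_ifs <;> omega

lemma sB0_eq_self {x : ℤ} (h1 : x ≠ -1) (h2 : x ≠ 1) : sB 0 x = x := by
  simp only [sB_apply]; split_ifs <;> omega


section Basic
variable {n : ℕ} {w : Equiv.Perm ℤ}

lemma signed_zero (hw : IsSignedPerm n w) : w 0 = 0 := by
  have := hw.1 0; simp at this; omega

lemma signed_bound (hw : IsSignedPerm n w) {x : ℤ} (hx : |x| ≤ n) : |w x| ≤ n := by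
  by_contra h
  push_neg at h
  have h2 : w (w x) = w x := hw.2 (w x) h
  have h3 : w x = x := w.injective h2
  rw [h3] at h
  omega

lemma signed_mul (hw : IsSignedPerm n w) (i : ℕ) (hi : i + 1 ≤ n) :
    IsSignedPerm n (w * sB i) := by
  constructor
  · intro x
    rw [Equiv.Perm.mul_apply, Equiv.Perm.mul_apply, sB_odd, hw.1]
  · intro x hx
    rw [Equiv.Perm.mul_apply, sB_fix i hi hx, hw.2 x hx]

lemma signed_eq_one (hw : IsSignedPerm n w) (h : ∀ p : ℤ, 1 ≤ p → p ≤ n → w p = p) :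
    w = 1 := by
  ext x
  simp only [Equiv.Perm.one_apply]
  rcases lt_trichotomy x 0 with hx | hx | hx
  · by_cases hxn : -(n:ℤ) ≤ x
    · have h1 : w (-(-x)) = -(w (-x)) := hw.1 (-x)
      rw [neg_neg] at h1
      rw [h1, h (-x) (by omega) (by omega)]; ring
    · exact hw.2 x (by rw [abs_of_neg hx]; omega)
  · rw [hx]; exact signed_zero hw
  · by_cases hxn : x ≤ (n:ℤ)
    · exact h x (by omega) hxn
    · exact hw.2 x (by rw [abs_of_pos hx]; omega)

lemma disB_nonneg : 0 ≤ disB n w := Finset.sum_nonneg fun i _ => abs_nonneg _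

lemma disB_one : disB n (1 : Equiv.Perm ℤ) = 0 := by
  simp [disB]

lemma disB_pos {p : ℤ} (hp1 : 1 ≤ p) (hp2 : p ≤ n) (hp : w p ≠ p) : 1 ≤ disB n w := by
  have hmem : p ∈ Finset.Icc (1:ℤ) (n:ℤ) := Finset.mem_Icc.mpr ⟨hp1, hp2⟩
  have h1 : (1:ℤ) ≤ |w p - p| := by
    have := abs_pos.mpr (sub_ne_zero.mpr hp)
    omega
  calc (1:ℤ) ≤ |w p - p| := h1
    _ ≤ disB n w := Finset.single_le_sum (f := fun q => |w q - q|) (fun q _ => abs_nonneg _) hmem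

end Basic

section Lower
variable {n : ℕ} {w : Equiv.Perm ℤ}

lemma disB_mul_sB0 (hn : 1 ≤ n) (hw : IsSignedPerm n w) (h1 : w 1 ≤ -1) :
    disB n (w * sB 0) = disB n w - 2 := by
  classical
  have hmem : (1:ℤ) ∈ Finset.Icc (1:ℤ) (n:ℤ) := Finset.mem_Icc.mpr ⟨le_refl _, by exact_mod_cast hn⟩
  unfold disB
  rw [← Finset.sum_erase_add _ _ hmem, ← Finset.sum_erase_add _ (fun q => |w q - q|) hmem]
  have hcong : ∀ p ∈ (Finset.Icc (1:ℤ) (n:ℤ)).erase 1,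
      |(w * sB 0) p - p| = |w p - p| := by
    intro p hp
    rw [Finset.mem_erase, Finset.mem_Icc] at hp
    rw [Equiv.Perm.mul_apply, sB0_eq_self (by omega) hp.1]
  rw [Finset.sum_congr rfl hcong]
  have hv1 : (w * sB 0) 1 = -(w 1) := by
    rw [Equiv.Perm.mul_apply]
    have : sB 0 (1:ℤ) = -1 := by simp only [sB_apply]; norm_num
    rw [this, show (-1:ℤ) = -(1:ℤ) by norm_num, hw.1]
  rw [hv1]
  have e1 : |-(w 1) - 1| = -(w 1) - 1 := abs_of_nonneg (by omega)
  have e2 : |w 1 - 1| = -(w 1 - 1) := abs_of_nonpos (by omega)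
  rw [e1, e2]; ring

lemma disB_mul_sBi (hi1 : 1 ≤ i) (hi2 : i + 1 ≤ n)
    (ha : (i:ℤ) + 1 ≤ w i) (hb : w ((i:ℤ)+1) ≤ (i:ℤ)) :
    disB n (w * sB i) = disB n w - 2 := by
  classical
  have hin : ((i:ℤ)+1) ≤ (n:ℤ) := by exact_mod_cast hi2
  have hi1' : (1:ℤ) ≤ (i:ℤ) := by exact_mod_cast hi1
  have hmem1 : (i:ℤ) ∈ Finset.Icc (1:ℤ) (n:ℤ) := Finset.mem_Icc.mpr ⟨hi1', by omega⟩
  have hmem2 : (i:ℤ)+1 ∈ (Finset.Icc (1:ℤ) (n:ℤ)).erase i := by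
    rw [Finset.mem_erase, Finset.mem_Icc]; constructor; omega; omega
  unfold disB
  rw [← Finset.sum_erase_add _ _ hmem1, ← Finset.sum_erase_add _ (fun q => |w q - q|) hmem1,
    ← Finset.sum_erase_add _ _ hmem2, ← Finset.sum_erase_add _ (fun q => |w q - q|) hmem2]
  have hcong : ∀ p ∈ ((Finset.Icc (1:ℤ) (n:ℤ)).erase i).erase ((i:ℤ)+1),
      |(w * sB i) p - p| = |w p - p| := by
    intro p hp
    rw [Finset.mem_erase, Finset.mem_erase, Finset.mem_Icc] at hp
    rw [Equiv.Perm.mul_apply, sB_eq_self i hi1 hp.2.1 hp.1 hp.2.2.1]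
  rw [Finset.sum_congr rfl hcong]
  have ei : sB i (i:ℤ) = (i:ℤ)+1 := by simp only [sB_apply]; split_ifs <;> omega
  have ei1 : sB i ((i:ℤ)+1) = (i:ℤ) := by simp only [sB_apply]; split_ifs <;> omega
  have hv1 : (w * sB i) (i:ℤ) = w ((i:ℤ)+1) := by rw [Equiv.Perm.mul_apply, ei]
  have hv2 : (w * sB i) ((i:ℤ)+1) = w (i:ℤ) := by rw [Equiv.Perm.mul_apply, ei1]
  rw [hv1, hv2]
  have e1 : |w ((i:ℤ)+1) - (i:ℤ)| = -(w ((i:ℤ)+1) - (i:ℤ)) := abs_of_nonpos (by omega)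
  have e2 : |w (i:ℤ) - ((i:ℤ)+1)| = w (i:ℤ) - ((i:ℤ)+1) := abs_of_nonneg (by omega)
  have e3 : |w (i:ℤ) - (i:ℤ)| = w (i:ℤ) - (i:ℤ) := abs_of_nonneg (by omega)
  have e4 : |w ((i:ℤ)+1) - ((i:ℤ)+1)| = -(w ((i:ℤ)+1) - ((i:ℤ)+1)) := abs_of_nonpos (by omega)
  rw [e1, e2, e3, e4]; ring

end Lower

section Avoid
variable {n : ℕ} {w : Equiv.Perm ℤ}

lemma avoid_mul_sB0 (hn : 1 ≤ n) (hw : IsSignedPerm n w)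
    (hav : ¬ GloballyContains321 n w) (h1 : w 1 < 0) :
    ¬ GloballyContains321 n (w * sB 0) := by
  rintro ⟨a, b, c, ua, ub, uc, hab, hbc, v1, v2⟩
  simp only [Equiv.Perm.mul_apply] at v1 v2
  have hw1 : w (-1) = -(w 1) := hw.1 1
  have hex : ∀ x y : ℤ, x < y → w (sB 0 x) > w (sB 0 y) → ¬(x = -1 ∧ y = 1) := by
    rintro x y hxy hv ⟨rfl, rfl⟩
    have ex : sB 0 (-1 : ℤ) = 1 := by simp only [sB_apply]; norm_num
    have ey : sB 0 (1 : ℤ) = -1 := by simp only [sB_apply]; norm_num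
    rw [ex, ey, hw1] at hv
    omega
  have hac : ¬(a = -1 ∧ c = 1) := by
    rintro ⟨rfl, rfl⟩
    have := ub.1
    omega
  apply hav
  refine ⟨sB 0 a, sB 0 b, sB 0 c, sB_unfrozen 0 hn ua, sB_unfrozen 0 hn ub,
    sB_unfrozen 0 hn uc, ?_, ?_, v1, v2⟩
  · exact sB0_lt hab ua.1 ub.1 (hex a b hab v1)
  · exact sB0_lt hbc ub.1 uc.1 (hex b c hbc v2)

lemma avoid_mul_sBi (hi1 : 1 ≤ i) (hi2 : i + 1 ≤ n) (hw : IsSignedPerm n w)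
    (hav : ¬ GloballyContains321 n w) (hdesc : w ((i:ℤ)+1) < w (i:ℤ)) :
    ¬ GloballyContains321 n (w * sB i) := by
  rintro ⟨a, b, c, ua, ub, uc, hab, hbc, v1, v2⟩
  simp only [Equiv.Perm.mul_apply] at v1 v2
  have hi1' : (1:ℤ) ≤ (i:ℤ) := by exact_mod_cast hi1
  have ei : sB i (i:ℤ) = (i:ℤ)+1 := by simp only [sB_apply]; split_ifs <;> omega
  have ei1 : sB i ((i:ℤ)+1) = (i:ℤ) := by simp only [sB_apply]; split_ifs <;> omega
  have eni : sB i (-(i:ℤ)) = -(i:ℤ)-1 := by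
    simp only [sB_apply]; split_ifs <;> first | exact False.elim (by assumption) | omega
  have eni1 : sB i (-(i:ℤ)-1) = -(i:ℤ) := by
    simp only [sB_apply]; split_ifs <;> first | exact False.elim (by assumption) | omega
  have hwn : w (-(i:ℤ)-1) = -(w ((i:ℤ)+1)) := by
    have := hw.1 ((i:ℤ)+1)
    rw [show -((i:ℤ)+1) = -(i:ℤ)-1 by ring] at this
    exact this
  have hwn2 : w (-(i:ℤ)) = -(w (i:ℤ)) := hw.1 (i:ℤ)
  have hex : ∀ x y : ℤ, w (sB i x) > w (sB i y) → ¬(x = (i:ℤ) ∧ y = (i:ℤ)+1) := by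
    rintro x y hv ⟨rfl, rfl⟩
    rw [ei, ei1] at hv
    omega
  have hex2 : ∀ x y : ℤ, w (sB i x) > w (sB i y) → ¬(x = -(i:ℤ)-1 ∧ y = -(i:ℤ)) := by
    rintro x y hv ⟨rfl, rfl⟩
    rw [eni, eni1, hwn, hwn2] at hv
    omega
  have hac1 : ¬(a = (i:ℤ) ∧ c = (i:ℤ)+1) := by rintro ⟨rfl, rfl⟩; omega
  have hac2 : ¬(a = -(i:ℤ)-1 ∧ c = -(i:ℤ)) := by rintro ⟨rfl, rfl⟩; omega
  apply hav
  refine ⟨sB i a, sB i b, sB i c, sB_unfrozen i hi2 ua, sB_unfrozen i hi2 ub,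
    sB_unfrozen i hi2 uc, ?_, ?_, v1, v2⟩
  · exact sB_lt i hi1 hab (hex a b v1) (hex2 a b v1)
  · exact sB_lt i hi1 hbc (hex b c v2) (hex2 b c v2)

end Avoid

section Descent
variable {n : ℕ} {w : Equiv.Perm ℤ}

lemma no_big (hw : IsSignedPerm n w) (hav : ¬ GloballyContains321 n w)
    (h1 : 0 < w 1) (hle : ∀ j : ℤ, 1 ≤ j → j ≤ n → w j ≤ j) :
    ∀ j : ℤ, 1 ≤ j → j ≤ n → w j = j := by
  have aux : ∀ k : ℕ, ∀ j : ℤ, 1 ≤ j → j ≤ n → j ≤ k → w j = j := by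
    intro k
    induction k with
    | zero => intro j hj1 _ hjk; omega
    | succ k ih =>
      intro j hj1 hjn hjk
      by_cases hjk' : j ≤ k
      · exact ih j hj1 hjn hjk'
      · have hj : j = (k:ℤ) + 1 := by push_cast at hjk; omega
        by_cases heq : w j = j
        · exact heq
        · exfalso
          have hwj : w j < j := lt_of_le_of_ne (hle j hj1 hjn) heq
          have hnotpos : ¬ (0 < w j) := by
            intro hpos
            have hm : w (w j) = w j := ih (w j) (by omega) (by omega) (by omega)
            have := w.injective hm
            omega
          have hne0 : w j ≠ 0 := by
            intro h0
            have h0' : w j = w 0 := by rw [h0, signed_zero hw]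
            have := w.injective h0'
            omega
          have hj2 : 2 ≤ j := by
            rcases eq_or_lt_of_le hj1 with h | h
            · exfalso; rw [← h] at hwj; omega
            · omega
          have hneg : w j ≤ -j := by
            by_contra hc
            push_neg at hc
            set m := -(w j) with hm
            have hm1 : 1 ≤ m := by omega
            have hm2 : m ≤ j - 1 := by omega
            have hwm : w m = m := ih m hm1 (by omega) (by omega)
            have hwnm : w (-m) = -m := by rw [hw.1, hwm]
            have : w j = w (-m) := by rw [hwnm]; omega
            have := w.injective this
            omega
          apply hav
          refine ⟨-j, j-1, j, ?_, ?_, ?_, by omega, by omega, ?_, ?_⟩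
          · rw [unfrozen_iff]; omega
          · rw [unfrozen_iff]; omega
          · rw [unfrozen_iff]; omega
          · have : w (-j) = -(w j) := hw.1 j
            have hwj1 : w (j-1) = j - 1 := ih (j-1) (by omega) (by omega) (by omega)
            omega
          · have hwj1 : w (j-1) = j - 1 := ih (j-1) (by omega) (by omega) (by omega)
            omega
  intro j hj1 hjn
  exact aux n.succ j hj1 hjn (by push_cast; omega)

lemma descent (hw : IsSignedPerm n w) (hav : ¬ GloballyContains321 n w)
    (hex : ∃ j : ℤ, 1 ≤ j ∧ j ≤ n ∧ j < w j) :
    ∃ i : ℕ, 1 ≤ i ∧ i + 1 ≤ n ∧ (i:ℤ) + 1 ≤ w i ∧ w ((i:ℤ)+1) ≤ (i:ℤ) := by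
  classical
  obtain ⟨j0, hj01, hj0n, hj0w⟩ := hex
  set F := (Finset.Icc (1:ℤ) (n:ℤ)).filter (fun m => m < w m) with hF
  have hFne : F.Nonempty := ⟨j0, by simp [hF, Finset.mem_Icc]; exact ⟨⟨hj01, hj0n⟩, hj0w⟩⟩
  set I := F.max' hFne with hI
  have hIF : I ∈ F := F.max'_mem hFne
  rw [hF, Finset.mem_filter, Finset.mem_Icc] at hIF
  obtain ⟨⟨hI1, hIn⟩, hIw⟩ := hIF
  have hafter : ∀ m : ℤ, 1 ≤ m → m ≤ n → I < m → w m ≤ m := by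
    intro m hm1 hmn hIm
    by_contra hc
    push_neg at hc
    have : m ∈ F := by rw [hF, Finset.mem_filter, Finset.mem_Icc]; exact ⟨⟨hm1, hmn⟩, hc⟩
    have := F.le_max' m this
    rw [← hI] at this
    omega
  have hIltn : I < n := by
    rcases eq_or_lt_of_le hIn with h | h
    · exfalso
      have habs : |w I| ≤ (n:ℤ) := signed_bound hw (by rw [abs_of_pos] <;> omega)
      have := abs_le.mp habs
      omega
    · exact h
  by_cases hnext : w (I+1) ≤ I
  · refine ⟨I.toNat, ?_, ?_, ?_, ?_⟩
    · omega
    · omega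
    · have : ((I.toNat : ℤ)) = I := by omega
      rw [this]; omega
    · have : ((I.toNat : ℤ)) = I := by omega
      rw [this]; omega
  · exfalso
    push_neg at hnext
    have hwI1 : w (I+1) = I + 1 := le_antisymm (hafter (I+1) (by omega) (by omega) (by omega)) (by omega)
    set a := w I with ha
    have haI : I + 1 ≤ a := by omega
    have hane : a ≠ I + 1 := by
      intro h
      have h2 : w I = w (I+1) := by rw [hwI1, ← h, ha]
      have := w.injective h2
      omega
    have ha2 : I + 2 ≤ a := by omega
    have han : a ≤ n := by
      have : |w I| ≤ (n:ℤ) := signed_bound hw (by rw [abs_of_pos]; omega; omega)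
      have := abs_le.mp this
      omega
    set G := (Finset.Icc (I+1) a).filter (fun m => w m < m) with hG
    have haG : a ∈ G := by
      rw [hG, Finset.mem_filter, Finset.mem_Icc]
      refine ⟨⟨haI, le_refl _⟩, ?_⟩
      have h1 : w a ≤ a := hafter a (by omega) han (by omega)
      rcases eq_or_lt_of_le h1 with h | h
      · exfalso
        have : w a = w I := by rw [h, ha]
        have := w.injective this
        omega
      · exact h
    have hGne : G.Nonempty := ⟨a, haG⟩
    set j := G.min' hGne with hj
    have hjG : j ∈ G := G.min'_mem hGne
    rw [hG, Finset.mem_filter, Finset.mem_Icc] at hjG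
    obtain ⟨⟨hjI, hja⟩, hjw⟩ := hjG
    have hjne : j ≠ I + 1 := by
      intro h
      rw [h, hwI1] at hjw
      omega
    have hj2 : I + 2 ≤ j := by omega
    have hwj1 : w (j-1) = j - 1 := by
      have h1 : w (j-1) ≤ j - 1 := hafter (j-1) (by omega) (by omega) (by omega)
      rcases eq_or_lt_of_le h1 with h | h
      · exact h
      · exfalso
        have : j - 1 ∈ G := by rw [hG, Finset.mem_filter, Finset.mem_Icc]; exact ⟨⟨by omega, by omega⟩, h⟩
        have := G.min'_le (j-1) this
        rw [← hj] at this
        omega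
    have hwj2 : w j ≤ j - 2 := by
      have : w j ≠ j - 1 := by
        intro h
        have : w j = w (j-1) := by rw [h, hwj1]
        have := w.injective this
        omega
      omega
    apply hav
    refine ⟨I, j-1, j, ?_, ?_, ?_, by omega, by omega, ?_, ?_⟩
    · rw [unfrozen_iff]; omega
    · rw [unfrozen_iff]; omega
    · rw [unfrozen_iff]; omega
    · rw [hwj1]; omega
    · rw [hwj1]; omega

end Descent

section Word
variable {n : ℕ}

lemma word_step (hn : 1 ≤ n) (w : Equiv.Perm ℤ) (hw : IsSignedPerm n w)
    (hav : ¬ GloballyContains321 n w)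
    (hnotfix : ¬ ∀ p : ℤ, 1 ≤ p → p ≤ n → w p = p) :
    ∃ i : ℕ, i + 1 ≤ n ∧ IsSignedPerm n (w * sB i) ∧
      ¬ GloballyContains321 n (w * sB i) ∧ disB n (w * sB i) = disB n w - 2 := by
  have hw1ne : w 1 ≠ 0 := by
    intro h0
    have h0' : w 1 = w 0 := by rw [h0, signed_zero hw]
    have := w.injective h0'
    omega
  rcases lt_or_gt_of_ne hw1ne with hneg | hpos
  · exact ⟨0, hn, signed_mul hw 0 hn, avoid_mul_sB0 hn hw hav hneg,
      disB_mul_sB0 hn hw (by omega)⟩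
  · have hexbig : ∃ j : ℤ, 1 ≤ j ∧ j ≤ n ∧ j < w j := by
      by_contra hc
      push_neg at hc
      exact hnotfix (no_big hw hav hpos (fun j hj1 hjn => hc j hj1 hjn))
    obtain ⟨i, hi1, hi2, hia, hib⟩ := descent hw hav hexbig
    exact ⟨i, hi2, signed_mul hw i hi2,
      avoid_mul_sBi hi1 hi2 hw hav (by omega), disB_mul_sBi hi1 hi2 hia hib⟩

lemma exists_word (hn : 1 ≤ n) :
    ∀ N : ℕ, ∀ w : Equiv.Perm ℤ, IsSignedPerm n w → ¬ GloballyContains321 n w →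
      (disB n w).toNat ≤ N → ∃ l : List ℕ, IsWordB n w l ∧ 2 * (l.length : ℤ) = disB n w := by
  intro N
  induction N with
  | zero =>
    intro w hw hav hd
    have hfix : ∀ p : ℤ, 1 ≤ p → p ≤ n → w p = p := by
      intro p hp1 hpn
      by_contra hc
      have := disB_pos hp1 hpn hc
      have := disB_nonneg (n := n) (w := w)
      omega
    have hw1 : w = 1 := signed_eq_one hw hfix
    refine ⟨[], ⟨by simp, by simp [hw1]⟩, ?_⟩
    rw [hw1, disB_one]; simp
  | succ N ih =>
    intro w hw hav hd
    by_cases hfix : ∀ p : ℤ, 1 ≤ p → p ≤ n → w p = p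
    · have hw1 : w = 1 := signed_eq_one hw hfix
      refine ⟨[], ⟨by simp, by simp [hw1]⟩, ?_⟩
      rw [hw1, disB_one]; simp
    · obtain ⟨i, hi, hsig, hav', hdis⟩ := word_step hn w hw hav hfix
      have hnn := disB_nonneg (n := n) (w := w)
      have hnn' := disB_nonneg (n := n) (w := w * sB i)
      have hd' : (disB n (w * sB i)).toNat ≤ N := by omega
      obtain ⟨l, ⟨hl1, hl2⟩, hlen⟩ := ih (w * sB i) hsig hav' hd'
      refine ⟨l ++ [i], ⟨?_, ?_⟩, ?_⟩
      · intro x hx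
        rcases List.mem_append.mp hx with h | h
        · exact hl1 x h
        · rw [List.mem_singleton] at h; omega
      · rw [List.map_append, List.prod_append, hl2]
        simp only [List.map_cons, List.map_nil, List.prod_cons, List.prod_nil, mul_one]
        rw [mul_assoc, sB_mul_self, mul_one]
      · rw [List.length_append, List.length_singleton]
        push_cast
        linarith [hlen, hdis]

end Word

section Upper
variable {n : ℕ}

lemma sum_move_le (i : ℕ) (v : Equiv.Perm ℤ) (hv : ∀ x : ℤ, v (-x) = -(v x)) :
    ∑ p ∈ Finset.Icc (1:ℤ) (n:ℤ), |sB i (v p) - v p| ≤ 2 := by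
  classical
  have hv0 : v 0 = 0 := by have := hv 0; simp at this; omega
  by_cases hi : i = 0
  · subst hi
    set a := v.symm 1 with ha
    have key : ∀ p ∈ Finset.Icc (1:ℤ) (n:ℤ),
        |sB 0 (v p) - v p| ≤ if p = |a| then 2 else 0 := by
      intro p hp
      rw [Finset.mem_Icc] at hp
      by_cases h1 : v p = 1
      · have hpa : p = a := by rw [ha, ← h1, Equiv.symm_apply_apply]
        rw [if_pos (by rw [hpa, abs_of_pos]; omega)]
        exact sB0_move _
      · by_cases h2 : v p = -1
        · have : v (-p) = 1 := by rw [hv, h2]; ring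
          have hpa : -p = a := by rw [ha, ← this, Equiv.symm_apply_apply]
          rw [if_pos (by rw [← hpa, abs_of_neg]; omega; omega)]
          exact sB0_move _
        · rw [sB0_eq_self h2 h1, sub_self, abs_zero]
          split_ifs <;> omega
    calc ∑ p ∈ Finset.Icc (1:ℤ) (n:ℤ), |sB 0 (v p) - v p|
        ≤ ∑ p ∈ Finset.Icc (1:ℤ) (n:ℤ), (if p = |a| then 2 else 0) :=
          Finset.sum_le_sum key
      _ ≤ 2 := by rw [Finset.sum_ite_eq']; split_ifs <;> omega
  · have hi1 : 1 ≤ i := by omega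
    have hi1' : (1:ℤ) ≤ (i:ℤ) := by exact_mod_cast hi1
    set a := v.symm i with ha
    set b := v.symm ((i:ℤ)+1) with hb
    have key : ∀ p ∈ Finset.Icc (1:ℤ) (n:ℤ),
        |sB i (v p) - v p| ≤ (if p = |a| then 1 else 0) + (if p = |b| then 1 else 0) := by
      intro p hp
      rw [Finset.mem_Icc] at hp
      have hmove := sBi_move i hi1 (v p)
      by_cases h1 : v p = (i:ℤ)
      · have hpa : p = a := by rw [ha, ← h1, Equiv.symm_apply_apply]
        have hfa : p = |a| := by rw [hpa, abs_of_pos]; omega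
        split_ifs <;> omega
      · by_cases h2 : v p = -(i:ℤ)
        · have hva : v (-p) = (i:ℤ) := by rw [hv, h2]; ring
          have hpa : -p = a := by rw [ha, ← hva, Equiv.symm_apply_apply]
          have hfa : p = |a| := by rw [← hpa, abs_of_neg] <;> omega
          split_ifs <;> omega
        · by_cases h3 : v p = (i:ℤ)+1
          · have hpb : p = b := by rw [hb, ← h3, Equiv.symm_apply_apply]
            have hfb : p = |b| := by rw [hpb, abs_of_pos]; omega
            split_ifs <;> omega
          · by_cases h4 : v p = -(i:ℤ)-1
            · have hvb : v (-p) = (i:ℤ)+1 := by rw [hv, h4]; ring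
              have hpb : -p = b := by rw [hb, ← hvb, Equiv.symm_apply_apply]
              have hfb : p = |b| := by rw [← hpb, abs_of_neg] <;> omega
              split_ifs <;> omega
            · have hid : sB i (v p) = v p := by
                simp only [sB_apply, if_neg hi]
                split_ifs <;> first | exact False.elim (by omega) | rfl
              rw [hid, sub_self, abs_zero]
              split_ifs <;> omega
    calc ∑ p ∈ Finset.Icc (1:ℤ) (n:ℤ), |sB i (v p) - v p|
        ≤ ∑ p ∈ Finset.Icc (1:ℤ) (n:ℤ),
            ((if p = |a| then 1 else 0) + (if p = |b| then 1 else 0)) :=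
          Finset.sum_le_sum key
      _ = (∑ p ∈ Finset.Icc (1:ℤ) (n:ℤ), (if p = |a| then (1:ℤ) else 0))
          + ∑ p ∈ Finset.Icc (1:ℤ) (n:ℤ), (if p = |b| then (1:ℤ) else 0) :=
          Finset.sum_add_distrib
      _ ≤ 2 := by
          rw [Finset.sum_ite_eq', Finset.sum_ite_eq']
          split_ifs <;> omega

lemma step_upper (i : ℕ) (v : Equiv.Perm ℤ) (hv : ∀ x : ℤ, v (-x) = -(v x)) :
    disB n (sB i * v) ≤ disB n v + 2 := by
  have h1 : disB n (sB i * v) ≤ disB n v + ∑ p ∈ Finset.Icc (1:ℤ) (n:ℤ), |sB i (v p) - v p| := by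
    unfold disB
    rw [← Finset.sum_add_distrib]
    apply Finset.sum_le_sum
    intro p _
    rw [Equiv.Perm.mul_apply]
    have := abs_sub_le (sB i (v p)) (v p) p
    omega
  have h2 := sum_move_le (n := n) i v hv
  omega

lemma word_upper : ∀ l : List ℕ,
    (∀ x : ℤ, ((l.map sB).prod) (-x) = -(((l.map sB).prod) x)) ∧
      disB n ((l.map sB).prod) ≤ 2 * (l.length : ℤ) := by
  intro l
  induction l with
  | nil =>
    refine ⟨by simp, ?_⟩
    simp only [List.map_nil, List.prod_nil, List.length_nil]
    rw [disB_one]; simp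
  | cons i l ih =>
    have hprod : ((i :: l).map sB).prod = sB i * (l.map sB).prod := by
      simp [List.map_cons, List.prod_cons]
    constructor
    · intro x
      rw [hprod, Equiv.Perm.mul_apply, Equiv.Perm.mul_apply, ih.1, sB_odd]
    · rw [hprod]
      have := step_upper (n := n) i ((l.map sB).prod) ih.1
      have := ih.2
      rw [List.length_cons]
      push_cast
      omega

end Upper

theorem stmt_13 (n : ℕ) (hn : 1 ≤ n) (w : Equiv.Perm ℤ) (hw : IsSignedPerm n w)
    (havoid : ¬ GloballyContains321 n w) :
    disB n w = 2 * (lenB n w : ℤ) := by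
  obtain ⟨l, hword, hlen⟩ := exists_word hn (disB n w).toNat w hw havoid le_rfl
  have hne : {m | ∃ l : List ℕ, IsWordB n w l ∧ l.length = m}.Nonempty :=
    ⟨l.length, l, hword, rfl⟩
  have hmem : lenB n w ∈ {m | ∃ l : List ℕ, IsWordB n w l ∧ l.length = m} := by
    unfold lenB
    exact Nat.sInf_mem hne
  obtain ⟨l0, hword0, hlen0⟩ := hmem
  have h1 : lenB n w ≤ l.length := Nat.sInf_le ⟨l, hword, rfl⟩
  have h2 : disB n w ≤ 2 * (l0.length : ℤ) := by
    rw [← hword0.2]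
    exact (word_upper l0).2
  have h1' : (lenB n w : ℤ) ≤ (l.length : ℤ) := by exact_mod_cast h1
  have h0' : (l0.length : ℤ) = (lenB n w : ℤ) := by exact_mod_cast hlen0
  omega


end Stmt13
end
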